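/- arXiv:1407.2745 — 5 statements merged into one kernel-verified Lean document; each statement's English description precedes it below -/
import Mathlib

section
/- Let n ≥ 3. There is no function v from the set of normal matrices of M_n(ℂ) to ℂ such that: v(1) = 1; v(z·a) = z·v(a) for all z ∈ ℂ and normal a; v(aᴴ) = conj(v(a)) for all normal a; and for all commuting normal matrices a, b one has v(a + b) = v(a) + v(b) and v(a·b) = v(a)·v(b). -/
open Matrix

set_option maxHeartbeats 1000000
set_option linter.unusedSectionVars false
set_option linter.unusedVariables false

namespace KSproof






noncomputable def outer {m : ℕ} (x : Fin m → ℂ) : Matrix (Fin m) (Fin m) ℂ :=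
  (star x ⬝ᵥ x)⁻¹ • vecMulVec x (star x)

lemma dot_flip {m : ℕ} (x y : Fin m → ℂ) (h : star x ⬝ᵥ y = 0) : star y ⬝ᵥ x = 0 := by
  have : star (star x ⬝ᵥ y) = star y ⬝ᵥ x := by simp [dotProduct, star_sum, mul_comm]
  rw [← this, h, star_zero]

lemma dot_self_star {m : ℕ} (x : Fin m → ℂ) : star (star x ⬝ᵥ x) = star x ⬝ᵥ x := by
  simp [dotProduct, star_sum, mul_comm]

lemma dot_self_ne {m : ℕ} (x : Fin m → ℂ) (hx : x ≠ 0) : star x ⬝ᵥ x ≠ 0 := by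
  intro h
  apply hx
  funext i
  have h' : ∑ j, (Complex.normSq (x j) : ℝ) = 0 := by
    have := congrArg Complex.re h
    simpa [dotProduct, Complex.normSq, mul_comm] using this
  have hz := (Finset.sum_eq_zero_iff_of_nonneg
    (fun j _ => Complex.normSq_nonneg (x j))).mp ?_ i (Finset.mem_univ i)
  · exact Complex.normSq_eq_zero.mp hz
  · exact_mod_cast h'

lemma outer_herm {m : ℕ} (x : Fin m → ℂ) : (outer x)ᴴ = outer x := by
  unfold outer
  rw [conjTranspose_smul]
  congr 1
  · rw [star_inv₀, dot_self_star]
  · ext i j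
    simp [conjTranspose_apply, vecMulVec_apply, mul_comm]

lemma smul_outer_mul {m : ℕ} (x y : Fin m → ℂ) (a b : ℂ) :
    (a • vecMulVec x (star x)) * (b • vecMulVec y (star y)) =
      ((a * b) * (star x ⬝ᵥ y)) • vecMulVec x (star y) := by
  ext i j
  simp only [mul_apply, Matrix.smul_apply, vecMulVec_apply, smul_eq_mul, dotProduct,
    Finset.mul_sum, Finset.sum_mul]
  apply Finset.sum_congr rfl
  intro k _
  simp only [Pi.star_apply]
  ring

lemma outer_mul {m : ℕ} (x y : Fin m → ℂ) :
    outer x * outer y =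
      (((star x ⬝ᵥ x)⁻¹ * (star y ⬝ᵥ y)⁻¹) * (star x ⬝ᵥ y)) • vecMulVec x (star y) :=
  smul_outer_mul x y _ _

lemma outer_orth {m : ℕ} (x y : Fin m → ℂ) (h : star x ⬝ᵥ y = 0) : outer x * outer y = 0 := by
  rw [outer_mul, h, mul_zero, zero_smul]

lemma outer_idem {m : ℕ} (x : Fin m → ℂ) (hx : x ≠ 0) : outer x * outer x = outer x := by
  rw [outer_mul]
  unfold outer
  congr 1
  have := dot_self_ne x hx
  field_simp



lemma sum3 (x y z : Fin 3 → ℂ) (hx : x ≠ 0) (hy : y ≠ 0) (hz : z ≠ 0)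
    (hxy : star x ⬝ᵥ y = 0) (hxz : star x ⬝ᵥ z = 0) (hyz : star y ⬝ᵥ z = 0) :
    outer x + outer y + outer z = 1 := by
  set V : Matrix (Fin 3) (Fin 3) ℂ := Matrix.of (fun a t => ![x, y, z] t a) with hV
  set D' : Matrix (Fin 3) (Fin 3) ℂ :=
    diagonal ![(star x ⬝ᵥ x)⁻¹, (star y ⬝ᵥ y)⁻¹, (star z ⬝ᵥ z)⁻¹] with hD'
  have hyx := dot_flip x y hxy
  have hzx := dot_flip x z hxz
  have hzy := dot_flip y z hyz
  have cx : (star x ⬝ᵥ x)⁻¹ * (star x ⬝ᵥ x) = 1 := inv_mul_cancel₀ (dot_self_ne x hx)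
  have cy : (star y ⬝ᵥ y)⁻¹ * (star y ⬝ᵥ y) = 1 := inv_mul_cancel₀ (dot_self_ne y hy)
  have cz : (star z ⬝ᵥ z)⁻¹ * (star z ⬝ᵥ z) = 1 := inv_mul_cancel₀ (dot_self_ne z hz)
  have h1 : Vᴴ * V = diagonal ![star x ⬝ᵥ x, star y ⬝ᵥ y, star z ⬝ᵥ z] := by
    ext s t
    rw [mul_apply]
    fin_cases s <;> fin_cases t <;>
      simp_all [conjTranspose_apply, diagonal, dotProduct, hV, Fin.sum_univ_three]
  have h2 : (D' * Vᴴ) * V = 1 := by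
    rw [mul_assoc, h1, hD', diagonal_mul_diagonal]
    ext s t
    rw [diagonal_apply, one_apply]
    fin_cases s <;> fin_cases t <;>
      first
        | (rw [if_neg (by decide), if_neg (by decide)])
        | (rw [if_pos rfl, if_pos rfl]
           simp only [Matrix.cons_val_zero, Matrix.cons_val_one, Matrix.head_cons,
             Matrix.cons_val_two, Matrix.tail_cons]
           first | exact cx | exact cy | exact cz)
  have h3 : V * (D' * Vᴴ) = 1 := mul_eq_one_comm.mp h2
  rw [← h3]
  ext a b
  rw [mul_apply]
  simp only [hD', diagonal_mul, conjTranspose_apply, hV, of_apply, Fin.sum_univ_three,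
    Matrix.cons_val_zero, Matrix.cons_val_one, Matrix.head_cons, Matrix.cons_val_two,
    Matrix.tail_cons, outer, Matrix.add_apply, Matrix.smul_apply, vecMulVec_apply,
    smul_eq_mul, Pi.star_apply]
  ring



lemma outer_apply {m : ℕ} (x : Fin m → ℂ) (a b : Fin m) :
    outer x a b = (star x ⬝ᵥ x)⁻¹ * (x a * star (x b)) := by
  simp only [outer, Matrix.smul_apply, vecMulVec_apply, smul_eq_mul, Pi.star_apply]

def emb {n : ℕ} (k i j : Fin n) (w : Fin 3 → ℂ) : Fin n → ℂ :=
  fun a => if a = k then w 0 else if a = i then w 1 else if a = j then w 2 else 0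

def Dm {n : ℕ} (a : Fin n) : Matrix (Fin n) (Fin n) ℂ :=
  diagonal (fun b => if b = a then (1 : ℂ) else 0)

variable {n : ℕ} (k i j : Fin n) (hki : k ≠ i) (hkj : k ≠ j) (hij : i ≠ j)

section
include hki hkj hij

lemma emb_k (w : Fin 3 → ℂ) : emb k i j w k = w 0 := by simp [emb]

lemma emb_i (w : Fin 3 → ℂ) : emb k i j w i = w 1 := by simp [emb, Ne.symm hki]

lemma emb_j (w : Fin 3 → ℂ) : emb k i j w j = w 2 := by
  simp [emb, Ne.symm hkj, Ne.symm hij]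

lemma emb_0 (w : Fin 3 → ℂ) (a : Fin n) (h1 : a ≠ k) (h2 : a ≠ i) (h3 : a ≠ j) :
    emb k i j w a = 0 := by simp [emb, h1, h2, h3]

lemma emb_dot (w w' : Fin 3 → ℂ) :
    star (emb k i j w) ⬝ᵥ emb k i j w' = star w ⬝ᵥ w' := by
  have hkm : k ∉ ({i, j} : Finset (Fin n)) := by simp [hki, hkj]
  have him : i ∉ ({j} : Finset (Fin n)) := by simp [hij]
  rw [dotProduct,
    ← Finset.sum_subset (Finset.subset_univ ({k, i, j} : Finset (Fin n)))
      (fun a _ ha => by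
        have h1 : a ≠ k := fun h => ha (by simp [h])
        have h2 : a ≠ i := fun h => ha (by simp [h])
        have h3 : a ≠ j := fun h => ha (by simp [h])
        simp [emb_0 k i j hki hkj hij _ a h1 h2 h3]),
    Finset.sum_insert hkm, Finset.sum_insert him, Finset.sum_singleton]
  simp only [Pi.star_apply, emb_k k i j hki hkj hij, emb_i k i j hki hkj hij,
    emb_j k i j hki hkj hij, dotProduct, Fin.sum_univ_three]
  ring

lemma emb_ne (w : Fin 3 → ℂ) (hw : w ≠ 0) : emb k i j w ≠ 0 := by
  intro h
  apply hw
  funext s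
  fin_cases s
  · have := congrFun h k; rwa [emb_k k i j hki hkj hij, Pi.zero_apply] at this
  · have := congrFun h i; rwa [emb_i k i j hki hkj hij, Pi.zero_apply] at this
  · have := congrFun h j; rwa [emb_j k i j hki hkj hij, Pi.zero_apply] at this

lemma emb3 (x y z : Fin 3 → ℂ)
    (hone : outer x + outer y + outer z = 1) :
    outer (emb k i j x) + outer (emb k i j y) + outer (emb k i j z) =
      Dm k + Dm i + Dm j := by
  have he : ∀ s t : Fin 3,
      (star x ⬝ᵥ x)⁻¹ * (x s * star (x t)) + (star y ⬝ᵥ y)⁻¹ * (y s * star (y t)) +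
        (star z ⬝ᵥ z)⁻¹ * (z s * star (z t)) = if s = t then (1 : ℂ) else 0 := by
    intro s t
    have h : (outer x + outer y + outer z) s t = (1 : Matrix (Fin 3) (Fin 3) ℂ) s t := by
      rw [hone]
    simp only [Matrix.add_apply, outer_apply, one_apply] at h
    exact h
  have oemb : ∀ (w : Fin 3 → ℂ) (a b : Fin n), outer (emb k i j w) a b =
      (star w ⬝ᵥ w)⁻¹ * (emb k i j w a * star (emb k i j w b)) := by
    intro w a b
    rw [outer_apply, emb_dot k i j hki hkj hij]
  have ek := emb_k k i j hki hkj hij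
  have ei := emb_i k i j hki hkj hij
  have ej := emb_j k i j hki hkj hij
  have e0 := emb_0 k i j hki hkj hij
  ext a b
  simp only [Matrix.add_apply, oemb, Dm, diagonal_apply]
  by_cases hak : a = k
  · rw [hak]
    by_cases hbk : b = k
    · rw [hbk, ek x, ek y, ek z, he 0 0]
      simp [hki, hkj, hij, Ne.symm hki, Ne.symm hkj, Ne.symm hij]
    by_cases hbi : b = i
    · rw [hbi, ek x, ek y, ek z, ei x, ei y, ei z, he 0 1]
      simp [hki, hkj, hij, Ne.symm hki, Ne.symm hkj, Ne.symm hij]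
    by_cases hbj : b = j
    · rw [hbj, ek x, ek y, ek z, ej x, ej y, ej z, he 0 2]
      simp [hki, hkj, hij, Ne.symm hki, Ne.symm hkj, Ne.symm hij]
    rw [e0 x b hbk hbi hbj, e0 y b hbk hbi hbj, e0 z b hbk hbi hbj]
    simp [hki, hkj, hij, Ne.symm hki, Ne.symm hkj, Ne.symm hij, hbk, hbi, hbj, Ne.symm hbk, Ne.symm hbi, Ne.symm hbj]
  by_cases hai : a = i
  · rw [hai]
    by_cases hbk : b = k
    · rw [hbk, ei x, ei y, ei z, ek x, ek y, ek z, he 1 0]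
      simp [hki, hkj, hij, Ne.symm hki, Ne.symm hkj, Ne.symm hij]
    by_cases hbi : b = i
    · rw [hbi, ei x, ei y, ei z, he 1 1]
      simp [hki, hkj, hij, Ne.symm hki, Ne.symm hkj, Ne.symm hij]
    by_cases hbj : b = j
    · rw [hbj, ei x, ei y, ei z, ej x, ej y, ej z, he 1 2]
      simp [hki, hkj, hij, Ne.symm hki, Ne.symm hkj, Ne.symm hij]
    rw [e0 x b hbk hbi hbj, e0 y b hbk hbi hbj, e0 z b hbk hbi hbj]
    simp [hki, hkj, hij, Ne.symm hki, Ne.symm hkj, Ne.symm hij, hbk, hbi, hbj, Ne.symm hbk, Ne.symm hbi, Ne.symm hbj]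
  by_cases haj : a = j
  · rw [haj]
    by_cases hbk : b = k
    · rw [hbk, ej x, ej y, ej z, ek x, ek y, ek z, he 2 0]
      simp [hki, hkj, hij, Ne.symm hki, Ne.symm hkj, Ne.symm hij]
    by_cases hbi : b = i
    · rw [hbi, ej x, ej y, ej z, ei x, ei y, ei z, he 2 1]
      simp [hki, hkj, hij, Ne.symm hki, Ne.symm hkj, Ne.symm hij]
    by_cases hbj : b = j
    · rw [hbj, ej x, ej y, ej z, he 2 2]
      simp [hki, hkj, hij, Ne.symm hki, Ne.symm hkj, Ne.symm hij]
    rw [e0 x b hbk hbi hbj, e0 y b hbk hbi hbj, e0 z b hbk hbi hbj]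
    simp [hki, hkj, hij, Ne.symm hki, Ne.symm hkj, Ne.symm hij, hbk, hbi, hbj, Ne.symm hbk, Ne.symm hbi, Ne.symm hbj]
  rw [e0 x a hak hai haj, e0 y a hak hai haj, e0 z a hak hai haj]
  simp [hak, hai, haj]

end


lemma Dm_herm {n : ℕ} (a : Fin n) : (Dm a)ᴴ = Dm a := by
  ext b c
  by_cases h : b = c
  · subst h
    simp only [Dm, conjTranspose_apply, diagonal_apply_eq]
    split_ifs <;> simp
  · simp [Dm, conjTranspose_apply, diagonal_apply_ne _ h, diagonal_apply_ne _ (Ne.symm h)]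

lemma Dm_mul_Dm {n : ℕ} (a b : Fin n) : Dm a * Dm b = Dm b * Dm a := by
  rw [Dm, Dm, diagonal_mul_diagonal, diagonal_mul_diagonal]
  ext c d
  by_cases h : c = d
  · subst h; simp only [diagonal_apply_eq]; split_ifs <;> ring
  · simp [diagonal_apply_ne _ h]

lemma Dm_idem {n : ℕ} (a : Fin n) : Dm a * Dm a = Dm a := by
  rw [Dm, diagonal_mul_diagonal]
  ext c d
  by_cases h : c = d
  · subst h; simp only [diagonal_apply_eq]; split_ifs <;> norm_num
  · simp [diagonal_apply_ne _ h]

lemma Dsum {n : ℕ} (S : Finset (Fin n)) :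
    (∑ a ∈ S, Dm a) = diagonal (fun b => if b ∈ S then (1 : ℂ) else 0) := by
  ext b c
  rw [Matrix.sum_apply]
  by_cases hbc : b = c
  · subst hbc
    simp only [Dm, diagonal_apply_eq]
    rw [Finset.sum_ite_eq S b (fun _ => (1:ℂ))]
  · simp [Dm, diagonal_apply_ne _ hbc]

lemma Dsum_herm {n : ℕ} (S : Finset (Fin n)) : (∑ a ∈ S, Dm a)ᴴ = ∑ a ∈ S, Dm a := by
  rw [Dsum]
  ext b c
  by_cases h : b = c
  · subst h
    simp only [conjTranspose_apply, diagonal_apply_eq]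
    split_ifs <;> simp
  · simp [conjTranspose_apply, diagonal_apply_ne _ h, diagonal_apply_ne _ (Ne.symm h)]

lemma Dsum_idem {n : ℕ} (S : Finset (Fin n)) :
    (∑ a ∈ S, Dm a) * (∑ a ∈ S, Dm a) = ∑ a ∈ S, Dm a := by
  rw [Dsum, diagonal_mul_diagonal]
  ext c d
  by_cases h : c = d
  · subst h; simp only [diagonal_apply_eq]; split_ifs <;> norm_num
  · simp [diagonal_apply_ne _ h]

lemma Dsum_univ {n : ℕ} : (∑ a : Fin n, Dm a) = 1 := by
  rw [Dsum]
  simp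

lemma add_idem {n : ℕ} (A B : Matrix (Fin n) (Fin n) ℂ) (hA : A * A = A) (hB : B * B = B)
    (hAB : A * B = 0) (hBA : B * A = 0) : (A + B) * (A + B) = A + B := by
  rw [add_mul, mul_add, mul_add, hA, hB, hAB, hBA]
  simp



lemma pair_nat {a b : ℂ} (h : ¬(a = 1 ∧ b = 1)) :
    (if a = 1 then (1:ℕ) else 0) + (if b = 1 then 1 else 0) ≤ 1 := by
  split_ifs <;> simp_all

lemma trip_nat {a b c : ℂ} (ha : a = 0 ∨ a = 1) (hb : b = 0 ∨ b = 1) (hc : c = 0 ∨ c = 1)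
    (h : a + b + c = 1) :
    (if a = 1 then (1:ℕ) else 0) + (if b = 1 then 1 else 0) + (if c = 1 then 1 else 0) = 1 := by
  rcases ha with rfl | rfl <;> rcases hb with rfl | rfl <;> rcases hc with rfl | rfl <;>
    revert h <;> norm_num

lemma vne (x : Fin 3 → ℂ) (s : Fin 3) (h : x s ≠ 0) : x ≠ 0 :=
  fun hh => h (by rw [hh]; rfl)

private lemma leaf0 (m0 m1 m2 m5 m6 m7 m9 m10 m11 m12 m13 m14 m15 m16 m17 m18 m19 m22 m23 m24 m25 m27 m29 m31 m34 : ℕ)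
    (b0 : m0 ≤ 1) (b1 : m1 ≤ 1) (b2 : m2 ≤ 1) (b5 : m5 ≤ 1) (b6 : m6 ≤ 1) (b7 : m7 ≤ 1) (b9 : m9 ≤ 1) (b10 : m10 ≤ 1) (b11 : m11 ≤ 1) (b12 : m12 ≤ 1) (b13 : m13 ≤ 1) (b14 : m14 ≤ 1) (b15 : m15 ≤ 1) (b16 : m16 ≤ 1) (b17 : m17 ≤ 1) (b18 : m18 ≤ 1) (b19 : m19 ≤ 1) (b22 : m22 ≤ 1) (b23 : m23 ≤ 1) (b24 : m24 ≤ 1) (b25 : m25 ≤ 1) (b27 : m27 ≤ 1) (b29 : m29 ≤ 1) (b31 : m31 ≤ 1) (b34 : m34 ≤ 1) (h7 : m7 = 1) (h9 : m9 = 1) (p0 : m6 + m24 ≤ 1) (p3 : m10 + m22 ≤ 1) (p5 : m11 + m18 ≤ 1) (p6 : m12 + m17 ≤ 1) (t0 : m0 + m9 + m25 = 1) (t1 : m0 + m12 + m31 = 1) (t3 : m1 + m13 + m24 = 1) (t4 : m1 + m14 + m34 = 1) (t5 : m1 + m15 + m23 = 1) (t7 : m2 + m10 + m27 = 1) (t8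 : m2 + m14 + m19 = 1) (t11 : m5 + m9 + m29 = 1) (t12 : m5 + m15 + m18 = 1) (t13 : m6 + m22 + m29 = 1) (t14 : m7 + m27 + m31 = 1) (t16 : m7 + m29 + m34 = 1) (t19 : m9 + m13 + m16 = 1) (t20 : m11 + m17 + m34 = 1) : False := by omega

private lemma leaf1 (m0 m1 m2 m5 m7 m8 m9 m10 m11 m12 m13 m14 m15 m16 m17 m18 m20 m21 m23 m24 m26 m27 m29 m31 m34 : ℕ)
    (b0 : m0 ≤ 1) (b1 : m1 ≤ 1) (b2 : m2 ≤ 1) (b5 : m5 ≤ 1) (b7 : m7 ≤ 1) (b8 : m8 ≤ 1) (b9 : m9 ≤ 1) (b10 : m10 ≤ 1) (b11 : m11 ≤ 1) (b12 : m12 ≤ 1) (b13 : m13 ≤ 1) (b14 : m14 ≤ 1) (b15 : m15 ≤ 1) (b16 : m16 ≤ 1) (b17 : m17 ≤ 1) (b18 : m18 ≤ 1) (b20 : m20 ≤ 1) (b21 : m21 ≤ 1) (b23 : m23 ≤ 1) (b24 : m24 ≤ 1) (b26 : m26 ≤ 1) (b27 : m27 ≤ 1) (b29 : m29 ≤ 1)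 (b31 : m31 ≤ 1) (b34 : m34 ≤ 1) (h7 : m7 = 1) (h9 : m9 = 0) (p1 : m8 + m23 ≤ 1) (p2 : m10 + m17 ≤ 1) (p4 : m11 + m16 ≤ 1) (p7 : m12 + m21 ≤ 1) (t1 : m0 + m12 + m31 = 1) (t2 : m0 + m14 + m20 = 1) (t3 : m1 + m13 + m24 = 1) (t4 : m1 + m14 + m34 = 1) (t5 : m1 + m15 + m23 = 1) (t6 : m2 + m5 + m26 = 1) (t7 : m2 + m10 + m27 = 1) (t11 : m5 + m9 + m29 = 1) (t12 : m5 + m15 + m18 = 1) (t14 : m7 + m27 + m31 = 1) (t16 : m7 + m29 + m34 = 1) (t18 : m8 + m21 + m29 = 1) (t19 : m9 + m13 + m16 = 1) (t20 : m11 + m17 + m34 = 1) : False := by omega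

private lemma leaf2 (m1 m2 m3 m4 m5 m7 m9 m13 m14 m15 m19 m23 m24 m26 m27 m28 m29 m31 m33 m34 : ℕ)
    (b1 : m1 ≤ 1) (b2 : m2 ≤ 1) (b3 : m3 ≤ 1) (b4 : m4 ≤ 1) (b5 : m5 ≤ 1) (b7 : m7 ≤ 1) (b9 : m9 ≤ 1) (b13 : m13 ≤ 1) (b14 : m14 ≤ 1) (b15 : m15 ≤ 1) (b19 : m19 ≤ 1) (b23 : m23 ≤ 1) (b24 : m24 ≤ 1) (b26 : m26 ≤ 1) (b27 : m27 ≤ 1) (b28 : m28 ≤ 1) (b29 : m29 ≤ 1) (b31 : m31 ≤ 1) (b33 : m33 ≤ 1) (b34 : m34 ≤ 1) (h7 : m7 = 0) (h29 : m29 = 1) (h13 : m13 = 1) (p12 : m23 + m28 ≤ 1) (p15 : m26 + m33 ≤ 1) (t3 : m1 + m13 + m24 = 1) (t4 : m1 + m14 + m34 = 1) (t5 : m1 + m15 + m23 = 1) (t6 : m2 + m5 + m26 = 1) (t8 : m2 + m14 + m19 = 1) (t9 : m3 + m15 + m31 = 1) (t10 : m4 + m13 + m27 = 1) (t11 : m5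 + m9 + m29 = 1) (t14 : m7 + m27 + m31 = 1) (t15 : m7 + m28 + m33 = 1) (t16 : m7 + m29 + m34 = 1) : False := by omega

private lemma leaf3 (m0 m1 m5 m7 m9 m13 m14 m20 m24 m25 m29 m30 m32 m34 : ℕ)
    (b0 : m0 ≤ 1) (b1 : m1 ≤ 1) (b5 : m5 ≤ 1) (b7 : m7 ≤ 1) (b9 : m9 ≤ 1) (b13 : m13 ≤ 1) (b14 : m14 ≤ 1) (b20 : m20 ≤ 1) (b24 : m24 ≤ 1) (b25 : m25 ≤ 1) (b29 : m29 ≤ 1) (b30 : m30 ≤ 1) (b32 : m32 ≤ 1) (b34 : m34 ≤ 1) (h7 : m7 = 0) (h29 : m29 = 1) (h13 : m13 = 0) (h14 : m14 = 1) (p13 : m24 + m30 ≤ 1) (p14 : m25 + m32 ≤ 1) (t0 : m0 + m9 + m25 = 1) (t2 : m0 + m14 + m20 = 1) (t3 : m1 + m13 + m24 = 1) (t4 : m1 + m14 + m34 = 1) (t11 : m5 + m9 + m29 = 1) (t17 : m7 + m30 + m32 = 1) : False := by omega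

private lemma leaf4 (m0 m1 m2 m5 m7 m9 m10 m12 m13 m14 m15 m16 m18 m19 m20 m23 m27 m28 m29 m30 m31 m32 m33 m34 : ℕ)
    (b0 : m0 ≤ 1) (b1 : m1 ≤ 1) (b2 : m2 ≤ 1) (b5 : m5 ≤ 1) (b7 : m7 ≤ 1) (b9 : m9 ≤ 1) (b10 : m10 ≤ 1) (b12 : m12 ≤ 1) (b13 : m13 ≤ 1) (b14 : m14 ≤ 1) (b15 : m15 ≤ 1) (b16 : m16 ≤ 1) (b18 : m18 ≤ 1) (b19 : m19 ≤ 1) (b20 : m20 ≤ 1) (b23 : m23 ≤ 1) (b27 : m27 ≤ 1) (b28 : m28 ≤ 1) (b29 : m29 ≤ 1) (b30 : m30 ≤ 1) (b31 : m31 ≤ 1) (b32 : m32 ≤ 1) (b33 : m33 ≤ 1) (b34 : m34 ≤ 1) (h7 : m7 = 0) (h29 : m29 = 1) (h13 : m13 = 0) (h14 : m14 = 0) (p8 : m16 + m33 ≤ 1) (p9 : m18 + m32 ≤ 1) (p10 : m19 + m30 ≤ 1) (p11 : m20 + m28 ≤ 1) (t1 : m0 + m12 + m31 = 1) (t2 :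 m0 + m14 + m20 = 1) (t4 : m1 + m14 + m34 = 1) (t5 : m1 + m15 + m23 = 1) (t7 : m2 + m10 + m27 = 1) (t8 : m2 + m14 + m19 = 1) (t11 : m5 + m9 + m29 = 1) (t12 : m5 + m15 + m18 = 1) (t14 : m7 + m27 + m31 = 1) (t15 : m7 + m28 + m33 = 1) (t16 : m7 + m29 + m34 = 1) (t17 : m7 + m30 + m32 = 1) (t19 : m9 + m13 + m16 = 1) : False := by omega

private lemma leaf5 (m0 m1 m2 m3 m5 m7 m9 m10 m13 m14 m15 m16 m18 m20 m24 m25 m26 m27 m28 m29 m30 m31 m32 m33 m34 : ℕ)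
    (b0 : m0 ≤ 1) (b1 : m1 ≤ 1) (b2 : m2 ≤ 1) (b3 : m3 ≤ 1) (b5 : m5 ≤ 1) (b7 : m7 ≤ 1) (b9 : m9 ≤ 1) (b10 : m10 ≤ 1) (b13 : m13 ≤ 1) (b14 : m14 ≤ 1) (b15 : m15 ≤ 1) (b16 : m16 ≤ 1) (b18 : m18 ≤ 1) (b20 : m20 ≤ 1) (b24 : m24 ≤ 1) (b25 : m25 ≤ 1) (b26 : m26 ≤ 1) (b27 : m27 ≤ 1) (b28 : m28 ≤ 1) (b29 : m29 ≤ 1) (b30 : m30 ≤ 1) (b31 : m31 ≤ 1) (b32 : m32 ≤ 1) (b33 : m33 ≤ 1) (b34 : m34 ≤ 1) (h7 : m7 = 0) (h29 : m29 = 0) (h9 : m9 = 1) (p9 : m18 + m32 ≤ 1) (p11 : m20 + m28 ≤ 1) (p13 : m24 + m30 ≤ 1) (p15 : m26 + m33 ≤ 1) (t0 : m0 + m9 + m25 = 1) (t2 : m0 + m14 + m20 = 1) (t3 : m1 + m13 + m24 = 1) (t4 : m1 + m14 + m34 = 1) (t6 : m2 + m5 + m26 = 1) (t7 : m2 + m10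 + m27 = 1) (t9 : m3 + m15 + m31 = 1) (t11 : m5 + m9 + m29 = 1) (t12 : m5 + m15 + m18 = 1) (t14 : m7 + m27 + m31 = 1) (t15 : m7 + m28 + m33 = 1) (t16 : m7 + m29 + m34 = 1) (t17 : m7 + m30 + m32 = 1) (t19 : m9 + m13 + m16 = 1) : False := by omega

private lemma leaf6 (m0 m1 m2 m4 m5 m7 m9 m12 m13 m14 m15 m16 m18 m19 m23 m25 m26 m27 m28 m29 m30 m31 m32 m33 m34 : ℕ)
    (b0 : m0 ≤ 1) (b1 : m1 ≤ 1) (b2 : m2 ≤ 1) (b4 : m4 ≤ 1) (b5 : m5 ≤ 1) (b7 : m7 ≤ 1) (b9 : m9 ≤ 1) (b12 : m12 ≤ 1) (b13 : m13 ≤ 1) (b14 : m14 ≤ 1) (b15 : m15 ≤ 1) (b16 : m16 ≤ 1) (b18 : m18 ≤ 1) (b19 : m19 ≤ 1) (b23 : m23 ≤ 1) (b25 : m25 ≤ 1) (b26 : m26 ≤ 1) (b27 : m27 ≤ 1) (b28 : m28 ≤ 1) (b29 : m29 ≤ 1) (b30 : m30 ≤ 1) (b31 : m31 ≤ 1) (b32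 : m32 ≤ 1) (b33 : m33 ≤ 1) (b34 : m34 ≤ 1) (h7 : m7 = 0) (h29 : m29 = 0) (h9 : m9 = 0) (p8 : m16 + m33 ≤ 1) (p10 : m19 + m30 ≤ 1) (p12 : m23 + m28 ≤ 1) (p14 : m25 + m32 ≤ 1) (t0 : m0 + m9 + m25 = 1) (t1 : m0 + m12 + m31 = 1) (t4 : m1 + m14 + m34 = 1) (t5 : m1 + m15 + m23 = 1) (t6 : m2 + m5 + m26 = 1) (t8 : m2 + m14 + m19 = 1) (t10 : m4 + m13 + m27 = 1) (t11 : m5 + m9 + m29 = 1) (t12 : m5 + m15 + m18 = 1) (t14 : m7 + m27 + m31 = 1) (t15 : m7 + m28 + m33 = 1) (t16 : m7 + m29 + m34 = 1) (t17 : m7 + m30 + m32 = 1) (t19 : m9 + m13 + m16 = 1) : False := by omega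

private lemma arith (m0 m1 m2 m3 m4 m5 m6 m7 m8 m9 m10 m11 m12 m13 m14 m15 m16 m17 m18 m19 m20 m21 m22 m23 m24 m25 m26 m27 m28 m29 m30 m31 m32 m33 m34 : ℕ)
    (b0 : m0 ≤ 1) (b1 : m1 ≤ 1) (b2 : m2 ≤ 1) (b3 : m3 ≤ 1) (b4 : m4 ≤ 1) (b5 : m5 ≤ 1) (b6 : m6 ≤ 1) (b7 : m7 ≤ 1) (b8 : m8 ≤ 1) (b9 : m9 ≤ 1) (b10 : m10 ≤ 1) (b11 : m11 ≤ 1) (b12 : m12 ≤ 1) (b13 : m13 ≤ 1) (b14 : m14 ≤ 1) (b15 : m15 ≤ 1) (b16 : m16 ≤ 1) (b17 : m17 ≤ 1) (b18 : m18 ≤ 1) (b19 : m19 ≤ 1) (b20 : m20 ≤ 1) (b21 : m21 ≤ 1) (b22 : m22 ≤ 1) (b23 : m23 ≤ 1) (b24 : m24 ≤ 1) (b25 : m25 ≤ 1) (b26 : m26 ≤ 1) (b27 : m27 ≤ 1) (b28 : m28 ≤ 1) (b29 : m29 ≤ 1) (b30 : m30 ≤ 1) (b31 : m31 ≤ 1)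 (b32 : m32 ≤ 1) (b33 : m33 ≤ 1) (b34 : m34 ≤ 1) (p0 : m6 + m24 ≤ 1) (p1 : m8 + m23 ≤ 1) (p2 : m10 + m17 ≤ 1) (p3 : m10 + m22 ≤ 1) (p4 : m11 + m16 ≤ 1) (p5 : m11 + m18 ≤ 1) (p6 : m12 + m17 ≤ 1) (p7 : m12 + m21 ≤ 1) (p8 : m16 + m33 ≤ 1) (p9 : m18 + m32 ≤ 1) (p10 : m19 + m30 ≤ 1) (p11 : m20 + m28 ≤ 1) (p12 : m23 + m28 ≤ 1) (p13 : m24 + m30 ≤ 1) (p14 : m25 + m32 ≤ 1) (p15 : m26 + m33 ≤ 1) (t0 : m0 + m9 + m25 = 1) (t1 : m0 + m12 + m31 = 1) (t2 : m0 + m14 + m20 = 1) (t3 : m1 + m13 + m24 = 1) (t4 : m1 + m14 + m34 = 1) (t5 : m1 + m15 + m23 = 1) (t6 : m2 + m5 + m26 = 1) (t7 : m2 + m10 + m27 = 1) (t8 : m2 + m14 + m19 = 1) (t9 : m3 + m15 + m31 = 1) (t10 : m4 + m13 + m27 = 1) (t11 : m5 + m9 + m29 = 1) (t12 : m5 + m15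 + m18 = 1) (t13 : m6 + m22 + m29 = 1) (t14 : m7 + m27 + m31 = 1) (t15 : m7 + m28 + m33 = 1) (t16 : m7 + m29 + m34 = 1) (t17 : m7 + m30 + m32 = 1) (t18 : m8 + m21 + m29 = 1) (t19 : m9 + m13 + m16 = 1) (t20 : m11 + m17 + m34 = 1) : False := by
  rcases Nat.le_one_iff_eq_zero_or_eq_one.mp b7 with h7 | h7
  · rcases Nat.le_one_iff_eq_zero_or_eq_one.mp b29 with h29 | h29
    · rcases Nat.le_one_iff_eq_zero_or_eq_one.mp b9 with h9 | h9
      · exact leaf6 m0 m1 m2 m4 m5 m7 m9 m12 m13 m14 m15 m16 m18 m19 m23 m25 m26 m27 m28 m29 m30 m31 m32 m33 m34 b0 b1 b2 b4 b5 b7 b9 b12 b13 b14 b15 b16 b18 b19 b23 b25 b26 b27 b28 b29 b30 b31 b32 b33 b34 h7 h29 h9 p8 p10 p12 p14 t0 t1 t4 t5 t6 t8 t10 t11 t12 t14 t15 t16 t17 t19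
      · exact leaf5 m0 m1 m2 m3 m5 m7 m9 m10 m13 m14 m15 m16 m18 m20 m24 m25 m26 m27 m28 m29 m30 m31 m32 m33 m34 b0 b1 b2 b3 b5 b7 b9 b10 b13 b14 b15 b16 b18 b20 b24 b25 b26 b27 b28 b29 b30 b31 b32 b33 b34 h7 h29 h9 p9 p11 p13 p15 t0 t2 t3 t4 t6 t7 t9 t11 t12 t14 t15 t16 t17 t19
    · rcases Nat.le_one_iff_eq_zero_or_eq_one.mp b13 with h13 | h13
      · rcases Nat.le_one_iff_eq_zero_or_eq_one.mp b14 with h14 | h14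
        · exact leaf4 m0 m1 m2 m5 m7 m9 m10 m12 m13 m14 m15 m16 m18 m19 m20 m23 m27 m28 m29 m30 m31 m32 m33 m34 b0 b1 b2 b5 b7 b9 b10 b12 b13 b14 b15 b16 b18 b19 b20 b23 b27 b28 b29 b30 b31 b32 b33 b34 h7 h29 h13 h14 p8 p9 p10 p11 t1 t2 t4 t5 t7 t8 t11 t12 t14 t15 t16 t17 t19
        · exact leaf3 m0 m1 m5 m7 m9 m13 m14 m20 m24 m25 m29 m30 m32 m34 b0 b1 b5 b7 b9 b13 b14 b20 b24 b25 b29 b30 b32 b34 h7 h29 h13 h14 p13 p14 t0 t2 t3 t4 t11 t17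
      · exact leaf2 m1 m2 m3 m4 m5 m7 m9 m13 m14 m15 m19 m23 m24 m26 m27 m28 m29 m31 m33 m34 b1 b2 b3 b4 b5 b7 b9 b13 b14 b15 b19 b23 b24 b26 b27 b28 b29 b31 b33 b34 h7 h29 h13 p12 p15 t3 t4 t5 t6 t8 t9 t10 t11 t14 t15 t16
  · rcases Nat.le_one_iff_eq_zero_or_eq_one.mp b9 with h9 | h9
    · exact leaf1 m0 m1 m2 m5 m7 m8 m9 m10 m11 m12 m13 m14 m15 m16 m17 m18 m20 m21 m23 m24 m26 m27 m29 m31 m34 b0 b1 b2 b5 b7 b8 b9 b10 b11 b12 b13 b14 b15 b16 b17 b18 b20 b21 b23 b24 b26 b27 b29 b31 b34 h7 h9 p1 p2 p4 p7 t1 t2 t3 t4 t5 t6 t7 t11 t12 t14 t16 t18 t19 t20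
    · exact leaf0 m0 m1 m2 m5 m6 m7 m9 m10 m11 m12 m13 m14 m15 m16 m17 m18 m19 m22 m23 m24 m25 m27 m29 m31 m34 b0 b1 b2 b5 b6 b7 b9 b10 b11 b12 b13 b14 b15 b16 b17 b18 b19 b22 b23 b24 b25 b27 b29 b31 b34 h7 h9 p0 p3 p5 p6 t0 t1 t3 t4 t5 t7 t8 t11 t12 t13 t14 t16 t19 t20

lemma KS_core (g : (Fin 3 → ℂ) → ℂ)
    (hmem : ∀ w : Fin 3 → ℂ, w ≠ 0 → g w = 0 ∨ g w = 1)
    (hpair : ∀ x y : Fin 3 → ℂ, x ≠ 0 → y ≠ 0 → star x ⬝ᵥ y = 0 → ¬(g x = 1 ∧ g y = 1))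
    (htrip : ∀ x y z : Fin 3 → ℂ, x ≠ 0 → y ≠ 0 → z ≠ 0 →
      star x ⬝ᵥ y = 0 → star x ⬝ᵥ z = 0 → star y ⬝ᵥ z = 0 →
      g x + g y + g z = 1) :
    False := by
  have P : ∀ x y : Fin 3 → ℂ, x ≠ 0 → y ≠ 0 → star x ⬝ᵥ y = 0 →
      (if g x = 1 then (1:ℕ) else 0) + (if g y = 1 then 1 else 0) ≤ 1 :=
    fun x y hx hy ho => pair_nat (hpair x y hx hy ho)
  have T : ∀ x y z : Fin 3 → ℂ, x ≠ 0 → y ≠ 0 → z ≠ 0 →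
      star x ⬝ᵥ y = 0 → star x ⬝ᵥ z = 0 → star y ⬝ᵥ z = 0 →
      (if g x = 1 then (1:ℕ) else 0) + (if g y = 1 then 1 else 0) +
        (if g z = 1 then 1 else 0) = 1 :=
    fun x y z hx hy hz h1 h2 h3 =>
      trip_nat (hmem x hx) (hmem y hy) (hmem z hz) (htrip x y z hx hy hz h1 h2 h3)
  have nz0 : (![(1:ℂ),1,1] : Fin 3 → ℂ) ≠ 0 := vne _ 0 (by norm_num)
  have nz1 : (![(1:ℂ),1,0] : Fin 3 → ℂ) ≠ 0 := vne _ 0 (by norm_num)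
  have nz2 : (![(1:ℂ),1,-1] : Fin 3 → ℂ) ≠ 0 := vne _ 0 (by norm_num)
  have nz3 : (![(2:ℂ),1,1] : Fin 3 → ℂ) ≠ 0 := vne _ 0 (by norm_num)
  have nz4 : (![(2:ℂ),1,-1] : Fin 3 → ℂ) ≠ 0 := vne _ 0 (by norm_num)
  have nz5 : (![(1:ℂ),0,1] : Fin 3 → ℂ) ≠ 0 := vne _ 0 (by norm_num)
  have nz6 : (![(2:ℂ),0,1] : Fin 3 → ℂ) ≠ 0 := vne _ 0 (by norm_num)
  have nz7 : (![(1:ℂ),0,0] : Fin 3 → ℂ) ≠ 0 := vne _ 0 (by norm_num)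
  have nz8 : (![(2:ℂ),0,-1] : Fin 3 → ℂ) ≠ 0 := vne _ 0 (by norm_num)
  have nz9 : (![(1:ℂ),0,-1] : Fin 3 → ℂ) ≠ 0 := vne _ 0 (by norm_num)
  have nz10 : (![(2:ℂ),-1,1] : Fin 3 → ℂ) ≠ 0 := vne _ 0 (by norm_num)
  have nz11 : (![(2:ℂ),-1,0] : Fin 3 → ℂ) ≠ 0 := vne _ 0 (by norm_num)
  have nz12 : (![(2:ℂ),-1,-1] : Fin 3 → ℂ) ≠ 0 := vne _ 0 (by norm_num)
  have nz13 : (![(1:ℂ),-1,1] : Fin 3 → ℂ) ≠ 0 := vne _ 0 (by norm_num)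
  have nz14 : (![(1:ℂ),-1,0] : Fin 3 → ℂ) ≠ 0 := vne _ 0 (by norm_num)
  have nz15 : (![(1:ℂ),-1,-1] : Fin 3 → ℂ) ≠ 0 := vne _ 0 (by norm_num)
  have nz16 : (![(1:ℂ),2,1] : Fin 3 → ℂ) ≠ 0 := vne _ 0 (by norm_num)
  have nz17 : (![(1:ℂ),2,0] : Fin 3 → ℂ) ≠ 0 := vne _ 0 (by norm_num)
  have nz18 : (![(1:ℂ),2,-1] : Fin 3 → ℂ) ≠ 0 := vne _ 0 (by norm_num)
  have nz19 : (![(1:ℂ),1,2] : Fin 3 → ℂ) ≠ 0 := vne _ 0 (by norm_num)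
  have nz20 : (![(1:ℂ),1,-2] : Fin 3 → ℂ) ≠ 0 := vne _ 0 (by norm_num)
  have nz21 : (![(1:ℂ),0,2] : Fin 3 → ℂ) ≠ 0 := vne _ 0 (by norm_num)
  have nz22 : (![(1:ℂ),0,-2] : Fin 3 → ℂ) ≠ 0 := vne _ 0 (by norm_num)
  have nz23 : (![(1:ℂ),-1,2] : Fin 3 → ℂ) ≠ 0 := vne _ 0 (by norm_num)
  have nz24 : (![(1:ℂ),-1,-2] : Fin 3 → ℂ) ≠ 0 := vne _ 0 (by norm_num)
  have nz25 : (![(1:ℂ),-2,1] : Fin 3 → ℂ) ≠ 0 := vne _ 0 (by norm_num)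
  have nz26 : (![(1:ℂ),-2,-1] : Fin 3 → ℂ) ≠ 0 := vne _ 0 (by norm_num)
  have nz27 : (![(0:ℂ),1,1] : Fin 3 → ℂ) ≠ 0 := vne _ 1 (by norm_num)
  have nz28 : (![(0:ℂ),2,1] : Fin 3 → ℂ) ≠ 0 := vne _ 1 (by norm_num)
  have nz29 : (![(0:ℂ),1,0] : Fin 3 → ℂ) ≠ 0 := vne _ 1 (by norm_num)
  have nz30 : (![(0:ℂ),2,-1] : Fin 3 → ℂ) ≠ 0 := vne _ 1 (by norm_num)
  have nz31 : (![(0:ℂ),1,-1] : Fin 3 → ℂ) ≠ 0 := vne _ 1 (by norm_num)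
  have nz32 : (![(0:ℂ),1,2] : Fin 3 → ℂ) ≠ 0 := vne _ 1 (by norm_num)
  have nz33 : (![(0:ℂ),1,-2] : Fin 3 → ℂ) ≠ 0 := vne _ 1 (by norm_num)
  have nz34 : (![(0:ℂ),0,1] : Fin 3 → ℂ) ≠ 0 := vne _ 2 (by norm_num [Matrix.cons_val_two, Matrix.tail_cons, Matrix.head_cons])
  have cp0 := P ![(2:ℂ),0,1] ![(1:ℂ),-1,-2] nz6 nz24
    (by norm_num [dotProduct, Fin.sum_univ_three, Complex.star_def, map_ofNat, Matrix.cons_val_two, Matrix.tail_cons, Matrix.head_cons] : star (![(2:ℂ),0,1] : Fin 3 → ℂ) ⬝ᵥ ![(1:ℂ),-1,-2] = 0)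
  have cp1 := P ![(2:ℂ),0,-1] ![(1:ℂ),-1,2] nz8 nz23
    (by norm_num [dotProduct, Fin.sum_univ_three, Complex.star_def, map_ofNat, Matrix.cons_val_two, Matrix.tail_cons, Matrix.head_cons] : star (![(2:ℂ),0,-1] : Fin 3 → ℂ) ⬝ᵥ ![(1:ℂ),-1,2] = 0)
  have cp2 := P ![(2:ℂ),-1,1] ![(1:ℂ),2,0] nz10 nz17
    (by norm_num [dotProduct, Fin.sum_univ_three, Complex.star_def, map_ofNat, Matrix.cons_val_two, Matrix.tail_cons, Matrix.head_cons] : star (![(2:ℂ),-1,1] : Fin 3 → ℂ) ⬝ᵥ ![(1:ℂ),2,0] = 0)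
  have cp3 := P ![(2:ℂ),-1,1] ![(1:ℂ),0,-2] nz10 nz22
    (by norm_num [dotProduct, Fin.sum_univ_three, Complex.star_def, map_ofNat, Matrix.cons_val_two, Matrix.tail_cons, Matrix.head_cons] : star (![(2:ℂ),-1,1] : Fin 3 → ℂ) ⬝ᵥ ![(1:ℂ),0,-2] = 0)
  have cp4 := P ![(2:ℂ),-1,0] ![(1:ℂ),2,1] nz11 nz16
    (by norm_num [dotProduct, Fin.sum_univ_three, Complex.star_def, map_ofNat, Matrix.cons_val_two, Matrix.tail_cons, Matrix.head_cons] : star (![(2:ℂ),-1,0] : Fin 3 → ℂ) ⬝ᵥ ![(1:ℂ),2,1] = 0)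
  have cp5 := P ![(2:ℂ),-1,0] ![(1:ℂ),2,-1] nz11 nz18
    (by norm_num [dotProduct, Fin.sum_univ_three, Complex.star_def, map_ofNat, Matrix.cons_val_two, Matrix.tail_cons, Matrix.head_cons] : star (![(2:ℂ),-1,0] : Fin 3 → ℂ) ⬝ᵥ ![(1:ℂ),2,-1] = 0)
  have cp6 := P ![(2:ℂ),-1,-1] ![(1:ℂ),2,0] nz12 nz17
    (by norm_num [dotProduct, Fin.sum_univ_three, Complex.star_def, map_ofNat, Matrix.cons_val_two, Matrix.tail_cons, Matrix.head_cons] : star (![(2:ℂ),-1,-1] : Fin 3 → ℂ) ⬝ᵥ ![(1:ℂ),2,0] = 0)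
  have cp7 := P ![(2:ℂ),-1,-1] ![(1:ℂ),0,2] nz12 nz21
    (by norm_num [dotProduct, Fin.sum_univ_three, Complex.star_def, map_ofNat, Matrix.cons_val_two, Matrix.tail_cons, Matrix.head_cons] : star (![(2:ℂ),-1,-1] : Fin 3 → ℂ) ⬝ᵥ ![(1:ℂ),0,2] = 0)
  have cp8 := P ![(1:ℂ),2,1] ![(0:ℂ),1,-2] nz16 nz33
    (by norm_num [dotProduct, Fin.sum_univ_three, Complex.star_def, map_ofNat, Matrix.cons_val_two, Matrix.tail_cons, Matrix.head_cons] : star (![(1:ℂ),2,1] : Fin 3 → ℂ) ⬝ᵥ ![(0:ℂ),1,-2] = 0)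
  have cp9 := P ![(1:ℂ),2,-1] ![(0:ℂ),1,2] nz18 nz32
    (by norm_num [dotProduct, Fin.sum_univ_three, Complex.star_def, map_ofNat, Matrix.cons_val_two, Matrix.tail_cons, Matrix.head_cons] : star (![(1:ℂ),2,-1] : Fin 3 → ℂ) ⬝ᵥ ![(0:ℂ),1,2] = 0)
  have cp10 := P ![(1:ℂ),1,2] ![(0:ℂ),2,-1] nz19 nz30
    (by norm_num [dotProduct, Fin.sum_univ_three, Complex.star_def, map_ofNat, Matrix.cons_val_two, Matrix.tail_cons, Matrix.head_cons] : star (![(1:ℂ),1,2] : Fin 3 → ℂ) ⬝ᵥ ![(0:ℂ),2,-1] = 0)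
  have cp11 := P ![(1:ℂ),1,-2] ![(0:ℂ),2,1] nz20 nz28
    (by norm_num [dotProduct, Fin.sum_univ_three, Complex.star_def, map_ofNat, Matrix.cons_val_two, Matrix.tail_cons, Matrix.head_cons] : star (![(1:ℂ),1,-2] : Fin 3 → ℂ) ⬝ᵥ ![(0:ℂ),2,1] = 0)
  have cp12 := P ![(1:ℂ),-1,2] ![(0:ℂ),2,1] nz23 nz28
    (by norm_num [dotProduct, Fin.sum_univ_three, Complex.star_def, map_ofNat, Matrix.cons_val_two, Matrix.tail_cons, Matrix.head_cons] : star (![(1:ℂ),-1,2] : Fin 3 → ℂ) ⬝ᵥ ![(0:ℂ),2,1] = 0)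
  have cp13 := P ![(1:ℂ),-1,-2] ![(0:ℂ),2,-1] nz24 nz30
    (by norm_num [dotProduct, Fin.sum_univ_three, Complex.star_def, map_ofNat, Matrix.cons_val_two, Matrix.tail_cons, Matrix.head_cons] : star (![(1:ℂ),-1,-2] : Fin 3 → ℂ) ⬝ᵥ ![(0:ℂ),2,-1] = 0)
  have cp14 := P ![(1:ℂ),-2,1] ![(0:ℂ),1,2] nz25 nz32
    (by norm_num [dotProduct, Fin.sum_univ_three, Complex.star_def, map_ofNat, Matrix.cons_val_two, Matrix.tail_cons, Matrix.head_cons] : star (![(1:ℂ),-2,1] : Fin 3 → ℂ) ⬝ᵥ ![(0:ℂ),1,2] = 0)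
  have cp15 := P ![(1:ℂ),-2,-1] ![(0:ℂ),1,-2] nz26 nz33
    (by norm_num [dotProduct, Fin.sum_univ_three, Complex.star_def, map_ofNat, Matrix.cons_val_two, Matrix.tail_cons, Matrix.head_cons] : star (![(1:ℂ),-2,-1] : Fin 3 → ℂ) ⬝ᵥ ![(0:ℂ),1,-2] = 0)
  have ct0 := T ![(1:ℂ),1,1] ![(1:ℂ),0,-1] ![(1:ℂ),-2,1] nz0 nz9 nz25
    (by norm_num [dotProduct, Fin.sum_univ_three, Complex.star_def, map_ofNat, Matrix.cons_val_two, Matrix.tail_cons, Matrix.head_cons] : star (![(1:ℂ),1,1] : Fin 3 → ℂ) ⬝ᵥ ![(1:ℂ),0,-1] = 0)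
    (by norm_num [dotProduct, Fin.sum_univ_three, Complex.star_def, map_ofNat, Matrix.cons_val_two, Matrix.tail_cons, Matrix.head_cons] : star (![(1:ℂ),1,1] : Fin 3 → ℂ) ⬝ᵥ ![(1:ℂ),-2,1] = 0)
    (by norm_num [dotProduct, Fin.sum_univ_three, Complex.star_def, map_ofNat, Matrix.cons_val_two, Matrix.tail_cons, Matrix.head_cons] : star (![(1:ℂ),0,-1] : Fin 3 → ℂ) ⬝ᵥ ![(1:ℂ),-2,1] = 0)
  have ct1 := T ![(1:ℂ),1,1] ![(2:ℂ),-1,-1] ![(0:ℂ),1,-1] nz0 nz12 nz31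
    (by norm_num [dotProduct, Fin.sum_univ_three, Complex.star_def, map_ofNat, Matrix.cons_val_two, Matrix.tail_cons, Matrix.head_cons] : star (![(1:ℂ),1,1] : Fin 3 → ℂ) ⬝ᵥ ![(2:ℂ),-1,-1] = 0)
    (by norm_num [dotProduct, Fin.sum_univ_three, Complex.star_def, map_ofNat, Matrix.cons_val_two, Matrix.tail_cons, Matrix.head_cons] : star (![(1:ℂ),1,1] : Fin 3 → ℂ) ⬝ᵥ ![(0:ℂ),1,-1] = 0)
    (by norm_num [dotProduct, Fin.sum_univ_three, Complex.star_def, map_ofNat, Matrix.cons_val_two, Matrix.tail_cons, Matrix.head_cons] : star (![(2:ℂ),-1,-1] : Fin 3 → ℂ) ⬝ᵥ ![(0:ℂ),1,-1] = 0)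
  have ct2 := T ![(1:ℂ),1,1] ![(1:ℂ),-1,0] ![(1:ℂ),1,-2] nz0 nz14 nz20
    (by norm_num [dotProduct, Fin.sum_univ_three, Complex.star_def, map_ofNat, Matrix.cons_val_two, Matrix.tail_cons, Matrix.head_cons] : star (![(1:ℂ),1,1] : Fin 3 → ℂ) ⬝ᵥ ![(1:ℂ),-1,0] = 0)
    (by norm_num [dotProduct, Fin.sum_univ_three, Complex.star_def, map_ofNat, Matrix.cons_val_two, Matrix.tail_cons, Matrix.head_cons] : star (![(1:ℂ),1,1] : Fin 3 → ℂ) ⬝ᵥ ![(1:ℂ),1,-2] = 0)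
    (by norm_num [dotProduct, Fin.sum_univ_three, Complex.star_def, map_ofNat, Matrix.cons_val_two, Matrix.tail_cons, Matrix.head_cons] : star (![(1:ℂ),-1,0] : Fin 3 → ℂ) ⬝ᵥ ![(1:ℂ),1,-2] = 0)
  have ct3 := T ![(1:ℂ),1,0] ![(1:ℂ),-1,1] ![(1:ℂ),-1,-2] nz1 nz13 nz24
    (by norm_num [dotProduct, Fin.sum_univ_three, Complex.star_def, map_ofNat, Matrix.cons_val_two, Matrix.tail_cons, Matrix.head_cons] : star (![(1:ℂ),1,0] : Fin 3 → ℂ) ⬝ᵥ ![(1:ℂ),-1,1] = 0)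
    (by norm_num [dotProduct, Fin.sum_univ_three, Complex.star_def, map_ofNat, Matrix.cons_val_two, Matrix.tail_cons, Matrix.head_cons] : star (![(1:ℂ),1,0] : Fin 3 → ℂ) ⬝ᵥ ![(1:ℂ),-1,-2] = 0)
    (by norm_num [dotProduct, Fin.sum_univ_three, Complex.star_def, map_ofNat, Matrix.cons_val_two, Matrix.tail_cons, Matrix.head_cons] : star (![(1:ℂ),-1,1] : Fin 3 → ℂ) ⬝ᵥ ![(1:ℂ),-1,-2] = 0)
  have ct4 := T ![(1:ℂ),1,0] ![(1:ℂ),-1,0] ![(0:ℂ),0,1] nz1 nz14 nz34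
    (by norm_num [dotProduct, Fin.sum_univ_three, Complex.star_def, map_ofNat, Matrix.cons_val_two, Matrix.tail_cons, Matrix.head_cons] : star (![(1:ℂ),1,0] : Fin 3 → ℂ) ⬝ᵥ ![(1:ℂ),-1,0] = 0)
    (by norm_num [dotProduct, Fin.sum_univ_three, Complex.star_def, map_ofNat, Matrix.cons_val_two, Matrix.tail_cons, Matrix.head_cons] : star (![(1:ℂ),1,0] : Fin 3 → ℂ) ⬝ᵥ ![(0:ℂ),0,1] = 0)
    (by norm_num [dotProduct, Fin.sum_univ_three, Complex.star_def, map_ofNat, Matrix.cons_val_two, Matrix.tail_cons, Matrix.head_cons] : star (![(1:ℂ),-1,0] : Fin 3 → ℂ) ⬝ᵥ ![(0:ℂ),0,1] = 0)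
  have ct5 := T ![(1:ℂ),1,0] ![(1:ℂ),-1,-1] ![(1:ℂ),-1,2] nz1 nz15 nz23
    (by norm_num [dotProduct, Fin.sum_univ_three, Complex.star_def, map_ofNat, Matrix.cons_val_two, Matrix.tail_cons, Matrix.head_cons] : star (![(1:ℂ),1,0] : Fin 3 → ℂ) ⬝ᵥ ![(1:ℂ),-1,-1] = 0)
    (by norm_num [dotProduct, Fin.sum_univ_three, Complex.star_def, map_ofNat, Matrix.cons_val_two, Matrix.tail_cons, Matrix.head_cons] : star (![(1:ℂ),1,0] : Fin 3 → ℂ) ⬝ᵥ ![(1:ℂ),-1,2] = 0)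
    (by norm_num [dotProduct, Fin.sum_univ_three, Complex.star_def, map_ofNat, Matrix.cons_val_two, Matrix.tail_cons, Matrix.head_cons] : star (![(1:ℂ),-1,-1] : Fin 3 → ℂ) ⬝ᵥ ![(1:ℂ),-1,2] = 0)
  have ct6 := T ![(1:ℂ),1,-1] ![(1:ℂ),0,1] ![(1:ℂ),-2,-1] nz2 nz5 nz26
    (by norm_num [dotProduct, Fin.sum_univ_three, Complex.star_def, map_ofNat, Matrix.cons_val_two, Matrix.tail_cons, Matrix.head_cons] : star (![(1:ℂ),1,-1] : Fin 3 → ℂ) ⬝ᵥ ![(1:ℂ),0,1] = 0)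
    (by norm_num [dotProduct, Fin.sum_univ_three, Complex.star_def, map_ofNat, Matrix.cons_val_two, Matrix.tail_cons, Matrix.head_cons] : star (![(1:ℂ),1,-1] : Fin 3 → ℂ) ⬝ᵥ ![(1:ℂ),-2,-1] = 0)
    (by norm_num [dotProduct, Fin.sum_univ_three, Complex.star_def, map_ofNat, Matrix.cons_val_two, Matrix.tail_cons, Matrix.head_cons] : star (![(1:ℂ),0,1] : Fin 3 → ℂ) ⬝ᵥ ![(1:ℂ),-2,-1] = 0)
  have ct7 := T ![(1:ℂ),1,-1] ![(2:ℂ),-1,1] ![(0:ℂ),1,1] nz2 nz10 nz27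
    (by norm_num [dotProduct, Fin.sum_univ_three, Complex.star_def, map_ofNat, Matrix.cons_val_two, Matrix.tail_cons, Matrix.head_cons] : star (![(1:ℂ),1,-1] : Fin 3 → ℂ) ⬝ᵥ ![(2:ℂ),-1,1] = 0)
    (by norm_num [dotProduct, Fin.sum_univ_three, Complex.star_def, map_ofNat, Matrix.cons_val_two, Matrix.tail_cons, Matrix.head_cons] : star (![(1:ℂ),1,-1] : Fin 3 → ℂ) ⬝ᵥ ![(0:ℂ),1,1] = 0)
    (by norm_num [dotProduct, Fin.sum_univ_three, Complex.star_def, map_ofNat, Matrix.cons_val_two, Matrix.tail_cons, Matrix.head_cons] : star (![(2:ℂ),-1,1] : Fin 3 → ℂ) ⬝ᵥ ![(0:ℂ),1,1] = 0)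
  have ct8 := T ![(1:ℂ),1,-1] ![(1:ℂ),-1,0] ![(1:ℂ),1,2] nz2 nz14 nz19
    (by norm_num [dotProduct, Fin.sum_univ_three, Complex.star_def, map_ofNat, Matrix.cons_val_two, Matrix.tail_cons, Matrix.head_cons] : star (![(1:ℂ),1,-1] : Fin 3 → ℂ) ⬝ᵥ ![(1:ℂ),-1,0] = 0)
    (by norm_num [dotProduct, Fin.sum_univ_three, Complex.star_def, map_ofNat, Matrix.cons_val_two, Matrix.tail_cons, Matrix.head_cons] : star (![(1:ℂ),1,-1] : Fin 3 → ℂ) ⬝ᵥ ![(1:ℂ),1,2] = 0)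
    (by norm_num [dotProduct, Fin.sum_univ_three, Complex.star_def, map_ofNat, Matrix.cons_val_two, Matrix.tail_cons, Matrix.head_cons] : star (![(1:ℂ),-1,0] : Fin 3 → ℂ) ⬝ᵥ ![(1:ℂ),1,2] = 0)
  have ct9 := T ![(2:ℂ),1,1] ![(1:ℂ),-1,-1] ![(0:ℂ),1,-1] nz3 nz15 nz31
    (by norm_num [dotProduct, Fin.sum_univ_three, Complex.star_def, map_ofNat, Matrix.cons_val_two, Matrix.tail_cons, Matrix.head_cons] : star (![(2:ℂ),1,1] : Fin 3 → ℂ) ⬝ᵥ ![(1:ℂ),-1,-1] = 0)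
    (by norm_num [dotProduct, Fin.sum_univ_three, Complex.star_def, map_ofNat, Matrix.cons_val_two, Matrix.tail_cons, Matrix.head_cons] : star (![(2:ℂ),1,1] : Fin 3 → ℂ) ⬝ᵥ ![(0:ℂ),1,-1] = 0)
    (by norm_num [dotProduct, Fin.sum_univ_three, Complex.star_def, map_ofNat, Matrix.cons_val_two, Matrix.tail_cons, Matrix.head_cons] : star (![(1:ℂ),-1,-1] : Fin 3 → ℂ) ⬝ᵥ ![(0:ℂ),1,-1] = 0)
  have ct10 := T ![(2:ℂ),1,-1] ![(1:ℂ),-1,1] ![(0:ℂ),1,1] nz4 nz13 nz27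
    (by norm_num [dotProduct, Fin.sum_univ_three, Complex.star_def, map_ofNat, Matrix.cons_val_two, Matrix.tail_cons, Matrix.head_cons] : star (![(2:ℂ),1,-1] : Fin 3 → ℂ) ⬝ᵥ ![(1:ℂ),-1,1] = 0)
    (by norm_num [dotProduct, Fin.sum_univ_three, Complex.star_def, map_ofNat, Matrix.cons_val_two, Matrix.tail_cons, Matrix.head_cons] : star (![(2:ℂ),1,-1] : Fin 3 → ℂ) ⬝ᵥ ![(0:ℂ),1,1] = 0)
    (by norm_num [dotProduct, Fin.sum_univ_three, Complex.star_def, map_ofNat, Matrix.cons_val_two, Matrix.tail_cons, Matrix.head_cons] : star (![(1:ℂ),-1,1] : Fin 3 → ℂ) ⬝ᵥ ![(0:ℂ),1,1] = 0)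
  have ct11 := T ![(1:ℂ),0,1] ![(1:ℂ),0,-1] ![(0:ℂ),1,0] nz5 nz9 nz29
    (by norm_num [dotProduct, Fin.sum_univ_three, Complex.star_def, map_ofNat, Matrix.cons_val_two, Matrix.tail_cons, Matrix.head_cons] : star (![(1:ℂ),0,1] : Fin 3 → ℂ) ⬝ᵥ ![(1:ℂ),0,-1] = 0)
    (by norm_num [dotProduct, Fin.sum_univ_three, Complex.star_def, map_ofNat, Matrix.cons_val_two, Matrix.tail_cons, Matrix.head_cons] : star (![(1:ℂ),0,1] : Fin 3 → ℂ) ⬝ᵥ ![(0:ℂ),1,0] = 0)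
    (by norm_num [dotProduct, Fin.sum_univ_three, Complex.star_def, map_ofNat, Matrix.cons_val_two, Matrix.tail_cons, Matrix.head_cons] : star (![(1:ℂ),0,-1] : Fin 3 → ℂ) ⬝ᵥ ![(0:ℂ),1,0] = 0)
  have ct12 := T ![(1:ℂ),0,1] ![(1:ℂ),-1,-1] ![(1:ℂ),2,-1] nz5 nz15 nz18
    (by norm_num [dotProduct, Fin.sum_univ_three, Complex.star_def, map_ofNat, Matrix.cons_val_two, Matrix.tail_cons, Matrix.head_cons] : star (![(1:ℂ),0,1] : Fin 3 → ℂ) ⬝ᵥ ![(1:ℂ),-1,-1] = 0)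
    (by norm_num [dotProduct, Fin.sum_univ_three, Complex.star_def, map_ofNat, Matrix.cons_val_two, Matrix.tail_cons, Matrix.head_cons] : star (![(1:ℂ),0,1] : Fin 3 → ℂ) ⬝ᵥ ![(1:ℂ),2,-1] = 0)
    (by norm_num [dotProduct, Fin.sum_univ_three, Complex.star_def, map_ofNat, Matrix.cons_val_two, Matrix.tail_cons, Matrix.head_cons] : star (![(1:ℂ),-1,-1] : Fin 3 → ℂ) ⬝ᵥ ![(1:ℂ),2,-1] = 0)
  have ct13 := T ![(2:ℂ),0,1] ![(1:ℂ),0,-2] ![(0:ℂ),1,0] nz6 nz22 nz29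
    (by norm_num [dotProduct, Fin.sum_univ_three, Complex.star_def, map_ofNat, Matrix.cons_val_two, Matrix.tail_cons, Matrix.head_cons] : star (![(2:ℂ),0,1] : Fin 3 → ℂ) ⬝ᵥ ![(1:ℂ),0,-2] = 0)
    (by norm_num [dotProduct, Fin.sum_univ_three, Complex.star_def, map_ofNat, Matrix.cons_val_two, Matrix.tail_cons, Matrix.head_cons] : star (![(2:ℂ),0,1] : Fin 3 → ℂ) ⬝ᵥ ![(0:ℂ),1,0] = 0)
    (by norm_num [dotProduct, Fin.sum_univ_three, Complex.star_def, map_ofNat, Matrix.cons_val_two, Matrix.tail_cons, Matrix.head_cons] : star (![(1:ℂ),0,-2] : Fin 3 → ℂ) ⬝ᵥ ![(0:ℂ),1,0] = 0)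
  have ct14 := T ![(1:ℂ),0,0] ![(0:ℂ),1,1] ![(0:ℂ),1,-1] nz7 nz27 nz31
    (by norm_num [dotProduct, Fin.sum_univ_three, Complex.star_def, map_ofNat, Matrix.cons_val_two, Matrix.tail_cons, Matrix.head_cons] : star (![(1:ℂ),0,0] : Fin 3 → ℂ) ⬝ᵥ ![(0:ℂ),1,1] = 0)
    (by norm_num [dotProduct, Fin.sum_univ_three, Complex.star_def, map_ofNat, Matrix.cons_val_two, Matrix.tail_cons, Matrix.head_cons] : star (![(1:ℂ),0,0] : Fin 3 → ℂ) ⬝ᵥ ![(0:ℂ),1,-1] = 0)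
    (by norm_num [dotProduct, Fin.sum_univ_three, Complex.star_def, map_ofNat, Matrix.cons_val_two, Matrix.tail_cons, Matrix.head_cons] : star (![(0:ℂ),1,1] : Fin 3 → ℂ) ⬝ᵥ ![(0:ℂ),1,-1] = 0)
  have ct15 := T ![(1:ℂ),0,0] ![(0:ℂ),2,1] ![(0:ℂ),1,-2] nz7 nz28 nz33
    (by norm_num [dotProduct, Fin.sum_univ_three, Complex.star_def, map_ofNat, Matrix.cons_val_two, Matrix.tail_cons, Matrix.head_cons] : star (![(1:ℂ),0,0] : Fin 3 → ℂ) ⬝ᵥ ![(0:ℂ),2,1] = 0)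
    (by norm_num [dotProduct, Fin.sum_univ_three, Complex.star_def, map_ofNat, Matrix.cons_val_two, Matrix.tail_cons, Matrix.head_cons] : star (![(1:ℂ),0,0] : Fin 3 → ℂ) ⬝ᵥ ![(0:ℂ),1,-2] = 0)
    (by norm_num [dotProduct, Fin.sum_univ_three, Complex.star_def, map_ofNat, Matrix.cons_val_two, Matrix.tail_cons, Matrix.head_cons] : star (![(0:ℂ),2,1] : Fin 3 → ℂ) ⬝ᵥ ![(0:ℂ),1,-2] = 0)
  have ct16 := T ![(1:ℂ),0,0] ![(0:ℂ),1,0] ![(0:ℂ),0,1] nz7 nz29 nz34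
    (by norm_num [dotProduct, Fin.sum_univ_three, Complex.star_def, map_ofNat, Matrix.cons_val_two, Matrix.tail_cons, Matrix.head_cons] : star (![(1:ℂ),0,0] : Fin 3 → ℂ) ⬝ᵥ ![(0:ℂ),1,0] = 0)
    (by norm_num [dotProduct, Fin.sum_univ_three, Complex.star_def, map_ofNat, Matrix.cons_val_two, Matrix.tail_cons, Matrix.head_cons] : star (![(1:ℂ),0,0] : Fin 3 → ℂ) ⬝ᵥ ![(0:ℂ),0,1] = 0)
    (by norm_num [dotProduct, Fin.sum_univ_three, Complex.star_def, map_ofNat, Matrix.cons_val_two, Matrix.tail_cons, Matrix.head_cons] : star (![(0:ℂ),1,0] : Fin 3 → ℂ) ⬝ᵥ ![(0:ℂ),0,1] = 0)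
  have ct17 := T ![(1:ℂ),0,0] ![(0:ℂ),2,-1] ![(0:ℂ),1,2] nz7 nz30 nz32
    (by norm_num [dotProduct, Fin.sum_univ_three, Complex.star_def, map_ofNat, Matrix.cons_val_two, Matrix.tail_cons, Matrix.head_cons] : star (![(1:ℂ),0,0] : Fin 3 → ℂ) ⬝ᵥ ![(0:ℂ),2,-1] = 0)
    (by norm_num [dotProduct, Fin.sum_univ_three, Complex.star_def, map_ofNat, Matrix.cons_val_two, Matrix.tail_cons, Matrix.head_cons] : star (![(1:ℂ),0,0] : Fin 3 → ℂ) ⬝ᵥ ![(0:ℂ),1,2] = 0)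
    (by norm_num [dotProduct, Fin.sum_univ_three, Complex.star_def, map_ofNat, Matrix.cons_val_two, Matrix.tail_cons, Matrix.head_cons] : star (![(0:ℂ),2,-1] : Fin 3 → ℂ) ⬝ᵥ ![(0:ℂ),1,2] = 0)
  have ct18 := T ![(2:ℂ),0,-1] ![(1:ℂ),0,2] ![(0:ℂ),1,0] nz8 nz21 nz29
    (by norm_num [dotProduct, Fin.sum_univ_three, Complex.star_def, map_ofNat, Matrix.cons_val_two, Matrix.tail_cons, Matrix.head_cons] : star (![(2:ℂ),0,-1] : Fin 3 → ℂ) ⬝ᵥ ![(1:ℂ),0,2] = 0)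
    (by norm_num [dotProduct, Fin.sum_univ_three, Complex.star_def, map_ofNat, Matrix.cons_val_two, Matrix.tail_cons, Matrix.head_cons] : star (![(2:ℂ),0,-1] : Fin 3 → ℂ) ⬝ᵥ ![(0:ℂ),1,0] = 0)
    (by norm_num [dotProduct, Fin.sum_univ_three, Complex.star_def, map_ofNat, Matrix.cons_val_two, Matrix.tail_cons, Matrix.head_cons] : star (![(1:ℂ),0,2] : Fin 3 → ℂ) ⬝ᵥ ![(0:ℂ),1,0] = 0)
  have ct19 := T ![(1:ℂ),0,-1] ![(1:ℂ),-1,1] ![(1:ℂ),2,1] nz9 nz13 nz16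
    (by norm_num [dotProduct, Fin.sum_univ_three, Complex.star_def, map_ofNat, Matrix.cons_val_two, Matrix.tail_cons, Matrix.head_cons] : star (![(1:ℂ),0,-1] : Fin 3 → ℂ) ⬝ᵥ ![(1:ℂ),-1,1] = 0)
    (by norm_num [dotProduct, Fin.sum_univ_three, Complex.star_def, map_ofNat, Matrix.cons_val_two, Matrix.tail_cons, Matrix.head_cons] : star (![(1:ℂ),0,-1] : Fin 3 → ℂ) ⬝ᵥ ![(1:ℂ),2,1] = 0)
    (by norm_num [dotProduct, Fin.sum_univ_three, Complex.star_def, map_ofNat, Matrix.cons_val_two, Matrix.tail_cons, Matrix.head_cons] : star (![(1:ℂ),-1,1] : Fin 3 → ℂ) ⬝ᵥ ![(1:ℂ),2,1] = 0)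
  have ct20 := T ![(2:ℂ),-1,0] ![(1:ℂ),2,0] ![(0:ℂ),0,1] nz11 nz17 nz34
    (by norm_num [dotProduct, Fin.sum_univ_three, Complex.star_def, map_ofNat, Matrix.cons_val_two, Matrix.tail_cons, Matrix.head_cons] : star (![(2:ℂ),-1,0] : Fin 3 → ℂ) ⬝ᵥ ![(1:ℂ),2,0] = 0)
    (by norm_num [dotProduct, Fin.sum_univ_three, Complex.star_def, map_ofNat, Matrix.cons_val_two, Matrix.tail_cons, Matrix.head_cons] : star (![(2:ℂ),-1,0] : Fin 3 → ℂ) ⬝ᵥ ![(0:ℂ),0,1] = 0)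
    (by norm_num [dotProduct, Fin.sum_univ_three, Complex.star_def, map_ofNat, Matrix.cons_val_two, Matrix.tail_cons, Matrix.head_cons] : star (![(1:ℂ),2,0] : Fin 3 → ℂ) ⬝ᵥ ![(0:ℂ),0,1] = 0)
  set m0 : ℕ := (if g (![(1:ℂ),1,1] : Fin 3 → ℂ) = 1 then 1 else 0) with hm0
  set m1 : ℕ := (if g (![(1:ℂ),1,0] : Fin 3 → ℂ) = 1 then 1 else 0) with hm1
  set m2 : ℕ := (if g (![(1:ℂ),1,-1] : Fin 3 → ℂ) = 1 then 1 else 0) with hm2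
  set m3 : ℕ := (if g (![(2:ℂ),1,1] : Fin 3 → ℂ) = 1 then 1 else 0) with hm3
  set m4 : ℕ := (if g (![(2:ℂ),1,-1] : Fin 3 → ℂ) = 1 then 1 else 0) with hm4
  set m5 : ℕ := (if g (![(1:ℂ),0,1] : Fin 3 → ℂ) = 1 then 1 else 0) with hm5
  set m6 : ℕ := (if g (![(2:ℂ),0,1] : Fin 3 → ℂ) = 1 then 1 else 0) with hm6
  set m7 : ℕ := (if g (![(1:ℂ),0,0] : Fin 3 → ℂ) = 1 then 1 else 0) with hm7
  set m8 : ℕ := (if g (![(2:ℂ),0,-1] : Fin 3 → ℂ) = 1 then 1 else 0) with hm8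
  set m9 : ℕ := (if g (![(1:ℂ),0,-1] : Fin 3 → ℂ) = 1 then 1 else 0) with hm9
  set m10 : ℕ := (if g (![(2:ℂ),-1,1] : Fin 3 → ℂ) = 1 then 1 else 0) with hm10
  set m11 : ℕ := (if g (![(2:ℂ),-1,0] : Fin 3 → ℂ) = 1 then 1 else 0) with hm11
  set m12 : ℕ := (if g (![(2:ℂ),-1,-1] : Fin 3 → ℂ) = 1 then 1 else 0) with hm12
  set m13 : ℕ := (if g (![(1:ℂ),-1,1] : Fin 3 → ℂ) = 1 then 1 else 0) with hm13
  set m14 : ℕ := (if g (![(1:ℂ),-1,0] : Fin 3 → ℂ) = 1 then 1 else 0) with hm14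
  set m15 : ℕ := (if g (![(1:ℂ),-1,-1] : Fin 3 → ℂ) = 1 then 1 else 0) with hm15
  set m16 : ℕ := (if g (![(1:ℂ),2,1] : Fin 3 → ℂ) = 1 then 1 else 0) with hm16
  set m17 : ℕ := (if g (![(1:ℂ),2,0] : Fin 3 → ℂ) = 1 then 1 else 0) with hm17
  set m18 : ℕ := (if g (![(1:ℂ),2,-1] : Fin 3 → ℂ) = 1 then 1 else 0) with hm18
  set m19 : ℕ := (if g (![(1:ℂ),1,2] : Fin 3 → ℂ) = 1 then 1 else 0) with hm19
  set m20 : ℕ := (if g (![(1:ℂ),1,-2] : Fin 3 → ℂ) = 1 then 1 else 0) with hm20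
  set m21 : ℕ := (if g (![(1:ℂ),0,2] : Fin 3 → ℂ) = 1 then 1 else 0) with hm21
  set m22 : ℕ := (if g (![(1:ℂ),0,-2] : Fin 3 → ℂ) = 1 then 1 else 0) with hm22
  set m23 : ℕ := (if g (![(1:ℂ),-1,2] : Fin 3 → ℂ) = 1 then 1 else 0) with hm23
  set m24 : ℕ := (if g (![(1:ℂ),-1,-2] : Fin 3 → ℂ) = 1 then 1 else 0) with hm24
  set m25 : ℕ := (if g (![(1:ℂ),-2,1] : Fin 3 → ℂ) = 1 then 1 else 0) with hm25
  set m26 : ℕ := (if g (![(1:ℂ),-2,-1] : Fin 3 → ℂ) = 1 then 1 else 0) with hm26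
  set m27 : ℕ := (if g (![(0:ℂ),1,1] : Fin 3 → ℂ) = 1 then 1 else 0) with hm27
  set m28 : ℕ := (if g (![(0:ℂ),2,1] : Fin 3 → ℂ) = 1 then 1 else 0) with hm28
  set m29 : ℕ := (if g (![(0:ℂ),1,0] : Fin 3 → ℂ) = 1 then 1 else 0) with hm29
  set m30 : ℕ := (if g (![(0:ℂ),2,-1] : Fin 3 → ℂ) = 1 then 1 else 0) with hm30
  set m31 : ℕ := (if g (![(0:ℂ),1,-1] : Fin 3 → ℂ) = 1 then 1 else 0) with hm31
  set m32 : ℕ := (if g (![(0:ℂ),1,2] : Fin 3 → ℂ) = 1 then 1 else 0) with hm32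
  set m33 : ℕ := (if g (![(0:ℂ),1,-2] : Fin 3 → ℂ) = 1 then 1 else 0) with hm33
  set m34 : ℕ := (if g (![(0:ℂ),0,1] : Fin 3 → ℂ) = 1 then 1 else 0) with hm34
  have b0 : m0 ≤ 1 := by rw [hm0]; split_ifs <;> norm_num
  have b1 : m1 ≤ 1 := by rw [hm1]; split_ifs <;> norm_num
  have b2 : m2 ≤ 1 := by rw [hm2]; split_ifs <;> norm_num
  have b3 : m3 ≤ 1 := by rw [hm3]; split_ifs <;> norm_num
  have b4 : m4 ≤ 1 := by rw [hm4]; split_ifs <;> norm_num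
  have b5 : m5 ≤ 1 := by rw [hm5]; split_ifs <;> norm_num
  have b6 : m6 ≤ 1 := by rw [hm6]; split_ifs <;> norm_num
  have b7 : m7 ≤ 1 := by rw [hm7]; split_ifs <;> norm_num
  have b8 : m8 ≤ 1 := by rw [hm8]; split_ifs <;> norm_num
  have b9 : m9 ≤ 1 := by rw [hm9]; split_ifs <;> norm_num
  have b10 : m10 ≤ 1 := by rw [hm10]; split_ifs <;> norm_num
  have b11 : m11 ≤ 1 := by rw [hm11]; split_ifs <;> norm_num
  have b12 : m12 ≤ 1 := by rw [hm12]; split_ifs <;> norm_num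
  have b13 : m13 ≤ 1 := by rw [hm13]; split_ifs <;> norm_num
  have b14 : m14 ≤ 1 := by rw [hm14]; split_ifs <;> norm_num
  have b15 : m15 ≤ 1 := by rw [hm15]; split_ifs <;> norm_num
  have b16 : m16 ≤ 1 := by rw [hm16]; split_ifs <;> norm_num
  have b17 : m17 ≤ 1 := by rw [hm17]; split_ifs <;> norm_num
  have b18 : m18 ≤ 1 := by rw [hm18]; split_ifs <;> norm_num
  have b19 : m19 ≤ 1 := by rw [hm19]; split_ifs <;> norm_num
  have b20 : m20 ≤ 1 := by rw [hm20]; split_ifs <;> norm_num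
  have b21 : m21 ≤ 1 := by rw [hm21]; split_ifs <;> norm_num
  have b22 : m22 ≤ 1 := by rw [hm22]; split_ifs <;> norm_num
  have b23 : m23 ≤ 1 := by rw [hm23]; split_ifs <;> norm_num
  have b24 : m24 ≤ 1 := by rw [hm24]; split_ifs <;> norm_num
  have b25 : m25 ≤ 1 := by rw [hm25]; split_ifs <;> norm_num
  have b26 : m26 ≤ 1 := by rw [hm26]; split_ifs <;> norm_num
  have b27 : m27 ≤ 1 := by rw [hm27]; split_ifs <;> norm_num
  have b28 : m28 ≤ 1 := by rw [hm28]; split_ifs <;> norm_num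
  have b29 : m29 ≤ 1 := by rw [hm29]; split_ifs <;> norm_num
  have b30 : m30 ≤ 1 := by rw [hm30]; split_ifs <;> norm_num
  have b31 : m31 ≤ 1 := by rw [hm31]; split_ifs <;> norm_num
  have b32 : m32 ≤ 1 := by rw [hm32]; split_ifs <;> norm_num
  have b33 : m33 ≤ 1 := by rw [hm33]; split_ifs <;> norm_num
  have b34 : m34 ≤ 1 := by rw [hm34]; split_ifs <;> norm_num
  clear_value m0 m1 m2 m3 m4 m5 m6 m7 m8 m9 m10 m11 m12 m13 m14 m15 m16 m17 m18 m19 m20 m21 m22 m23 m24 m25 m26 m27 m28 m29 m30 m31 m32 m33 m34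
  exact arith m0 m1 m2 m3 m4 m5 m6 m7 m8 m9 m10 m11 m12 m13 m14 m15 m16 m17 m18 m19 m20 m21 m22 m23 m24 m25 m26 m27 m28 m29 m30 m31 m32 m33 m34 b0 b1 b2 b3 b4 b5 b6 b7 b8 b9 b10 b11 b12 b13 b14 b15 b16 b17 b18 b19 b20 b21 b22 b23 b24 b25 b26 b27 b28 b29 b30 b31 b32 b33 b34 cp0 cp1 cp2 cp3 cp4 cp5 cp6 cp7 cp8 cp9 cp10 cp11 cp12 cp13 cp14 cp15 ct0 ct1 ct2 ct3 ct4 ct5 ct6 ct7 ct8 ct9 ct10 ct11 ct12 ct13 ct14 ct15 ct16 ct17 ct18 ct19 ct20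

theorem main_aux (n : ℕ) (hn : 3 ≤ n)
    (v : {a : Matrix (Fin n) (Fin n) ℂ // a * aᴴ = aᴴ * a} → ℂ)
    (hone : ∀ h : (1 : Matrix (Fin n) (Fin n) ℂ) * 1ᴴ = 1ᴴ * 1, v ⟨1, h⟩ = 1)
    (hadd : ∀ (a b : Matrix (Fin n) (Fin n) ℂ) (ha : a * aᴴ = aᴴ * a) (hb : b * bᴴ = bᴴ * b),
        a * b = b * a → ∀ h' : (a + b) * (a + b)ᴴ = (a + b)ᴴ * (a + b),
        v ⟨a + b, h'⟩ = v ⟨a, ha⟩ + v ⟨b, hb⟩)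
    (hmul : ∀ (a b : Matrix (Fin n) (Fin n) ℂ) (ha : a * aᴴ = aᴴ * a) (hb : b * bᴴ = bᴴ * b),
        a * b = b * a → ∀ h' : (a * b) * (a * b)ᴴ = (a * b)ᴴ * (a * b),
        v ⟨a * b, h'⟩ = v ⟨a, ha⟩ * v ⟨b, hb⟩) :
    False := by
  classical
  have hermN : ∀ a : Matrix (Fin n) (Fin n) ℂ, aᴴ = a → a * aᴴ = aᴴ * a := fun a ha => by
    rw [ha]
  have vcongr : ∀ (a b : Matrix (Fin n) (Fin n) ℂ) (ha : a * aᴴ = aᴴ * a)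
      (hb : b * bᴴ = bᴴ * b), a = b → v ⟨a, ha⟩ = v ⟨b, hb⟩ := by
    rintro a b ha hb rfl; rfl
  have Vadd : ∀ (a b : Matrix (Fin n) (Fin n) ℂ) (ha : aᴴ = a) (hb : bᴴ = b)
      (hab : (a + b)ᴴ = a + b), a * b = b * a →
      v ⟨a + b, hermN _ hab⟩ = v ⟨a, hermN a ha⟩ + v ⟨b, hermN b hb⟩ :=
    fun a b ha hb hab hc => hadd a b (hermN a ha) (hermN b hb) hc (hermN _ hab)
  have Videm : ∀ (a : Matrix (Fin n) (Fin n) ℂ) (ha : aᴴ = a), a * a = a →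
      v ⟨a, hermN a ha⟩ = 0 ∨ v ⟨a, hermN a ha⟩ = 1 := by
    intro a ha hi
    have h : v ⟨a, hermN a ha⟩ = v ⟨a, hermN a ha⟩ * v ⟨a, hermN a ha⟩ := by
      have h1 := hmul a a (hermN a ha) (hermN a ha) rfl
        (hermN (a * a) (by rw [conjTranspose_mul, ha]))
      have h2 : v ⟨a * a, hermN (a * a) (by rw [conjTranspose_mul, ha])⟩
          = v ⟨a, hermN a ha⟩ := vcongr _ _ _ _ hi
      exact h2.symm.trans h1
    have h3 : v ⟨a, hermN a ha⟩ * (v ⟨a, hermN a ha⟩ - 1) = 0 := by linear_combination -h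
    rcases mul_eq_zero.mp h3 with h4 | h4
    · exact Or.inl h4
    · exact Or.inr (by linear_combination h4)
  -- value of the zero matrix
  have hzherm : (0 : Matrix (Fin n) (Fin n) ℂ)ᴴ = 0 := by simp
  have hv0 : v ⟨0, hermN 0 hzherm⟩ = 0 := by
    have h1 := Vadd 0 0 hzherm hzherm (by simp) rfl
    have h2 : v ⟨(0 : Matrix (Fin n) (Fin n) ℂ) + 0, hermN _ (by simp)⟩
        = v ⟨0, hermN 0 hzherm⟩ := vcongr _ _ _ _ (by simp)
    have h3 : v ⟨0, hermN 0 hzherm⟩ = v ⟨0, hermN 0 hzherm⟩ + v ⟨0, hermN 0 hzherm⟩ :=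
      h2.symm.trans h1
    linear_combination -h3
  -- sum over standard projections
  have VDsum : ∀ S : Finset (Fin n),
      v ⟨∑ a ∈ S, Dm a, hermN _ (Dsum_herm S)⟩ = ∑ a ∈ S, v ⟨Dm a, hermN _ (Dm_herm a)⟩ := by
    intro S
    induction S using Finset.induction_on with
    | empty =>
      have h2 : v ⟨∑ a ∈ (∅ : Finset (Fin n)), Dm a, hermN _ (Dsum_herm ∅)⟩
          = v ⟨0, hermN 0 hzherm⟩ := vcongr _ _ _ _ (by simp)
      rw [h2, hv0, Finset.sum_empty]
    | @insert a S ha ih =>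
      have hsplit : (∑ b ∈ insert a S, Dm b) = Dm a + ∑ b ∈ S, Dm b :=
        Finset.sum_insert ha
      have hcomm : Dm a * (∑ b ∈ S, Dm b) = (∑ b ∈ S, Dm b) * Dm a := by
        rw [Finset.mul_sum, Finset.sum_mul]
        exact Finset.sum_congr rfl (fun b _ => Dm_mul_Dm a b)
      have h1 := Vadd (Dm a) (∑ b ∈ S, Dm b) (Dm_herm a) (Dsum_herm S)
        (by rw [conjTranspose_add, Dm_herm, Dsum_herm]) hcomm
      have h2 : v ⟨∑ b ∈ insert a S, Dm b, hermN _ (Dsum_herm _)⟩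
          = v ⟨Dm a + ∑ b ∈ S, Dm b, hermN _ (by rw [conjTranspose_add, Dm_herm, Dsum_herm])⟩ :=
        vcongr _ _ _ _ hsplit
      rw [h2, h1, ih, Finset.sum_insert ha]
  -- v(1) = 1 gives existence of k with value one
  have honeherm : (1 : Matrix (Fin n) (Fin n) ℂ)ᴴ = 1 := by simp
  have hv1 : v ⟨1, hermN 1 honeherm⟩ = 1 := hone _
  have hex : ∃ k : Fin n, v ⟨Dm k, hermN _ (Dm_herm k)⟩ = 1 := by
    by_contra hno
    push_neg at hno
    have hall : ∀ a ∈ Finset.univ, v ⟨Dm a, hermN _ (Dm_herm a)⟩ = 0 := fun a _ =>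
      (Videm (Dm a) (Dm_herm a) (Dm_idem a)).resolve_right (hno a)
    have hs : (∑ a : Fin n, v ⟨Dm a, hermN _ (Dm_herm a)⟩) = 0 := Finset.sum_eq_zero hall
    have h2 : v ⟨∑ a : Fin n, Dm a, hermN _ (Dsum_herm _)⟩ = v ⟨1, hermN 1 honeherm⟩ :=
      vcongr _ _ _ _ Dsum_univ
    have : (1 : ℂ) = 0 := by
      rw [← hv1, ← h2, VDsum Finset.univ, hs]
    exact one_ne_zero this
  obtain ⟨k, hk⟩ := hex
  -- pick two other indices
  have h0n : (0 : ℕ) < n := by omega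
  have h1n : (1 : ℕ) < n := by omega
  have h2n : (2 : ℕ) < n := by omega
  set a0 : Fin n := ⟨0, h0n⟩ with ha0
  set a1 : Fin n := ⟨1, h1n⟩ with ha1
  set a2 : Fin n := ⟨2, h2n⟩ with ha2
  set i : Fin n := if k = a0 then a1 else a0 with hi
  set j : Fin n := if k = a2 then a1 else a2 with hj
  have hki : k ≠ i := by
    rw [hi]; split_ifs with h
    · rw [h]; exact Fin.ne_of_val_ne (by norm_num)
    · exact h
  have hkj : k ≠ j := by
    rw [hj]; split_ifs with h
    · rw [h]; exact Fin.ne_of_val_ne (by norm_num)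
    · exact h
  have hij : i ≠ j := by
    rw [hi, hj]; split_ifs with h1 h2
    · exact absurd (h1.symm.trans h2) (Fin.ne_of_val_ne (by norm_num))
    · exact Fin.ne_of_val_ne (by norm_num)
    · exact Fin.ne_of_val_ne (by norm_num)
    · exact Fin.ne_of_val_ne (by norm_num)
  -- the projection onto the three coordinates has value 1
  have hEherm : (Dm k + Dm i + Dm j)ᴴ = Dm k + Dm i + Dm j := by
    rw [conjTranspose_add, conjTranspose_add, Dm_herm, Dm_herm, Dm_herm]
  have hKIherm : (Dm k + Dm i)ᴴ = Dm k + Dm i := by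
    rw [conjTranspose_add, Dm_herm, Dm_herm]
  have hEsum : (Dm k + Dm i + Dm j) = ∑ a ∈ ({k, i, j} : Finset (Fin n)), Dm a := by
    rw [Finset.sum_insert (by simp [hki, hkj]), Finset.sum_insert (by simp [hij]),
      Finset.sum_singleton, add_assoc]
  have hEidem : (Dm k + Dm i + Dm j) * (Dm k + Dm i + Dm j) = Dm k + Dm i + Dm j := by
    rw [hEsum]; exact Dsum_idem _
  have hVEmem := Videm _ hEherm hEidem
  have hVKI := Vadd (Dm k) (Dm i) (Dm_herm k) (Dm_herm i) hKIherm (Dm_mul_Dm k i)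
  have hVE : v ⟨Dm k + Dm i + Dm j, hermN _ hEherm⟩
      = v ⟨Dm k, hermN _ (Dm_herm k)⟩ + v ⟨Dm i, hermN _ (Dm_herm i)⟩
        + v ⟨Dm j, hermN _ (Dm_herm j)⟩ := by
    have hcomm : (Dm k + Dm i) * Dm j = Dm j * (Dm k + Dm i) := by
      rw [add_mul, mul_add, Dm_mul_Dm k j, Dm_mul_Dm i j]
    have h1 := Vadd (Dm k + Dm i) (Dm j) hKIherm (Dm_herm j) hEherm hcomm
    rw [h1, hVKI]
  have hVE1 : v ⟨Dm k + Dm i + Dm j, hermN _ hEherm⟩ = 1 := by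
    have hmi := Videm (Dm i) (Dm_herm i) (Dm_idem i)
    have hmj := Videm (Dm j) (Dm_herm j) (Dm_idem j)
    rw [hk] at hVE
    rcases hmi with h2 | h2 <;> rcases hmj with h3 | h3 <;> rw [h2, h3] at hVE <;>
      rcases hVEmem with h4 | h4 <;> rw [h4] at hVE <;>
        first
          | exact h4
          | (exfalso; norm_num at hVE)
  -- the valuation on embedded rank-one projections
  have oherm : ∀ w : Fin 3 → ℂ, (outer (emb k i j w))ᴴ = outer (emb k i j w) :=
    fun w => outer_herm _
  have oorth : ∀ w w' : Fin 3 → ℂ, star w ⬝ᵥ w' = 0 →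
      outer (emb k i j w) * outer (emb k i j w') = 0 := fun w w' h =>
    outer_orth _ _ (by rw [emb_dot k i j hki hkj hij]; exact h)
  have gmem : ∀ w : Fin 3 → ℂ, w ≠ 0 →
      v ⟨outer (emb k i j w), hermN _ (oherm w)⟩ = 0 ∨
        v ⟨outer (emb k i j w), hermN _ (oherm w)⟩ = 1 := fun w hw =>
    Videm _ (oherm w) (outer_idem _ (emb_ne k i j hki hkj hij w hw))
  have gpair : ∀ x y : Fin 3 → ℂ, x ≠ 0 → y ≠ 0 → star x ⬝ᵥ y = 0 →
      ¬(v ⟨outer (emb k i j x), hermN _ (oherm x)⟩ = 1 ∧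
        v ⟨outer (emb k i j y), hermN _ (oherm y)⟩ = 1) := by
    intro x y hx hy hxy hcon
    obtain ⟨hgx, hgy⟩ := hcon
    have hAB := oorth x y hxy
    have hBA := oorth y x (dot_flip x y hxy)
    have hherm : (outer (emb k i j x) + outer (emb k i j y))ᴴ
        = outer (emb k i j x) + outer (emb k i j y) := by
      rw [conjTranspose_add, oherm, oherm]
    have h1 := Vadd _ _ (oherm x) (oherm y) hherm (by rw [hAB, hBA])
    have hqidem := add_idem _ _ (outer_idem _ (emb_ne k i j hki hkj hij x hx))
      (outer_idem _ (emb_ne k i j hki hkj hij y hy)) hAB hBA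
    have hqmem := Videm _ hherm hqidem
    rw [h1, hgx, hgy] at hqmem
    rcases hqmem with h | h <;> norm_num at h
  have gtrip : ∀ x y z : Fin 3 → ℂ, x ≠ 0 → y ≠ 0 → z ≠ 0 →
      star x ⬝ᵥ y = 0 → star x ⬝ᵥ z = 0 → star y ⬝ᵥ z = 0 →
      v ⟨outer (emb k i j x), hermN _ (oherm x)⟩ +
        v ⟨outer (emb k i j y), hermN _ (oherm y)⟩ +
        v ⟨outer (emb k i j z), hermN _ (oherm z)⟩ = 1 := by
    intro x y z hx hy hz hxy hxz hyz
    have hone3 := sum3 x y z hx hy hz hxy hxz hyz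
    have hmat := emb3 k i j hki hkj hij x y z hone3
    have hAB := oorth x y hxy
    have hBA := oorth y x (dot_flip x y hxy)
    have hAC := oorth x z hxz
    have hCA := oorth z x (dot_flip x z hxz)
    have hBC := oorth y z hyz
    have hCB := oorth z y (dot_flip y z hyz)
    have h12herm : (outer (emb k i j x) + outer (emb k i j y))ᴴ
        = outer (emb k i j x) + outer (emb k i j y) := by
      rw [conjTranspose_add, oherm, oherm]
    have h123herm : (outer (emb k i j x) + outer (emb k i j y) + outer (emb k i j z))ᴴ
        = outer (emb k i j x) + outer (emb k i j y) + outer (emb k i j z) := by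
      rw [conjTranspose_add, h12herm, oherm]
    have h1 := Vadd _ _ (oherm x) (oherm y) h12herm (by rw [hAB, hBA])
    have hcomm2 : (outer (emb k i j x) + outer (emb k i j y)) * outer (emb k i j z)
        = outer (emb k i j z) * (outer (emb k i j x) + outer (emb k i j y)) := by
      rw [add_mul, mul_add, hAC, hCA, hBC, hCB]
    have h2 := Vadd _ _ h12herm (oherm z) h123herm hcomm2
    have h3 : v ⟨outer (emb k i j x) + outer (emb k i j y) + outer (emb k i j z),
        hermN _ h123herm⟩ = v ⟨Dm k + Dm i + Dm j, hermN _ hEherm⟩ :=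
      vcongr _ _ _ _ hmat
    rw [← h1, ← h2, h3, hVE1]
  exact KS_core
    (fun w => v ⟨outer (emb k i j w), hermN _ (oherm w)⟩)
    gmem gpair gtrip




end KSproof

open Matrix

/-- The Kochen–Specker theorem for partial C*-algebras: for `n ≥ 3` there is no morphism of
partial C*-algebras from the normal matrices `N(M_n(ℂ))` to `ℂ`, i.e. no function on normal
matrices restricting to a character on every commutative C*-subalgebra. -/
theorem kochenSpecker_normal_valuation (n : ℕ) (hn : 3 ≤ n) :
    ¬ ∃ v : {a : Matrix (Fin n) (Fin n) ℂ // a * aᴴ = aᴴ * a} → ℂ,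
      (∀ h : (1 : Matrix (Fin n) (Fin n) ℂ) * 1ᴴ = 1ᴴ * 1, v ⟨1, h⟩ = 1) ∧
      (∀ (z : ℂ) (a : Matrix (Fin n) (Fin n) ℂ) (ha : a * aᴴ = aᴴ * a)
        (h' : (z • a) * (z • a)ᴴ = (z • a)ᴴ * (z • a)), v ⟨z • a, h'⟩ = z * v ⟨a, ha⟩) ∧
      (∀ (a : Matrix (Fin n) (Fin n) ℂ) (ha : a * aᴴ = aᴴ * a)
        (h' : aᴴ * (aᴴ)ᴴ = (aᴴ)ᴴ * aᴴ), v ⟨aᴴ, h'⟩ = starRingEnd ℂ (v ⟨a, ha⟩)) ∧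
      (∀ (a b : Matrix (Fin n) (Fin n) ℂ) (ha : a * aᴴ = aᴴ * a) (hb : b * bᴴ = bᴴ * b),
        a * b = b * a → ∀ h' : (a + b) * (a + b)ᴴ = (a + b)ᴴ * (a + b),
        v ⟨a + b, h'⟩ = v ⟨a, ha⟩ + v ⟨b, hb⟩) ∧
      (∀ (a b : Matrix (Fin n) (Fin n) ℂ) (ha : a * aᴴ = aᴴ * a) (hb : b * bᴴ = bᴴ * b),
        a * b = b * a → ∀ h' : (a * b) * (a * b)ᴴ = (a * b)ᴴ * (a * b),
        v ⟨a * b, h'⟩ = v ⟨a, ha⟩ * v ⟨b, hb⟩) := by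
  rintro ⟨v, h1, _, _, hadd, hmul⟩
  exact KSproof.main_aux n hn v h1 hadd hmul
end

section
/- Suppose given categories 𝐀, 𝐁, 𝐂, 𝐃, functors F : 𝐀 ⥤ 𝐁, H : 𝐀 ⥤ 𝐂, K : 𝐁 ⥤ 𝐃, G : 𝐂 ⥤ 𝐃, and a natural isomorphism F ⋙ K ≅ H ⋙ G. Assume: K preserves limits of shape J for a small category J; K preserves initial objects; and initial objects in 𝐃 are strict (every morphism into an initial object is an isomorphism). Let X be an object of 𝐂 that is obstructed, i.e., there is a diagram 𝒜 : J ⥤ 𝐀, a cone over 𝒜 ⋙ H with apex X, and a limit cone over 𝒜 ⋙ F whose apex is an initial object of 𝐁. Then G(X) is an initial object of 𝐃. -/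
open CategoryTheory CategoryTheory.Limits

/-- The obstruction theorem: given a commuting square (up to natural isomorphism) of functors
`F : A ⥤ B`, `H : A ⥤ C`, `K : B ⥤ D`, `G : C ⥤ D` such that `K` preserves limits of shape
`J` and initial objects, and initial objects in `D` are strict, then `G` sends any obstructed
object `X` of `C` (one admitting a cone over `H ∘ 𝒜` for a diagram `𝒜` in `A` whose limit
along `F` is initial in `B`) to an initial object of `D`. -/
theorem obstruction_theorem {A : Type*} {B : Type*} {C : Type*} {D : Type*}
    [Category A] [Category B] [Category C] [Category D]
    (F : A ⥤ B) (H : A ⥤ C) (K : B ⥤ D) (G : C ⥤ D)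
    (sq : F ⋙ K ≅ H ⋙ G)
    {J : Type*} [SmallCategory J]
    [PreservesLimitsOfShape J K]
    (hKinit : ∀ b : B, IsInitial b → Nonempty (IsInitial (K.obj b)))
    (hstrict : ∀ d : D, IsInitial d → ∀ (d' : D) (f : d' ⟶ d), IsIso f)
    (X : C) (𝒜 : J ⥤ A)
    (c : Cone (𝒜 ⋙ H)) (hc : c.pt = X)
    (d : Cone (𝒜 ⋙ F)) (hd : IsLimit d) (hinit : IsInitial d.pt) :
    Nonempty (IsInitial (G.obj X)) := by
  subst hc
  -- K preserves the limit cone d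
  have hd' : IsLimit (K.mapCone d) := isLimitOfPreserves K hd
  -- iso of diagrams
  let e : (𝒜 ⋙ H) ⋙ G ≅ (𝒜 ⋙ F) ⋙ K :=
    (Functor.associator 𝒜 H G).symm ≪≫ Functor.isoWhiskerLeft 𝒜 sq.symm ≪≫ Functor.associator 𝒜 F K
  -- turn G.mapCone c into a cone over (𝒜 ⋙ F) ⋙ K
  let c' : Cone ((𝒜 ⋙ F) ⋙ K) := (Cones.postcompose e.hom).obj (G.mapCone c)
  let f : G.obj c.pt ⟶ K.obj d.pt := hd'.lift c'
  obtain ⟨hK⟩ := hKinit d.pt hinit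
  have : IsIso f := hstrict _ hK _ f
  exact ⟨hK.ofIso (asIso f).symm⟩
end

section
/- Let n ≥ 3 and let G : RingCatᵒᵖ ⥤ LocallyRingedSpace be a functor such that the composite of the inclusion (CommRingCat ⥤ RingCat)ᵒᵖ with G is naturally isomorphic to the functor Spec : CommRingCatᵒᵖ ⥤ LocallyRingedSpace sending a commutative ring to its spectrum as a locally ringed space. Then the underlying topological space of G(M_n(ℂ)) is empty. -/
open CategoryTheory AlgebraicGeometry Opposite Matrix

namespace NoGoCore
variable {n : ℕ}

/-- rank one (when `w ⬝ᵥ v = 1`) idempotent matrix -/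
def E (v w : Fin n → ℂ) : Matrix (Fin n) (Fin n) ℂ := vecMulVec v w

lemma E_mul_E (v w v' w' : Fin n → ℂ) : E v w * E v' w' = (w ⬝ᵥ v') • E v w' := by
  ext i j
  simp only [E, Matrix.mul_apply, vecMulVec_apply, Matrix.smul_apply, dotProduct,
    smul_eq_mul, Finset.sum_mul, Finset.mul_sum]
  apply Finset.sum_congr rfl
  intros; ring

lemma E_idem {v w : Fin n → ℂ} (h : w ⬝ᵥ v = 1) : E v w * E v w = E v w := by
  rw [E_mul_E, h, one_smul]

lemma E_sub_right (v w w' : Fin n → ℂ) : E v (w - w') = E v w - E v w' := by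
  ext i j; simp [E, vecMulVec_apply, mul_sub]

lemma compl2_idem {a b : Matrix (Fin n) (Fin n) ℂ} (ha : a * a = a) (hb : b * b = b)
    (hab : a * b = 0) (hba : b * a = 0) :
    (1 - a - b) * (1 - a - b) = 1 - a - b := by
  simp only [sub_mul, mul_sub, one_mul, mul_one, ha, hb, hab, hba]
  abel

lemma dual_exists {k : ℕ} (u : Fin k → (Fin n → ℂ)) (hu : LinearIndependent ℂ u)
    (b : Fin k → ℂ) : ∃ z : Fin n → ℂ, ∀ i, u i ⬝ᵥ z = b i := by
  classical
  let B : Module.Basis (Fin k) ℂ (Submodule.span ℂ (Set.range u)) := Module.Basis.span hu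
  obtain ⟨g, hg⟩ := LinearMap.exists_extend (Module.Basis.constr B ℂ b)
  refine ⟨fun j => g (Pi.single j (1:ℂ)), fun i => ?_⟩
  have hy : u i = ∑ j, u i j • (Pi.single j (1:ℂ) : Fin n → ℂ) := by
    funext l
    rw [Finset.sum_apply]
    simp [Pi.single_apply, mul_ite]
  have h1 : u i ⬝ᵥ (fun j => g (Pi.single j (1:ℂ))) = g (u i) := by
    conv_rhs => rw [hy]
    rw [map_sum]
    simp [dotProduct, smul_eq_mul]
  have h2 : g (u i) = b i := by
    have : (u i : Fin n → ℂ) = ((B i : Submodule.span ℂ (Set.range u)) : Fin n → ℂ) := by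
      rw [Module.Basis.span_apply]
    rw [this]
    have := congrArg (fun (t : _ →ₗ[ℂ] ℂ) => t (B i)) hg
    simp only [LinearMap.comp_apply, Submodule.subtype_apply] at this
    rw [this, Module.Basis.constr_basis]
  rw [h1, h2]

lemma kernel_exists (hn : 3 ≤ n) (w w' : Fin n → ℂ) :
    ∃ p : Fin n → ℂ, p ≠ 0 ∧ w ⬝ᵥ p = 0 ∧ w' ⬝ᵥ p = 0 := by
  classical
  let dl : (Fin n → ℂ) → ((Fin n → ℂ) →ₗ[ℂ] ℂ) := fun c =>
    { toFun := fun x => c ⬝ᵥ x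
      map_add' := fun a b => dotProduct_add c a b
      map_smul' := fun r a => by simp [dotProduct_smul] }
  let T : (Fin n → ℂ) →ₗ[ℂ] (Fin 2 → ℂ) := LinearMap.pi ![dl w, dl w']
  have hk : LinearMap.ker T ≠ ⊥ := by
    apply LinearMap.ker_ne_bot_of_finrank_lt
    simp only [Module.finrank_pi]
    simpa using by omega
  obtain ⟨p, hp, hp0⟩ := Submodule.ne_bot_iff _ |>.mp hk
  have h0 := congrFun (LinearMap.mem_ker.mp hp) 0
  have h1 := congrFun (LinearMap.mem_ker.mp hp) 1
  simp [T, LinearMap.pi_apply, dl] at h0 h1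
  exact ⟨p, hp0, h0, h1⟩


section Core
variable (f : Matrix (Fin n) (Fin n) ℂ → Prop)
variable (hpair : ∀ a b : Matrix (Fin n) (Fin n) ℂ,
    a * a = a → b * b = b → a * b = 0 → b * a = 0 → f a → f b → False)
variable (hor3 : ∀ a b : Matrix (Fin n) (Fin n) ℂ,
    a * a = a → b * b = b → a * b = 0 → b * a = 0 → f a ∨ f b ∨ f (1 - a - b))


lemma indep3t (a b c x y z : Fin n → ℂ)
    (hxa : a ⬝ᵥ x = 1) (hxb : b ⬝ᵥ x = 0) (hxc : c ⬝ᵥ x = 0)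
    (hyb : b ⬝ᵥ y = 1) (hyc : c ⬝ᵥ y = 0) (hzc : c ⬝ᵥ z = 1) :
    LinearIndependent ℂ ![a, b, c] := by
  rw [Fintype.linearIndependent_iff]
  intro g hg
  simp only [Fin.sum_univ_three, Matrix.cons_val_zero, Matrix.cons_val_one, Matrix.head_cons,
    Matrix.cons_val_two, Matrix.tail_cons] at hg
  have dx := congrArg (fun t => t ⬝ᵥ x) hg
  have dy := congrArg (fun t => t ⬝ᵥ y) hg
  have dz := congrArg (fun t => t ⬝ᵥ z) hg
  simp only [add_dotProduct, smul_dotProduct, smul_eq_mul, zero_dotProduct,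
    hxa, hxb, hxc, hyb, hyc, hzc, mul_one, mul_zero, add_zero, zero_add] at dx dy dz
  have h0 : g 0 = 0 := by simpa using dx
  have h1 : g 1 = 0 := by simpa [h0] using dy
  have h2 : g 2 = 0 := by simpa [h0, h1] using dz
  intro i; fin_cases i <;> assumption

lemma indep3c (a b c x y : Fin n → ℂ) (hc : c ≠ 0)
    (hxa : a ⬝ᵥ x = 1) (hxb : b ⬝ᵥ x = 0) (hxc : c ⬝ᵥ x = 0)
    (hyb : b ⬝ᵥ y = 1) (hyc : c ⬝ᵥ y = 0) :
    LinearIndependent ℂ ![a, b, c] := by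
  rw [Fintype.linearIndependent_iff]
  intro g hg
  simp only [Fin.sum_univ_three, Matrix.cons_val_zero, Matrix.cons_val_one, Matrix.head_cons,
    Matrix.cons_val_two, Matrix.tail_cons] at hg
  have dx := congrArg (fun t => t ⬝ᵥ x) hg
  have dy := congrArg (fun t => t ⬝ᵥ y) hg
  simp only [add_dotProduct, smul_dotProduct, smul_eq_mul, zero_dotProduct,
    hxa, hxb, hxc, hyb, hyc, mul_one, mul_zero, add_zero, zero_add] at dx dy
  have h0 : g 0 = 0 := dx
  rw [h0, zero_mul, zero_add] at dy
  have h1 : g 1 = 0 := dy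
  rw [h0, h1, zero_smul, zero_smul, zero_add, zero_add] at hg
  have h2 : g 2 = 0 := by
    rcases smul_eq_zero.mp hg with h | h
    · exact h
    · exact absurd h hc
  intro i; fin_cases i <;> assumption

include hpair hor3 in
lemma L1 (v w w' m : Fin n → ℂ) (hv : w ⬝ᵥ v = 1) (hv' : w' ⬝ᵥ v = 1)
    (h1 : f (E v w)) (h0 : ¬ f (E v w'))
    (hm0 : w' ⬝ᵥ m = 0) (hm1 : w ⬝ᵥ m = 1) : f (E m (w - w')) := by
  have hzm : (w - w') ⬝ᵥ m = 1 := by rw [sub_dotProduct, hm0, hm1, sub_zero]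
  have hzv : (w - w') ⬝ᵥ v = 0 := by rw [sub_dotProduct, hv, hv', sub_self]
  have ha : E v w' * E v w' = E v w' := E_idem hv'
  have hb : E m (w - w') * E m (w - w') = E m (w - w') := E_idem hzm
  have hab : E v w' * E m (w - w') = 0 := by rw [E_mul_E, hm0, zero_smul]
  have hba : E m (w - w') * E v w' = 0 := by rw [E_mul_E, hzv, zero_smul]
  rcases hor3 _ _ ha hb hab hba with h | h | h
  · exact absurd h h0
  · exact h
  · exfalso
    refine hpair (E v w) (1 - E v w' - E m (w - w')) (E_idem hv)
      (compl2_idem ha hb hab hba) ?_ ?_ h1 h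
    · rw [mul_sub, mul_sub, mul_one, E_mul_E, E_mul_E, hv, hm1, one_smul, one_smul,
        E_sub_right]
      abel
    · rw [sub_mul, sub_mul, one_mul, E_mul_E, E_mul_E, hv', hzv, one_smul, zero_smul]
      abel

include hpair hor3 in
lemma case1 (hn : 3 ≤ n) (v w w' : Fin n → ℂ) (hv : w ⬝ᵥ v = 1) (hv' : w' ⬝ᵥ v = 1)
    (h1 : f (E v w)) (h0 : ¬ f (E v w')) : False := by
  classical
  have hne : w ≠ w' := by rintro rfl; exact h0 h1
  obtain ⟨p, hp0, hwp, hw'p⟩ := kernel_exists hn w w'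
  -- the pair (w', w) is linearly independent
  have hindww' : LinearIndependent ℂ ![w', w] := by
    rw [Fintype.linearIndependent_iff]
    intro g hg
    simp only [Fin.sum_univ_two, Matrix.cons_val_zero, Matrix.cons_val_one, Matrix.head_cons] at hg
    have hd := congrArg (fun x => x ⬝ᵥ v) hg
    simp only [add_dotProduct, smul_dotProduct, smul_eq_mul, hv, hv', zero_dotProduct,
      mul_one] at hd
    -- hd : g 0 + g 1 = 0
    have hg1 : g 1 = - g 0 := by linear_combination hd
    have hsub : g 0 • (w' - w) = 0 := by
      calc g 0 • (w' - w) = g 0 • w' + g 1 • w := by rw [smul_sub, hg1, neg_smul]; abel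
      _ = 0 := hg
    have h00 : g 0 = 0 := by
      rcases smul_eq_zero.mp hsub with h | h
      · exact h
      · exact absurd (sub_eq_zero.mp h).symm hne
    have h11 : g 1 = 0 := by rw [h00, zero_add] at hd; exact hd
    intro i; fin_cases i <;> assumption
  obtain ⟨m₁, hm₁⟩ := dual_exists ![w', w] hindww' ![0, 1]
  have hw'm1 : w' ⬝ᵥ m₁ = 0 := by simpa using hm₁ 0
  have hwm1 : w ⬝ᵥ m₁ = 1 := by simpa using hm₁ 1
  set m₂ := m₁ + p with hm₂def
  have hw'm2 : w' ⬝ᵥ m₂ = 0 := by rw [hm₂def, dotProduct_add, hw'm1, hw'p, add_zero]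
  have hwm2 : w ⬝ᵥ m₂ = 1 := by rw [hm₂def, dotProduct_add, hwm1, hwp, add_zero]
  have hindvmp : LinearIndependent ℂ ![v, m₁, p] :=
    indep3c v m₁ p w' w hp0
      (by rw [dotProduct_comm]; exact hv') (by rw [dotProduct_comm]; exact hw'm1)
      (by rw [dotProduct_comm]; exact hw'p) (by rw [dotProduct_comm]; exact hwm1)
      (by rw [dotProduct_comm]; exact hwp)
  obtain ⟨q, hq⟩ := dual_exists ![v, m₁, p] hindvmp ![0, 0, 1]
  have hqv : q ⬝ᵥ v = 0 := by rw [dotProduct_comm]; simpa using hq 0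
  have hqm1 : q ⬝ᵥ m₁ = 0 := by rw [dotProduct_comm]; simpa using hq 1
  have hqp : q ⬝ᵥ p = 1 := by rw [dotProduct_comm]; simpa using hq 2
  set z₁ := w - w' - q with hz₁def
  have hz1v : z₁ ⬝ᵥ v = 0 := by
    rw [hz₁def, sub_dotProduct, sub_dotProduct, hv, hv', hqv]; ring
  have hz1m1 : z₁ ⬝ᵥ m₁ = 1 := by
    rw [hz₁def, sub_dotProduct, sub_dotProduct, hwm1, hw'm1, hqm1]; ring
  have hqm2 : q ⬝ᵥ m₂ = 1 := by rw [hm₂def, dotProduct_add, hqm1, hqp, zero_add]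
  have hz1m2 : z₁ ⬝ᵥ m₂ = 0 := by
    rw [hz₁def, sub_dotProduct, sub_dotProduct, hwm2, hw'm2, hqm2]; ring
  have hz1p : z₁ ⬝ᵥ p = -1 := by
    rw [hz₁def, sub_dotProduct, sub_dotProduct, hwp, hw'p, hqp]; ring
  have hfm1 : f (E m₁ (w - w')) := L1 f hpair hor3 v w w' m₁ hv hv' h1 h0 hw'm1 hwm1
  have hfm2 : f (E m₂ (w - w')) := L1 f hpair hor3 v w w' m₂ hv hv' h1 h0 hw'm2 hwm2
  have hwwm1 : (w - w') ⬝ᵥ m₁ = 1 := by rw [sub_dotProduct, hwm1, hw'm1]; ring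
  have hwwm2 : (w - w') ⬝ᵥ m₂ = 1 := by rw [sub_dotProduct, hwm2, hw'm2]; ring
  by_cases hA : f (E m₁ z₁)
  · -- then ¬ f (E m₂ q)
    have hB : ¬ f (E m₂ q) := fun hB =>
      hpair (E m₁ z₁) (E m₂ q) (E_idem hz1m1) (E_idem hqm2)
        (by rw [E_mul_E, hz1m2, zero_smul]) (by rw [E_mul_E, hqm1, zero_smul]) hA hB
    -- x with w⬝x = 0, q⬝x = 0, w'⬝x = -1
    have hind : LinearIndependent ℂ ![w, q, w'] :=
      indep3t w q w' m₁ p v hwm1 hqm1 hw'm1 hqp hw'p hv'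
    obtain ⟨x, hx⟩ := dual_exists ![w, q, w'] hind ![0, 0, -1]
    have hwx : w ⬝ᵥ x = 0 := by simpa using hx 0
    have hqx : q ⬝ᵥ x = 0 := by simpa using hx 1
    have hw'x : w' ⬝ᵥ x = -1 := by simpa using hx 2
    have hwwx : (w - w') ⬝ᵥ x = 1 := by rw [sub_dotProduct, hwx, hw'x]; ring
    have hfx : f (E x ((w - w') - q)) :=
      L1 f hpair hor3 m₂ (w - w') q x hwwm2 hqm2 hfm2 hB hqx hwwx
    have hqz : (w - w') - q = z₁ := by rw [hz₁def]
    rw [hqz] at hfx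
    have hz1x : z₁ ⬝ᵥ x = 1 := by
      rw [hz₁def, sub_dotProduct, sub_dotProduct, hwx, hw'x, hqx]; ring
    exact hpair (E v w) (E x z₁) (E_idem hv) (E_idem hz1x)
      (by rw [E_mul_E, hwx, zero_smul]) (by rw [E_mul_E, hz1v, zero_smul]) h1 hfx
  · -- ¬ f (E m₁ z₁)
    have hind : LinearIndependent ℂ ![w, z₁, w'] := by
      refine indep3t w z₁ w' (m₁ + p) (-p) v ?_ ?_ ?_ ?_ ?_ ?_
      · rw [dotProduct_add, hwm1, hwp, add_zero]
      · rw [dotProduct_add, hz1m1, hz1p]; ring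
      · rw [dotProduct_add, hw'm1, hw'p, add_zero]
      · rw [dotProduct_neg, hz1p]; ring
      · rw [dotProduct_neg, hw'p]; ring
      · exact hv'
    obtain ⟨x, hx⟩ := dual_exists ![w, z₁, w'] hind ![0, 0, -1]
    have hwx : w ⬝ᵥ x = 0 := by simpa using hx 0
    have hz1x : z₁ ⬝ᵥ x = 0 := by simpa using hx 1
    have hw'x : w' ⬝ᵥ x = -1 := by simpa using hx 2
    have hwwx : (w - w') ⬝ᵥ x = 1 := by rw [sub_dotProduct, hwx, hw'x]; ring
    have hfx : f (E x ((w - w') - z₁)) :=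
      L1 f hpair hor3 m₁ (w - w') z₁ x hwwm1 hz1m1 hfm1 hA hz1x hwwx
    have hqz : (w - w') - z₁ = q := by rw [hz₁def]; abel
    rw [hqz] at hfx
    have hqx : q ⬝ᵥ x = 1 := by
      have : q = (w - w') - z₁ := hqz.symm
      rw [this, sub_dotProduct, hwwx, hz1x]; ring
    exact hpair (E v w) (E x q) (E_idem hv) (E_idem hqx)
      (by rw [E_mul_E, hwx, zero_smul]) (by rw [E_mul_E, hqv, zero_smul]) h1 hfx

include hpair hor3 in
lemma case2 (hn : 3 ≤ n)
    (hker : ∀ v w w' : Fin n → ℂ, w ⬝ᵥ v = 1 → w' ⬝ᵥ v = 1 → f (E v w) → f (E v w'))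
    (v w : Fin n → ℂ) (hv : w ⬝ᵥ v = 1) : ¬ f (E v w) := by
  intro hfvw
  obtain ⟨u, hu0, hwu, -⟩ := kernel_exists hn w w
  -- (v, u) independent, dual pair (a, b)
  have hind : LinearIndependent ℂ ![v, u] := by
    rw [Fintype.linearIndependent_iff]
    intro g hg
    simp only [Fin.sum_univ_two, Matrix.cons_val_zero, Matrix.cons_val_one,
      Matrix.head_cons] at hg
    have dx := congrArg (fun t => w ⬝ᵥ t) hg
    simp only [dotProduct_add, dotProduct_smul, smul_eq_mul, dotProduct_zero, hv, hwu,
      mul_one, mul_zero, add_zero] at dx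
    rw [dx, zero_smul, zero_add] at hg
    have h1 : g 1 = 0 := by
      rcases smul_eq_zero.mp hg with h | h
      · exact h
      · exact absurd h hu0
    intro i; fin_cases i <;> assumption
  obtain ⟨a, ha⟩ := dual_exists ![v, u] hind ![1, 0]
  obtain ⟨b, hb⟩ := dual_exists ![v, u] hind ![0, 1]
  have hav : a ⬝ᵥ v = 1 := by have := ha 0; rw [dotProduct_comm]; simpa using this
  have hau : a ⬝ᵥ u = 0 := by have := ha 1; rw [dotProduct_comm]; simpa using this
  have hbv : b ⬝ᵥ v = 0 := by have := hb 0; rw [dotProduct_comm]; simpa using this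
  have hbu : b ⬝ᵥ u = 1 := by have := hb 1; rw [dotProduct_comm]; simpa using this
  -- derived dot facts
  have havu : a ⬝ᵥ (v + u) = 1 := by rw [dotProduct_add, hav, hau, add_zero]
  have hbvu : b ⬝ᵥ (v + u) = 1 := by rw [dotProduct_add, hbv, hbu, zero_add]
  have habv : (a - b) ⬝ᵥ v = 1 := by rw [sub_dotProduct, hav, hbv, sub_zero]
  have habvu : (a - b) ⬝ᵥ (v + u) = 0 := by rw [sub_dotProduct, havu, hbvu, sub_self]
  have hbau : (b - a) ⬝ᵥ u = 1 := by rw [sub_dotProduct, hbu, hau, sub_zero]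
  have hbavu : (b - a) ⬝ᵥ (v + u) = 0 := by rw [sub_dotProduct, hbvu, havu, sub_self]
  -- f holds on E v a and E v (a - b)
  have hfva : f (E v a) := hker v w a hv hav hfvw
  have hfvab : f (E v (a - b)) := hker v w (a - b) hv habv hfvw
  -- ¬ f (E u b)
  have hfub : ¬ f (E u b) := fun h =>
    hpair (E v a) (E u b) (E_idem hav) (E_idem hbu)
      (by rw [E_mul_E, hau, zero_smul]) (by rw [E_mul_E, hbv, zero_smul]) hfva h
  -- ¬ f (E (v+u) b)
  have hfvub : ¬ f (E (v + u) b) := fun h =>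
    hpair (E v (a - b)) (E (v + u) b) (E_idem habv) (E_idem hbvu)
      (by rw [E_mul_E, habvu, zero_smul]) (by rw [E_mul_E, hbv, zero_smul]) hfvab h
  -- hence ¬ f (E u (b-a)) and ¬ f (E (v+u) a)
  have hfuba : ¬ f (E u (b - a)) := fun h => hfub (hker u (b - a) b hbau hbu h)
  have hfvua : ¬ f (E (v + u) a) := fun h => hfvub (hker (v + u) a b havu hbvu h)
  -- r := 1 - E v a - E u b, and ¬ f r via hpair with E v a
  have hfr : ¬ f (1 - E v a - E u b) := fun h =>
    hpair (E v a) (1 - E v a - E u b) (E_idem hav)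
      (compl2_idem (E_idem hav) (E_idem hbu)
        (by rw [E_mul_E, hau, zero_smul]) (by rw [E_mul_E, hbv, zero_smul]))
      (by rw [mul_sub, mul_sub, mul_one, E_idem hav, E_mul_E, hau, zero_smul]; abel)
      (by rw [sub_mul, sub_mul, one_mul, E_idem hav, E_mul_E, hbv, zero_smul]; abel)
      hfva h
  -- but hor3 on (E u (b-a), E (v+u) a) with the same complement r
  have hsum : (1 : Matrix (Fin n) (Fin n) ℂ) - E u (b - a) - E (v + u) a
      = 1 - E v a - E u b := by
    have : E u (b - a) + E (v + u) a = E u b + E v a := by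
      ext i j
      simp only [E, vecMulVec_apply, Matrix.add_apply, Pi.add_apply, Pi.sub_apply]
      ring
    rw [sub_sub, sub_sub, this]
    congr 1
    abel
  rcases hor3 (E u (b - a)) (E (v + u) a) (E_idem hbau) (E_idem havu)
      (by rw [E_mul_E, hbavu, zero_smul]) (by rw [E_mul_E, hau, zero_smul]) with h | h | h
  · exact hfuba h
  · exact hfvua h
  · rw [hsum] at h; exact hfr h

include hpair hor3 in
theorem core (hn : 3 ≤ n)
    (hex : ∃ i : Fin n, f (E (Pi.single i 1) (Pi.single i 1))) : False := by
  by_cases hk : ∃ v w w' : Fin n → ℂ, w ⬝ᵥ v = 1 ∧ w' ⬝ᵥ v = 1 ∧ f (E v w) ∧ ¬ f (E v w')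
  · obtain ⟨v, w, w', h1, h2, h3, h4⟩ := hk
    exact case1 f hpair hor3 hn v w w' h1 h2 h3 h4
  · push_neg at hk
    obtain ⟨i, hi⟩ := hex
    have hdot : (Pi.single i 1 : Fin n → ℂ) ⬝ᵥ Pi.single i 1 = 1 := by
      simp [dotProduct, Pi.single_apply]
    exact case2 f hpair hor3 hn
      (fun v w w' hw hw' hf => hk v w w' hw hw' hf) _ _ hdot hi

end Core
end NoGoCore


namespace NoGoCat
variable {n : ℕ}

abbrev Mn (n : ℕ) := Matrix (Fin n) (Fin n) ℂ

variable (G : RingCatᵒᵖ ⥤ LocallyRingedSpace)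
  (iso : (forget₂ CommRingCat RingCat).op ⋙ G ≅ Spec.toLocallyRingedSpace)
  (x : (G.obj (op (RingCat.of (Mn n)))).carrier)

/-- the point of `Spec ℂᵏ` induced by `x` along a ring hom `ℂᵏ →+* Mₙ(ℂ)`. -/
noncomputable def pt {k : ℕ} (φ : (Fin k → ℂ) →+* Mn n) : PrimeSpectrum (Fin k → ℂ) :=
  let φ' : RingCat.of (Fin k → ℂ) ⟶ RingCat.of (Mn n) := RingCat.ofHom φ
  (iso.hom.app (op (CommRingCat.of (Fin k → ℂ)))).toShHom.hom.base
    ((G.map φ'.op).toShHom.hom.base x)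

lemma pt_comp {k m : ℕ} (ψ : (Fin k → ℂ) →+* (Fin m → ℂ)) (φ : (Fin m → ℂ) →+* Mn n) :
    pt G iso x (φ.comp ψ) = PrimeSpectrum.comap ψ (pt G iso x φ) := by
  let A := CommRingCat.of (Fin k → ℂ)
  let B := CommRingCat.of (Fin m → ℂ)
  let ψC : A ⟶ B := CommRingCat.ofHom ψ
  let φ' : RingCat.of (Fin m → ℂ) ⟶ RingCat.of (Mn n) := RingCat.ofHom φ
  let φψ' : RingCat.of (Fin k → ℂ) ⟶ RingCat.of (Mn n) := RingCat.ofHom (φ.comp ψ)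
  have hcomp : φψ'.op = φ'.op ≫ ((forget₂ CommRingCat RingCat).map ψC).op := rfl
  have nat := iso.hom.naturality ψC.op
  have nat' := congrArg
    (fun (h : ((forget₂ CommRingCat RingCat).op ⋙ G).obj (op B) ⟶
        Spec.toLocallyRingedSpace.obj (op A)) =>
      h.toShHom.hom.base ((G.map φ'.op).toShHom.hom.base x)) nat
  simp only [Functor.comp_map, Functor.op_map, LocallyRingedSpace.comp_toShHom] at nat'
  show (iso.hom.app (op A)).toShHom.hom.base ((G.map φψ'.op).toShHom.hom.base x) = _
  rw [hcomp, G.map_comp]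
  exact nat'

/-- The ring hom `ℂᵏ →+* Mₙ(ℂ)` attached to a decomposition of `1` into orthogonal
idempotents. -/
noncomputable def phiDec {k : ℕ} (e : Fin k → Mn n)
    (he : ∀ i j, e i * e j = if i = j then e i else 0) (hs : ∑ i, e i = 1) :
    (Fin k → ℂ) →+* Mn n where
  toFun c := ∑ i, c i • e i
  map_one' := by simp [hs]
  map_zero' := by simp
  map_add' c d := by simp [add_smul, Finset.sum_add_distrib]
  map_mul' c d := by
    have key : (∑ i, c i • e i) * (∑ j, d j • e j) = ∑ i, (c * d) i • e i := by
      rw [Finset.sum_mul_sum]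
      have h1 : ∀ i j : Fin k,
          (c i • e i) * (d j • e j) = (c i * d j) • (if i = j then e i else 0) := by
        intro i j
        rw [smul_mul_smul_comm, he]
      simp only [h1]
      refine Finset.sum_congr rfl fun i _ => ?_
      rw [Finset.sum_eq_single i (fun j _ hj => by rw [if_neg fun h => hj h.symm, smul_zero])
        (fun h => absurd (Finset.mem_univ i) h), if_pos rfl, Pi.mul_apply]
    exact key.symm

lemma he2 {a : Mn n} (ha : a * a = a) :
    ∀ i j, (![a, 1 - a] i) * (![a, 1 - a] j) = if i = j then ![a, 1 - a] i else 0 := by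
  have h1 : a * (1 - a) = 0 := by rw [mul_sub, mul_one, ha, sub_self]
  have h2 : (1 - a) * a = 0 := by rw [sub_mul, one_mul, ha, sub_self]
  have h3 : (1 - a) * (1 - a) = 1 - a := by rw [sub_mul, one_mul, mul_sub, mul_one, ha]; abel
  intro i j
  fin_cases i <;> fin_cases j <;> simp [ha, h1, h2, h3]

lemma hs2 {a : Mn n} : ∑ i, (![a, 1 - a] i) = 1 := by
  rw [Fin.sum_univ_two]; simp

/-- The induced valuation on idempotent matrices. -/
noncomputable def fval (a : Mn n) : Prop :=
  ∃ ha : a * a = a, Pi.single 0 1 ∉ (pt G iso x (phiDec ![a, 1 - a] (he2 ha) hs2)).asIdeal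

lemma fval_consistent {k : ℕ} (e : Fin k → Mn n)
    (he : ∀ i j, e i * e j = if i = j then e i else 0) (hs : ∑ i, e i = 1) (i : Fin k) :
    fval G iso x (e i) ↔ Pi.single i 1 ∉ (pt G iso x (phiDec e he hs)).asIdeal := by
  classical
  have hei : e i * e i = e i := by have := he i i; simpa using this
  let ψ : (Fin 2 → ℂ) →+* (Fin k → ℂ) :=
    Pi.ringHom (fun j => Pi.evalRingHom (fun _ : Fin 2 => ℂ) (if j = i then 0 else 1))
  have hφ : (phiDec e he hs).comp ψ = phiDec ![e i, 1 - e i] (he2 hei) hs2 := by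
    refine RingHom.ext fun c => ?_
    have lhs_eq : ((phiDec e he hs).comp ψ) c = ∑ j, c (if j = i then 0 else 1) • e j := rfl
    have rhs_eq : (phiDec ![e i, 1 - e i] (he2 hei) hs2) c = c 0 • e i + c 1 • (1 - e i) := by
      show (∑ j : Fin 2, c j • (![e i, 1 - e i] j)) = _
      rw [Fin.sum_univ_two]
      simp
    rw [lhs_eq, rhs_eq]
    have hc : ∀ j, c (if j = i then (0 : Fin 2) else 1) = if j = i then c 0 else c 1 :=
      fun j => by split_ifs <;> rfl
    simp only [hc]
    have split : ∀ j, (if j = i then c 0 else c 1) • e j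
        = c 1 • e j + (if j = i then (c 0 - c 1) • e i else 0) := by
      intro j
      by_cases h : j = i
      · subst h; rw [if_pos rfl, if_pos rfl, sub_smul]; abel
      · rw [if_neg h, if_neg h, add_zero]
    rw [Finset.sum_congr rfl (fun j _ => split j), Finset.sum_add_distrib, ← Finset.smul_sum, hs,
      Finset.sum_ite_eq' Finset.univ i, if_pos (Finset.mem_univ i), smul_sub, sub_smul]
    abel
  have hpt := pt_comp G iso x ψ (phiDec e he hs)
  rw [hφ] at hpt
  have hψs : ψ (Pi.single 0 1) = Pi.single i 1 := by
    funext j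
    show (Pi.single 0 1 : Fin 2 → ℂ) (if j = i then 0 else 1) = (Pi.single i 1 : Fin k → ℂ) j
    by_cases h : j = i
    · subst h; rw [if_pos rfl, Pi.single_eq_same, Pi.single_eq_same]
    · rw [if_neg h, Pi.single_eq_of_ne h]
      simp
  constructor
  · rintro ⟨ha, hmem⟩
    rw [hpt] at hmem
    intro hc
    exact hmem (by rwa [PrimeSpectrum.comap_asIdeal, Ideal.mem_comap, hψs])
  · intro hmem
    refine ⟨hei, ?_⟩
    rw [hpt]
    intro hc
    rw [PrimeSpectrum.comap_asIdeal, Ideal.mem_comap, hψs] at hc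
    exact hmem hc

-- prime spectrum facts for the Pi ring
lemma exists_single_not_mem {k : ℕ} (p : PrimeSpectrum (Fin k → ℂ)) :
    ∃ i, Pi.single i (1:ℂ) ∉ p.asIdeal := by
  by_contra hall
  push_neg at hall
  have : (1 : Fin k → ℂ) ∈ p.asIdeal := by
    have : (∑ i, Pi.single i (1:ℂ)) ∈ p.asIdeal := Ideal.sum_mem _ (fun i _ => hall i)
    rwa [Finset.univ_sum_single] at this
  exact p.isPrime.ne_top (Ideal.eq_top_of_isUnit_mem _ this isUnit_one)

lemma single_mem_or_mem {k : ℕ} (p : PrimeSpectrum (Fin k → ℂ)) {i j : Fin k} (hij : i ≠ j) :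
    Pi.single i (1:ℂ) ∈ p.asIdeal ∨ Pi.single j (1:ℂ) ∈ p.asIdeal := by
  apply p.isPrime.mem_or_mem
  have : (Pi.single i (1:ℂ) : Fin k → ℂ) * (Pi.single j (1:ℂ) : Fin k → ℂ) = 0 := by
    funext l
    rcases eq_or_ne l i with rfl | hl
    · simp [Pi.single_eq_of_ne hij]
    · simp [Pi.single_eq_of_ne hl]
  rw [this]
  exact Ideal.zero_mem _

lemma sub_idem {a b : Mn n} (ha : a * a = a) (hb : b * b = b) (hab : a * b = 0)
    (hba : b * a = 0) :
    ∀ i j, (![a, b, 1 - a - b] i) * (![a, b, 1 - a - b] j)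
      = if i = j then ![a, b, 1 - a - b] i else 0 := by
  have h1 : a * (1 - a - b) = 0 := by rw [mul_sub, mul_sub, mul_one, ha, hab]; abel
  have h2 : (1 - a - b) * a = 0 := by rw [sub_mul, sub_mul, one_mul, ha, hba]; abel
  have h3 : b * (1 - a - b) = 0 := by rw [mul_sub, mul_sub, mul_one, hb, hba]; abel
  have h4 : (1 - a - b) * b = 0 := by rw [sub_mul, sub_mul, one_mul, hb, hab]; abel
  have hr : (1 - a - b) * (1 - a - b) = 1 - a - b := by
    rw [mul_sub, mul_sub, mul_one, h2, h4]; abel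
  intro i j
  fin_cases i <;> fin_cases j <;> simp [ha, hb, hab, hba, h1, h2, h3, h4, hr]

lemma sub_sum {a b : Mn n} : ∑ i, (![a, b, 1 - a - b] i) = 1 := by
  simp [Fin.sum_univ_three]

lemma rule_pair (a b : Mn n) (ha : a * a = a) (hb : b * b = b) (hab : a * b = 0)
    (hba : b * a = 0) (hfa : fval G iso x a) (hfb : fval G iso x b) : False := by
  have he := sub_idem (n := n) ha hb hab hba
  have c0 := fval_consistent G iso x _ he sub_sum 0
  have c1 := fval_consistent G iso x _ he sub_sum 1
  simp only [Matrix.cons_val_zero, Matrix.cons_val_one, Matrix.head_cons] at c0 c1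
  rcases single_mem_or_mem (pt G iso x (phiDec _ he sub_sum))
    (show (0 : Fin 3) ≠ 1 by decide) with h | h
  · exact (c0.mp hfa) h
  · exact (c1.mp hfb) h

lemma rule_or3 (a b : Mn n) (ha : a * a = a) (hb : b * b = b) (hab : a * b = 0)
    (hba : b * a = 0) :
    fval G iso x a ∨ fval G iso x b ∨ fval G iso x (1 - a - b) := by
  have he := sub_idem (n := n) ha hb hab hba
  obtain ⟨i, hi⟩ := exists_single_not_mem (pt G iso x (phiDec _ he sub_sum))
  have ci := fval_consistent G iso x _ he sub_sum i
  fin_cases i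
  · left; exact ci.mpr hi
  · right; left; exact ci.mpr hi
  · right; right
    have := ci.mpr hi
    simpa using this

lemma rule_ex : ∃ i : Fin n, fval G iso x (NoGoCore.E (Pi.single i 1) (Pi.single i 1)) := by
  classical
  set e : Fin n → Mn n := fun i => NoGoCore.E (Pi.single i 1) (Pi.single i 1) with hedef
  have hdot : ∀ i j : Fin n, (Pi.single i (1:ℂ)) ⬝ᵥ (Pi.single j 1) = if i = j then 1 else 0 := by
    intro i j
    rcases eq_or_ne i j with rfl | h
    · simp [dotProduct, Pi.single_apply]
    · simp [dotProduct, Pi.single_apply, h]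
      exact Ne.symm h
  have he : ∀ i j, e i * e j = if i = j then e i else 0 := by
    intro i j
    rw [hedef]
    simp only
    rw [NoGoCore.E_mul_E, hdot]
    rcases eq_or_ne i j with rfl | h
    · rw [if_pos rfl, if_pos rfl, one_smul]
    · rw [if_neg h, if_neg h, zero_smul]
  have hs : ∑ i, e i = 1 := by
    ext l m
    rw [Matrix.sum_apply]
    simp only [hedef, NoGoCore.E, vecMulVec_apply, Pi.single_apply, Matrix.one_apply,
      ite_mul, one_mul, zero_mul]
    rw [Finset.sum_ite_eq Finset.univ l (fun i => if m = i then (1:ℂ) else 0)]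
    simp [eq_comm]
  obtain ⟨i, hi⟩ := exists_single_not_mem (pt G iso x (phiDec e he hs))
  exact ⟨i, (fval_consistent G iso x e he hs i).mpr hi⟩

end NoGoCat

open CategoryTheory AlgebraicGeometry

/-- No-go theorem for locally-ringed-space-valued Zariski spectra: for `n ≥ 3`, any functor
`G : RingCatᵒᵖ ⥤ LocallyRingedSpace` that restricts (up to natural isomorphism) to the
spectrum functor `Spec : CommRingCatᵒᵖ ⥤ LocallyRingedSpace` on commutative rings sends the
matrix ring `M_n(ℂ)` to a locally ringed space with empty underlying topological space. -/
theorem no_functorial_zariski_locallyRingedSpace (n : ℕ) (hn : 3 ≤ n)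
    (G : RingCatᵒᵖ ⥤ LocallyRingedSpace)
    (iso : (forget₂ CommRingCat RingCat).op ⋙ G ≅ Spec.toLocallyRingedSpace) :
    IsEmpty (G.obj (Opposite.op (RingCat.of (Matrix (Fin n) (Fin n) ℂ)))).carrier := by
  constructor
  intro x
  exact NoGoCore.core (NoGoCat.fval G iso x)
    (NoGoCat.rule_pair G iso x) (NoGoCat.rule_or3 G iso x) hn (NoGoCat.rule_ex G iso x)
end

section
/- Let J be a small category and F : J ⥤ Locale a diagram such that for every object j the frame underlying F(j) is compact and regular. If c is a limit cone over F in Locale, then the frame underlying the apex of c is compact and regular. -/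
open CategoryTheory CategoryTheory.Limits

/-- `a` is *well inside* `b` in a frame: there is `c` with `c ⊓ a = ⊥` and `c ⊔ b = ⊤`. -/
def WellInside {L : Type*} [Order.Frame L] (a b : L) : Prop :=
  ∃ c, c ⊓ a = ⊥ ∧ c ⊔ b = ⊤

/-- A frame is *compact* when its top element is a compact element. -/
def IsCompactFrame (L : Type*) [Order.Frame L] : Prop :=
  IsCompactElement (⊤ : L)

/-- A frame is *regular* when every element is the join of the elements well inside it. -/
def IsRegularFrame (L : Type*) [Order.Frame L] : Prop :=
  ∀ a : L, a = sSup {b | WellInside b a}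

section WellInsideLemmas

variable {L M : Type*} [Order.Frame L] [Order.Frame M]

theorem WellInside.le {a b : L} (h : WellInside a b) : a ≤ b := by
  obtain ⟨c, h1, h2⟩ := h
  calc a = a ⊓ (c ⊔ b) := by rw [h2, inf_top_eq]
    _ = (a ⊓ c) ⊔ (a ⊓ b) := inf_sup_left a c b
    _ ≤ b := by rw [inf_comm a c, h1]; simpa using inf_le_right

theorem WellInside.mono {a b a' b' : L} (h : WellInside a b) (ha : a' ≤ a) (hb : b ≤ b') :
    WellInside a' b' := by
  obtain ⟨c, h1, h2⟩ := h
  exact ⟨c, le_bot_iff.1 (le_trans (inf_le_inf_left c ha) h1.le),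
    top_le_iff.1 (le_trans h2.ge (sup_le_sup_left hb c))⟩

theorem wellInside_bot (b : L) : WellInside (⊥ : L) b :=
  ⟨⊤, by simp, by simp⟩

theorem wellInside_top (a : L) : WellInside a (⊤ : L) :=
  ⟨⊥, by simp, by simp⟩

theorem WellInside.sup {a b a' b' : L} (h : WellInside a b) (h' : WellInside a' b') :
    WellInside (a ⊔ a') (b ⊔ b') := by
  obtain ⟨c, h1, h2⟩ := h
  obtain ⟨c', h1', h2'⟩ := h'
  refine ⟨c ⊓ c', le_bot_iff.1 ?_, top_le_iff.1 ?_⟩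
  · rw [inf_sup_left]
    exact sup_le (le_trans (inf_le_inf_right a inf_le_left) h1.le)
      (le_trans (inf_le_inf_right a' inf_le_right) h1'.le)
  · rw [sup_inf_right]
    exact le_inf (le_trans h2.ge (sup_le_sup_left le_sup_left c))
      (le_trans h2'.ge (sup_le_sup_left le_sup_right c'))

theorem WellInside.inf {a b a' b' : L} (h : WellInside a b) (h' : WellInside a' b') :
    WellInside (a ⊓ a') (b ⊓ b') := by
  obtain ⟨c, h1, h2⟩ := h
  obtain ⟨c', h1', h2'⟩ := h'
  refine ⟨c ⊔ c', le_bot_iff.1 ?_, top_le_iff.1 ?_⟩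
  · rw [inf_sup_right]
    exact sup_le (le_trans (inf_le_inf_left c inf_le_left) h1.le)
      (le_trans (inf_le_inf_left c' inf_le_right) h1'.le)
  · rw [sup_inf_left]
    exact le_inf (le_trans h2.ge (sup_le_sup_right le_sup_left b))
      (le_trans h2'.ge (sup_le_sup_right le_sup_right b'))

theorem WellInside.inf_same {a x y : L} (h : WellInside a x) (h' : WellInside a y) :
    WellInside a (x ⊓ y) :=
  (h.inf h').mono (le_of_eq (inf_idem a).symm) le_rfl

theorem WellInside.map (f : FrameHom L M) {a b : L} (h : WellInside a b) :
    WellInside (f a) (f b) := by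
  obtain ⟨c, h1, h2⟩ := h
  exact ⟨f c, by rw [← map_inf, h1, map_bot], by rw [← map_sup, h2, map_top]⟩

theorem wellInside_finsetSup {s : Finset L} {b : L} (h : ∀ x ∈ s, WellInside x b) :
    WellInside (s.sup id) b := by
  refine Finset.sup_induction (p := fun x => WellInside x b) (wellInside_bot b) (fun x hx y hy => ?_) h
  exact (hx.sup hy).mono le_rfl (sup_idem b).le

theorem exists_finset_wellInside {P : L → Prop} (s : Finset L)
    (h : ∀ x ∈ s, ∃ cx, P cx ∧ WellInside x cx) :
    ∃ t : Finset L, (∀ y ∈ t, P y) ∧ WellInside (s.sup id) (t.sup id) := by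
  classical
  induction s using Finset.induction with
  | empty => exact ⟨∅, by simp, by simpa using wellInside_bot ⊥⟩
  | @insert a s ha ih =>
    obtain ⟨t, ht, hwi⟩ := ih (fun x hx => h x (Finset.mem_insert_of_mem hx))
    obtain ⟨ca, hca, hwa⟩ := h a (Finset.mem_insert_self a s)
    refine ⟨insert ca t, ?_, ?_⟩
    · intro y hy
      rcases Finset.mem_insert.1 hy with rfl | hy
      · exact hca
      · exact ht y hy
    · rw [Finset.sup_insert, Finset.sup_insert]
      exact hwa.sup hwi

end WellInsideLemmas

/-! ### Strongly regular ideals -/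

/-- A *strongly regular ideal* in a frame: a downward closed, join closed subset containing `⊥`
such that every element is well inside another element of the ideal. -/
structure SRIdeal (L : Type*) [Order.Frame L] where
  carrier : Set L
  bot_mem' : ⊥ ∈ carrier
  mem_of_le' : ∀ {a b : L}, a ≤ b → b ∈ carrier → a ∈ carrier
  sup_mem' : ∀ {a b : L}, a ∈ carrier → b ∈ carrier → a ⊔ b ∈ carrier
  sreg' : ∀ a ∈ carrier, ∃ b ∈ carrier, WellInside a b

namespace SRIdeal

variable {L : Type*} [Order.Frame L]

instance : SetLike (SRIdeal L) L :=
  ⟨carrier, by rintro ⟨⟩ ⟨⟩ h; congr⟩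

instance : PartialOrder (SRIdeal L) := PartialOrder.ofSetLike (SRIdeal L) L

theorem bot_mem (I : SRIdeal L) : (⊥ : L) ∈ I := I.bot_mem'

theorem mem_of_le (I : SRIdeal L) {a b : L} (h : a ≤ b) (hb : b ∈ I) : a ∈ I :=
  I.mem_of_le' h hb

theorem sup_mem (I : SRIdeal L) {a b : L} (ha : a ∈ I) (hb : b ∈ I) : a ⊔ b ∈ I :=
  I.sup_mem' ha hb

theorem sreg (I : SRIdeal L) {a : L} (ha : a ∈ I) : ∃ b ∈ I, WellInside a b :=
  I.sreg' a ha

theorem finsetSup_mem (I : SRIdeal L) {s : Finset L} (h : ∀ x ∈ s, x ∈ I) :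
    s.sup id ∈ I :=
  Finset.sup_induction I.bot_mem (fun _ ha _ hb => I.sup_mem ha hb) h

/-- The strongly regular ideal generated by a family of strongly regular ideals:
its members are the elements below some finite join of members of the family. -/
def gen (S : Set (SRIdeal L)) : SRIdeal L where
  carrier := {a | ∃ s : Finset L, (∀ x ∈ s, ∃ I ∈ S, x ∈ I) ∧ a ≤ s.sup id}
  bot_mem' := ⟨∅, by simp, by simp⟩
  mem_of_le' := by
    rintro a b hab ⟨s, hs, hb⟩
    exact ⟨s, hs, hab.trans hb⟩
  sup_mem' := by
    classical
    rintro a b ⟨s, hs, hale⟩ ⟨t, ht, hble⟩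
    refine ⟨s ∪ t, ?_, ?_⟩
    · intro x hx
      rcases Finset.mem_union.1 hx with hx | hx
      · exact hs x hx
      · exact ht x hx
    · rw [Finset.sup_union]
      exact sup_le_sup hale hble
  sreg' := by
    rintro a ⟨s, hs, hale⟩
    have h : ∀ x ∈ s, ∃ cx, (∃ I ∈ S, cx ∈ I) ∧ WellInside x cx := by
      intro x hx
      obtain ⟨I, hIS, hxI⟩ := hs x hx
      obtain ⟨cx, hcx, hwi⟩ := I.sreg hxI
      exact ⟨cx, ⟨I, hIS, hcx⟩, hwi⟩
    obtain ⟨t, ht, hwi⟩ := exists_finset_wellInside s h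
    exact ⟨t.sup id, ⟨t, ht, le_rfl⟩, hwi.mono hale le_rfl⟩

theorem mem_gen_iff {S : Set (SRIdeal L)} {a : L} :
    a ∈ gen S ↔ ∃ s : Finset L, (∀ x ∈ s, ∃ I ∈ S, x ∈ I) ∧ a ≤ s.sup id :=
  Iff.rfl

instance : SupSet (SRIdeal L) := ⟨gen⟩

theorem isLUB_gen (S : Set (SRIdeal L)) : IsLUB S (sSup S) := by
  constructor
  · intro I hI
    rw [SetLike.le_def]
    intro a ha
    exact ⟨{a}, by simpa using ⟨I, hI, ha⟩, by simp⟩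
  · intro J hJ
    rw [SetLike.le_def]
    rintro a ⟨s, hs, hale⟩
    refine J.mem_of_le hale (J.finsetSup_mem ?_)
    intro x hx
    obtain ⟨I, hIS, hxI⟩ := hs x hx
    exact (hJ hIS) hxI

instance : CompleteLattice (SRIdeal L) := completeLatticeOfSup _ isLUB_gen

theorem mem_sSup_iff {S : Set (SRIdeal L)} {a : L} :
    a ∈ sSup S ↔ ∃ s : Finset L, (∀ x ∈ s, ∃ I ∈ S, x ∈ I) ∧ a ≤ s.sup id :=
  Iff.rfl

/-- The everything ideal. -/
def univIdeal : SRIdeal L where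
  carrier := Set.univ
  bot_mem' := trivial
  mem_of_le' := fun _ _ => trivial
  sup_mem' := fun _ _ => trivial
  sreg' := fun a _ => ⟨⊤, trivial, wellInside_top a⟩

theorem mem_top (a : L) : a ∈ (⊤ : SRIdeal L) :=
  SetLike.le_def.1 (le_top (a := (univIdeal : SRIdeal L))) trivial

/-- Intersection of two strongly regular ideals. -/
def interIdeal (I J : SRIdeal L) : SRIdeal L where
  carrier := ↑I ∩ ↑J
  bot_mem' := ⟨I.bot_mem, J.bot_mem⟩
  mem_of_le' := fun h hb => ⟨I.mem_of_le h hb.1, J.mem_of_le h hb.2⟩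
  sup_mem' := fun ha hb => ⟨I.sup_mem ha.1 hb.1, J.sup_mem ha.2 hb.2⟩
  sreg' := by
    rintro a ⟨haI, haJ⟩
    obtain ⟨b, hbI, hwib⟩ := I.sreg haI
    obtain ⟨c, hcJ, hwic⟩ := J.sreg haJ
    exact ⟨b ⊓ c, ⟨I.mem_of_le inf_le_left hbI, J.mem_of_le inf_le_right hcJ⟩,
      hwib.inf_same hwic⟩

theorem mem_inf {I J : SRIdeal L} {a : L} : a ∈ I ⊓ J ↔ a ∈ I ∧ a ∈ J := by
  constructor
  · intro h
    exact ⟨SetLike.le_def.1 inf_le_left h, SetLike.le_def.1 inf_le_right h⟩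
  · intro h
    have hle : interIdeal I J ≤ I ⊓ J :=
      le_inf (SetLike.le_def.2 fun x (hx : x ∈ interIdeal I J) => hx.1)
        (SetLike.le_def.2 fun x (hx : x ∈ interIdeal I J) => hx.2)
    exact SetLike.le_def.1 hle h

instance : Order.Frame (SRIdeal L) := by
  refine Order.Frame.ofMinimalAxioms ⟨fun I S => ?_⟩
  classical
  rw [SetLike.le_def]
  intro a ha
  obtain ⟨haI, haS⟩ := mem_inf.1 ha
  obtain ⟨s, hs, hale⟩ := mem_sSup_iff.1 haS
  have : (⨆ J ∈ S, I ⊓ J) = sSup ((fun J => I ⊓ J) '' S) := (sSup_image).symm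
  rw [this]
  refine mem_sSup_iff.2 ⟨s.image (fun x => a ⊓ x), ?_, ?_⟩
  · intro y hy
    obtain ⟨x, hxs, rfl⟩ := Finset.mem_image.1 hy
    obtain ⟨Ix, hIx, hxIx⟩ := hs x hxs
    exact ⟨I ⊓ Ix, ⟨Ix, hIx, rfl⟩,
      mem_inf.2 ⟨I.mem_of_le inf_le_left haI, Ix.mem_of_le inf_le_right hxIx⟩⟩
  · have h2 : a ⊓ s.sup id = s.sup fun i => a ⊓ id i := Finset.sup_inf_distrib_left s id a
    simp only [id_eq] at h2
    simp only [Finset.sup_image, Function.comp_def, id_eq]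
    rw [← h2]
    exact le_inf le_rfl hale

/-- The join map from strongly regular ideals back to the frame; a frame homomorphism. -/
def epsHom (L : Type*) [Order.Frame L] : FrameHom (SRIdeal L) L where
  toFun I := sSup ↑I
  map_inf' I J := by
    apply le_antisymm
    · exact sSup_le fun a ha =>
        le_inf (le_sSup (mem_inf.1 ha).1) (le_sSup (mem_inf.1 ha).2)
    · rw [sSup_inf_sSup]
      refine iSup₂_le fun p hp => le_sSup ?_
      exact mem_inf.2 ⟨I.mem_of_le inf_le_left hp.1, J.mem_of_le inf_le_right hp.2⟩
  map_top' := le_antisymm le_top (le_sSup (mem_top ⊤))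
  map_sSup' S := by
    apply le_antisymm
    · refine sSup_le ?_
      rintro a ⟨s, hs, hale⟩
      refine hale.trans (Finset.sup_le fun x hx => ?_)
      obtain ⟨I, hIS, hxI⟩ := hs x hx
      exact le_trans (le_sSup hxI : (x : L) ≤ sSup ↑I)
        (le_sSup (Set.mem_image_of_mem _ hIS))
    · refine sSup_le ?_
      rintro b ⟨I, hIS, rfl⟩
      refine sSup_le fun a ha => le_sSup ?_
      exact mem_sSup_iff.2 ⟨{a}, by simpa using ⟨I, hIS, ha⟩, by simp⟩

theorem epsHom_apply (I : SRIdeal L) : epsHom L I = sSup ↑I := rfl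

/-- The frame of strongly regular ideals is always compact. -/
theorem compact_srideal : IsCompactFrame (SRIdeal L) := by
  classical
  rw [IsCompactFrame, CompleteLattice.isCompactElement_iff_exists_le_sSup_of_le_sSup]
  intro S hS
  have htop : (⊤ : L) ∈ sSup S := SetLike.le_def.1 hS (mem_top ⊤)
  obtain ⟨s, hs, hle⟩ := mem_sSup_iff.1 htop
  choose f hfS hmemf using hs
  refine ⟨s.attach.image (fun x => f x.1 x.2), ?_, ?_⟩
  · intro I hI
    obtain ⟨x, _, rfl⟩ := Finset.mem_image.1 hI
    exact hfS x.1 x.2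
  · rw [SetLike.le_def]
    intro y _
    have htopmem : (⊤ : L) ∈ (s.attach.image (fun x => f x.1 x.2)).sup id := by
      rw [Finset.sup_id_eq_sSup]
      refine mem_sSup_iff.2 ⟨s, ?_, hle⟩
      intro x hx
      exact ⟨f x hx, Finset.mem_coe.2 (Finset.mem_image.2 ⟨⟨x, hx⟩, Finset.mem_attach _ _, rfl⟩),
        hmemf x hx⟩
    exact SRIdeal.mem_of_le _ le_top htopmem

end SRIdeal

section CompactRegular

variable {A : Type*} [Order.Frame A]

/-- In a compact frame, from a cover `c ⊔ ⨆ E = ⊤` we can extract a finite subcover. -/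
theorem compact_split (hcA : IsCompactFrame A) {c : A} {E : Set A}
    (h : c ⊔ sSup E = ⊤) :
    ∃ u : Finset A, ↑u ⊆ E ∧ c ⊔ u.sup id = ⊤ := by
  classical
  have h1 : (⊤ : A) ≤ sSup (insert c E) := by
    rw [sSup_insert, h]
  obtain ⟨t, ht, htle⟩ := (CompleteLattice.isCompactElement_iff_exists_le_sSup_of_le_sSup (k := (⊤ : A))).1 hcA _ h1
  refine ⟨t.erase c, ?_, ?_⟩
  · intro x hx
    have hx' := Finset.mem_erase.1 hx
    rcases ht hx'.2 with rfl | hE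
    · exact absurd rfl hx'.1
    · exact hE
  · apply top_le_iff.1
    refine le_trans htle ?_
    refine le_trans (Finset.sup_le fun x hx => ?_) le_rfl
    by_cases hxc : x = c
    · subst hxc; exact le_sup_left
    · exact le_trans (Finset.le_sup (f := id) (Finset.mem_erase.2 ⟨hxc, hx⟩)) le_sup_right

/-- Interpolation of the well inside relation in a compact regular frame. -/
theorem wellInside_interpolate (hcA : IsCompactFrame A) (hrA : IsRegularFrame A)
    {a b : A} (h : WellInside a b) : ∃ c, WellInside a c ∧ WellInside c b := by
  obtain ⟨d, hd1, hd2⟩ := h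
  have hb : b = sSup {e | WellInside e b} := hrA b
  have hcover : d ⊔ sSup {e | WellInside e b} = ⊤ := by rw [← hb, hd2]
  obtain ⟨u, hu, hute⟩ := compact_split hcA hcover
  refine ⟨u.sup id, ⟨d, hd1, hute⟩, ?_⟩
  exact wellInside_finsetSup fun x hx => hu hx

/-- The map sending `a` to the ideal of elements well inside `a`, in a compact regular frame. -/
def sigmaHom (hcA : IsCompactFrame A) (hrA : IsRegularFrame A) :
    FrameHom A (SRIdeal A) where
  toFun a :=
    { carrier := {b | WellInside b a}
      bot_mem' := wellInside_bot a
      mem_of_le' := fun hab hb => hb.mono hab le_rfl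
      sup_mem' := fun ha hb => (ha.sup hb).mono le_rfl (le_of_eq (sup_idem _))
      sreg' := fun _ hb => (wellInside_interpolate hcA hrA hb).imp
        fun _ hc => ⟨hc.2, hc.1⟩ }
  map_inf' x y := by
    apply SetLike.ext
    intro b
    rw [SRIdeal.mem_inf]
    constructor
    · intro hb
      exact ⟨hb.mono le_rfl inf_le_left, hb.mono le_rfl inf_le_right⟩
    · intro hb
      exact hb.1.inf_same hb.2
  map_top' := by
    apply SetLike.ext
    intro b
    simp only [SRIdeal.mem_top, iff_true]
    exact wellInside_top b
  map_sSup' S := by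
    apply le_antisymm
    · rw [SetLike.le_def]
      intro b hb
      obtain ⟨d, hd1, hd2⟩ := hb
      have hSS : sSup S = sSup (⋃ s ∈ S, {e | WellInside e s}) := by
        apply le_antisymm
        · refine sSup_le fun s hs => ?_
          calc s = sSup {e | WellInside e s} := hrA s
            _ ≤ _ := sSup_le_sSup (Set.subset_iUnion₂ (s := fun s _ => {e | WellInside e s}) s hs)
        · refine sSup_le fun e he => ?_
          obtain ⟨s, hs, hes⟩ := Set.mem_iUnion₂.1 he
          exact le_trans (WellInside.le hes) (le_sSup hs)
      have hcover : d ⊔ sSup (⋃ s ∈ S, {e | WellInside e s}) = ⊤ := by rw [← hSS, hd2]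
      obtain ⟨u, hu, hute⟩ := compact_split hcA hcover
      refine SRIdeal.mem_sSup_iff.2 ⟨u, ?_, ?_⟩
      · intro x hx
        obtain ⟨s, hs, hxs⟩ := Set.mem_iUnion₂.1 (hu hx)
        exact ⟨_, Set.mem_image_of_mem _ hs, hxs⟩
      · calc b = b ⊓ (d ⊔ u.sup id) := by rw [hute, inf_top_eq]
          _ = (b ⊓ d) ⊔ (b ⊓ u.sup id) := inf_sup_left b d _
          _ ≤ u.sup id := by
              rw [inf_comm b d, hd1]
              simpa using inf_le_right
    · refine sSup_le ?_
      rintro K ⟨s, hs, rfl⟩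
      rw [SetLike.le_def]
      intro b hb
      exact hb.mono le_rfl (le_sSup hs)

theorem sigmaHom_mem_iff (hcA : IsCompactFrame A) (hrA : IsRegularFrame A) {a b : A} :
    b ∈ sigmaHom hcA hrA a ↔ WellInside b a := Iff.rfl

end CompactRegular

section Isomorphism

variable {A B C : Type*} [Order.Frame A] [Order.Frame B] [Order.Frame C]

theorem eps_sigma (hcA : IsCompactFrame A) (hrA : IsRegularFrame A) (a : A) :
    SRIdeal.epsHom A (sigmaHom hcA hrA a) = a := (hrA a).symm

theorem sigma_eps (hcA : IsCompactFrame A) (hrA : IsRegularFrame A) (I : SRIdeal A) :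
    sigmaHom hcA hrA (SRIdeal.epsHom A I) = I := by
  apply SetLike.ext
  intro b
  rw [sigmaHom_mem_iff]
  constructor
  · rintro ⟨d, hd1, hd2⟩
    obtain ⟨u, hu, hute⟩ := compact_split hcA (show d ⊔ sSup ↑I = ⊤ from hd2)
    have hdI : u.sup id ∈ I := I.finsetSup_mem fun x hx => hu hx
    refine I.mem_of_le ?_ hdI
    calc b = b ⊓ (d ⊔ u.sup id) := by rw [hute, inf_top_eq]
      _ = (b ⊓ d) ⊔ (b ⊓ u.sup id) := inf_sup_left b d _
      _ ≤ u.sup id := by rw [inf_comm b d, hd1]; simpa using inf_le_right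
  · intro hb
    obtain ⟨b', hb', hwi⟩ := I.sreg hb
    exact hwi.mono le_rfl (le_sSup hb')

/-- The underlying ideal map of the functorial action of `SRIdeal` on a frame hom. -/
def mapSRfun (f : FrameHom A B) (I : SRIdeal A) : SRIdeal B where
  carrier := {b | ∃ a ∈ I, b ≤ f a}
  bot_mem' := ⟨⊥, I.bot_mem, bot_le⟩
  mem_of_le' := by
    rintro b b' hbb' ⟨a, haI, hb'a⟩
    exact ⟨a, haI, hbb'.trans hb'a⟩
  sup_mem' := by
    rintro b b' ⟨a, haI, hba⟩ ⟨a', ha'I, hb'a'⟩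
    exact ⟨a ⊔ a', I.sup_mem haI ha'I,
      (sup_le_sup hba hb'a').trans (le_of_eq (map_sup f a a').symm)⟩
  sreg' := by
    rintro b ⟨a, haI, hba⟩
    obtain ⟨a', ha'I, hwi⟩ := I.sreg haI
    exact ⟨f a', ⟨a', ha'I, le_rfl⟩, (hwi.map f).mono hba le_rfl⟩

theorem mem_mapSRfun_iff {f : FrameHom A B} {I : SRIdeal A} {b : B} :
    b ∈ mapSRfun f I ↔ ∃ a ∈ I, b ≤ f a := Iff.rfl

/-- Functorial action of strongly regular ideals on frame homs. -/
def mapSR (f : FrameHom A B) : FrameHom (SRIdeal A) (SRIdeal B) where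
  toFun := mapSRfun f
  map_inf' I J := by
    apply SetLike.ext
    intro b
    rw [mem_mapSRfun_iff, SRIdeal.mem_inf]
    constructor
    · rintro ⟨a, haIJ, hba⟩
      obtain ⟨haI, haJ⟩ := SRIdeal.mem_inf.1 haIJ
      exact ⟨⟨a, haI, hba⟩, ⟨a, haJ, hba⟩⟩
    · rintro ⟨⟨a, haI, hba⟩, ⟨a', ha'J, hba'⟩⟩
      exact ⟨a ⊓ a',
        SRIdeal.mem_inf.2 ⟨I.mem_of_le inf_le_left haI, J.mem_of_le inf_le_right ha'J⟩,
        (le_inf hba hba').trans (le_of_eq (map_inf f a a').symm)⟩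
  map_top' := by
    apply SetLike.ext
    intro b
    simp only [SRIdeal.mem_top, iff_true]
    exact ⟨⊤, SRIdeal.mem_top ⊤, by rw [map_top]; exact le_top⟩
  map_sSup' S := by
    classical
    apply le_antisymm
    · rw [SetLike.le_def]
      rintro b ⟨a, haS, hba⟩
      obtain ⟨s, hs, hale⟩ := SRIdeal.mem_sSup_iff.1 haS
      refine SRIdeal.mem_sSup_iff.2 ⟨s.image f, ?_, ?_⟩
      · intro y hy
        obtain ⟨x, hxs, rfl⟩ := Finset.mem_image.1 hy
        obtain ⟨I, hIS, hxI⟩ := hs x hxs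
        exact ⟨mapSRfun f I, Set.mem_image_of_mem _ hIS, ⟨x, hxI, le_rfl⟩⟩
      · have h1 : b ≤ f (s.sup id) := hba.trans (OrderHomClass.mono f hale)
        have h2 : f (s.sup id) = (s.image f).sup id := by
          rw [Finset.sup_id_eq_sSup, map_sSup, ← Finset.coe_image, ← Finset.sup_id_eq_sSup]
        rw [← h2]
        exact h1
    · refine sSup_le ?_
      rintro K ⟨I, hIS, rfl⟩
      rw [SetLike.le_def]
      rintro b ⟨a, haI, hba⟩
      exact ⟨a, SetLike.le_def.1 (le_sSup hIS) haI, hba⟩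

theorem mapSR_apply (f : FrameHom A B) (I : SRIdeal A) : mapSR f I = mapSRfun f I := rfl

theorem eps_mapSR (f : FrameHom A B) (I : SRIdeal A) :
    SRIdeal.epsHom B (mapSR f I) = f (SRIdeal.epsHom A I) := by
  apply le_antisymm
  · refine sSup_le ?_
    rintro b ⟨a, haI, hba⟩
    exact hba.trans (OrderHomClass.mono f (le_sSup haI))
  · rw [SRIdeal.epsHom_apply, map_sSup]
    refine sSup_le ?_
    rintro b ⟨a, haI, rfl⟩
    exact le_sSup ⟨a, haI, le_rfl⟩

theorem mapSR_comp_apply (g : FrameHom B C) (f : FrameHom A B) (I : SRIdeal A) :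
    mapSR g (mapSR f I) = mapSR (g.comp f) I := by
  apply SetLike.ext
  intro x
  constructor
  · rintro ⟨b, ⟨a, haI, hba⟩, hxb⟩
    exact ⟨a, haI, hxb.trans (OrderHomClass.mono g hba)⟩
  · rintro ⟨a, haI, hxa⟩
    exact ⟨f a, ⟨a, haI, le_rfl⟩, hxa⟩

theorem sigma_natural (hcA : IsCompactFrame A) (hrA : IsRegularFrame A)
    (hcB : IsCompactFrame B) (hrB : IsRegularFrame B) (φ : FrameHom A B) (x : A) :
    sigmaHom hcB hrB (φ x) = mapSR φ (sigmaHom hcA hrA x) := by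
  have h1 : SRIdeal.epsHom B (sigmaHom hcB hrB (φ x)) = φ x := eps_sigma hcB hrB (φ x)
  have h2 : SRIdeal.epsHom B (mapSR φ (sigmaHom hcA hrA x)) = φ x := by
    rw [eps_mapSR, eps_sigma hcA hrA]
  have h3 := congrArg (sigmaHom hcB hrB) (h1.trans h2.symm)
  rwa [sigma_eps hcB hrB, sigma_eps hcB hrB] at h3

end Isomorphism

/-- Compact regular locales are closed under limits in the category of locales: the apex of
any limit cone over a diagram of compact regular locales is again compact and regular. -/
theorem compactRegular_closed_under_limits {J : Type*} [SmallCategory J]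
    (F : J ⥤ Locale)
    (hcomp : ∀ j : J, IsCompactFrame ↥(F.obj j).unop)
    (hreg : ∀ j : J, IsRegularFrame ↥(F.obj j).unop)
    (c : Cone F) (hc : IsLimit c) :
    IsCompactFrame ↥c.pt.unop ∧ IsRegularFrame ↥c.pt.unop := by
  classical
  let σ : ∀ j, FrameHom ↥(F.obj j).unop (SRIdeal ↥(F.obj j).unop) :=
    fun j => sigmaHom (hcomp j) (hreg j)
  let fj : ∀ j, FrameHom ↥(F.obj j).unop ↥c.pt.unop :=
    fun j => show FrameHom _ _ from (c.π.app j).unop.hom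
  let gj : ∀ j, FrameHom ↥(F.obj j).unop (SRIdeal ↥c.pt.unop) :=
    fun j => (mapSR (fj j)).comp (σ j)
  let B : Frm := Frm.of (SRIdeal ↥c.pt.unop)
  let d : Cone F :=
    { pt := Opposite.op B
      π :=
        { app := fun j => (show (F.obj j).unop ⟶ B from Frm.ofHom (gj j)).op
          naturality := by
            intro j k α
            simp only [Functor.const_obj_map, Category.id_comp]
            apply Quiver.Hom.unop_inj
            apply Frm.hom_ext
            have hf : FrameHom.comp (fj j) (show FrameHom _ _ from (F.map α).unop.hom) = fj k :=
              congrArg (fun f => f.unop.hom) (c.w α)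
            show gj k = FrameHom.comp (gj j) (show FrameHom _ _ from (F.map α).unop.hom)
            apply DFunLike.ext
            intro x
            have h1 : σ j ((show FrameHom _ _ from (F.map α).unop.hom) x)
                = mapSR (show FrameHom _ _ from (F.map α).unop.hom) (σ k x) :=
              sigma_natural (hcomp k) (hreg k) (hcomp j) (hreg j) _ x
            calc gj k x = mapSR (fj k) (σ k x) := rfl
              _ = mapSR (FrameHom.comp (fj j) (show FrameHom _ _ from (F.map α).unop.hom))
                    (σ k x) := by rw [hf]
              _ = mapSR (fj j) (mapSR (show FrameHom _ _ from (F.map α).unop.hom) (σ k x)) :=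
                    (mapSR_comp_apply _ _ _).symm
              _ = mapSR (fj j) (σ j ((show FrameHom _ _ from (F.map α).unop.hom) x)) := by rw [h1]
              _ = FrameHom.comp (gj j) (show FrameHom _ _ from (F.map α).unop.hom) x := rfl } }
  let m : FrameHom ↥c.pt.unop (SRIdeal ↥c.pt.unop) := show FrameHom _ _ from (hc.lift d).unop.hom
  have hfac : ∀ (j : J) (x : ↥(F.obj j).unop), m (fj j x) = gj j x := by
    intro j x
    have h2 : FrameHom.comp m (fj j) = gj j := congrArg (fun f => f.unop.hom) (hc.fac d j)
    exact DFunLike.congr_fun h2 x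
  let e : FrameHom ↥c.pt.unop ↥c.pt.unop := (SRIdeal.epsHom _).comp m
  have hr : (show c.pt.unop ⟶ c.pt.unop from Frm.ofHom e).op = 𝟙 c.pt := by
    apply hc.hom_ext
    intro j
    apply Quiver.Hom.unop_inj
    apply Frm.hom_ext
    show FrameHom.comp e (fj j) = FrameHom.comp (FrameHom.id _) (fj j)
    apply DFunLike.ext
    intro x
    show SRIdeal.epsHom _ (m (fj j x)) = fj j x
    rw [hfac j x]
    show SRIdeal.epsHom _ (mapSR (fj j) (σ j x)) = fj j x
    rw [eps_mapSR, eps_sigma (hcomp j) (hreg j)]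
  have heq : ∀ x : ↥c.pt.unop, SRIdeal.epsHom _ (m x) = x := by
    have h3 : e = FrameHom.id _ := congrArg (fun f => f.unop.hom) hr
    intro x
    exact DFunLike.congr_fun h3 x
  constructor
  · -- compactness
    rw [IsCompactFrame, CompleteLattice.isCompactElement_iff_exists_le_sSup_of_le_sSup]
    intro S hS
    have h1 : (⊤ : SRIdeal ↥c.pt.unop) ≤ sSup (m '' S) := by
      rw [← map_sSup, top_le_iff.1 hS, map_top]
    obtain ⟨t, htsub, htle⟩ := (CompleteLattice.isCompactElement_iff_exists_le_sSup_of_le_sSup (k := (⊤ : SRIdeal ↥c.pt.unop))).1 SRIdeal.compact_srideal _ h1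
    obtain ⟨t', ht'sub, rfl⟩ := Finset.subset_set_image_iff.1 htsub
    refine ⟨t', ht'sub, ?_⟩
    have h2 : m (t'.sup id) = (t'.image m).sup id := by
      rw [Finset.sup_id_eq_sSup, map_sSup, ← Finset.coe_image, ← Finset.sup_id_eq_sSup]
    have h3 : m (t'.sup id) = ⊤ := top_le_iff.1 (h2 ▸ htle)
    refine le_of_eq ?_
    calc (⊤ : ↥c.pt.unop) = SRIdeal.epsHom _ (⊤ : SRIdeal ↥c.pt.unop) := (map_top _).symm
      _ = SRIdeal.epsHom _ (m (t'.sup id)) := by rw [h3]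
      _ = t'.sup id := heq _
  · -- regularity
    intro x
    refine le_antisymm ?_ (sSup_le fun b hb => hb.le)
    conv_lhs => rw [← heq x]
    refine sSup_le ?_
    intro b hb
    obtain ⟨b', hb', hwi⟩ := (m x).sreg hb
    have hb'le : b' ≤ x := by
      have h4 : b' ≤ SRIdeal.epsHom _ (m x) := le_sSup hb'
      rwa [heq x] at h4
    exact le_sSup (hwi.mono le_rfl hb'le)
end

section
/- Let J be a small category and F : J ⥤ Locale a diagram such that for every object j the frame underlying F(j) is a Stone frame: its top element is a compact element, and every element is the join of the complemented elements below it. If c is a limit cone over F in Locale, then the frame underlying the apex of c is again a Stone frame. -/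
open CategoryTheory CategoryTheory.Limits

/-- A *Stone frame*: the top element is a compact element, and every element is the join of
the complemented elements below it. -/
def IsStoneFrame (L : Type*) [Order.Frame L] : Prop :=
  IsCompactElement (⊤ : L) ∧
  ∀ a : L, a = sSup {b | b ≤ a ∧ ∃ b', b ⊓ b' = ⊥ ∧ b ⊔ b' = ⊤}

namespace StoneLimitsAux

variable {L : Type*} [Order.Frame L]

/-- The set of complemented elements of a frame. -/
def cpl (L : Type*) [Order.Frame L] : Set L := {x | ∃ y, x ⊓ y = ⊥ ∧ x ⊔ y = ⊤}

lemma mem_cpl_iff {x : L} : x ∈ cpl L ↔ ∃ y, IsCompl x y := by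
  constructor
  · rintro ⟨y, h1, h2⟩
    exact ⟨y, isCompl_iff.mpr ⟨disjoint_iff.mpr h1, codisjoint_iff.mpr h2⟩⟩
  · rintro ⟨y, h⟩
    exact ⟨y, h.inf_eq_bot, h.sup_eq_top⟩

lemma bot_mem_cpl : (⊥ : L) ∈ cpl L := ⟨⊤, by simp, by simp⟩

lemma top_mem_cpl : (⊤ : L) ∈ cpl L := ⟨⊥, by simp, by simp⟩

lemma inf_mem_cpl {x y : L} (hx : x ∈ cpl L) (hy : y ∈ cpl L) : x ⊓ y ∈ cpl L := by
  rw [mem_cpl_iff] at *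
  obtain ⟨x', hx⟩ := hx
  obtain ⟨y', hy⟩ := hy
  exact ⟨x' ⊔ y', hx.inf_sup hy⟩

lemma sup_mem_cpl {x y : L} (hx : x ∈ cpl L) (hy : y ∈ cpl L) : x ⊔ y ∈ cpl L := by
  rw [mem_cpl_iff] at *
  obtain ⟨x', hx⟩ := hx
  obtain ⟨y', hy⟩ := hy
  exact ⟨x' ⊓ y', hx.sup_inf hy⟩

lemma finset_sup_mem_cpl {t : Finset L} (h : ∀ x ∈ t, x ∈ cpl L) : t.sup id ∈ cpl L :=
  Finset.sup_induction bot_mem_cpl (fun _ ha _ hb => sup_mem_cpl ha hb) h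

lemma cpl_map {K : Type*} [Order.Frame K] (f : FrameHom K L) {b : K} (hb : b ∈ cpl K) :
    f b ∈ cpl L := by
  obtain ⟨b', h1, h2⟩ := hb
  exact ⟨f b', by rw [← map_inf, h1, map_bot], by rw [← map_sup, h2, map_top]⟩

/-- Ideals of the lattice of complemented elements of a frame, realized as subsets of the
frame. -/
structure Idl (L : Type*) [Order.Frame L] where
  carrier : Set L
  subset' : carrier ⊆ cpl L
  bot_mem' : ⊥ ∈ carrier
  lower' : ∀ ⦃x y : L⦄, x ∈ carrier → y ∈ cpl L → y ≤ x → y ∈ carrier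
  sup_mem' : ∀ ⦃x y : L⦄, x ∈ carrier → y ∈ carrier → x ⊔ y ∈ carrier

namespace Idl

@[ext]
lemma ext {I J : Idl L} (h : I.carrier = J.carrier) : I = J := by
  cases I; cases J; congr

instance : PartialOrder (Idl L) :=
  PartialOrder.lift carrier fun _ _ => ext

lemma le_def {I J : Idl L} : I ≤ J ↔ I.carrier ⊆ J.carrier := Iff.rfl

lemma finset_sup_mem (I : Idl L) {t : Finset L} (h : ∀ x ∈ t, x ∈ I.carrier) :
    t.sup id ∈ I.carrier :=
  Finset.sup_induction I.bot_mem' (fun _ ha _ hb => I.sup_mem' ha hb) h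

/-- The join of a set of ideals. -/
def joinIdl (S : Set (Idl L)) : Idl L where
  carrier := {y | y ∈ cpl L ∧ ∃ t : Finset L, (↑t : Set L) ⊆ ⋃ I ∈ S, I.carrier ∧ y ≤ t.sup id}
  subset' := fun _ h => h.1
  bot_mem' := ⟨bot_mem_cpl, ∅, by simp⟩
  lower' := by
    rintro x y ⟨hx, t, ht, hle⟩ hy hyx
    exact ⟨hy, t, ht, hyx.trans hle⟩
  sup_mem' := by
    classical
    rintro x y ⟨hx, t1, ht1, hle1⟩ ⟨hy, t2, ht2, hle2⟩
    refine ⟨sup_mem_cpl hx hy, t1 ∪ t2, ?_, ?_⟩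
    · rw [Finset.coe_union]
      exact Set.union_subset ht1 ht2
    · rw [Finset.sup_union]
      exact sup_le_sup hle1 hle2

lemma isLUB_joinIdl (S : Set (Idl L)) : IsLUB S (joinIdl S) := by
  constructor
  · intro I hI
    rw [le_def]
    intro y hy
    refine ⟨I.subset' hy, {y}, ?_, by simp⟩
    simp only [Finset.coe_singleton, Set.singleton_subset_iff]
    exact Set.mem_biUnion hI hy
  · intro K hK
    rw [le_def]
    rintro y ⟨hy, t, ht, hle⟩
    refine K.lower' (K.finset_sup_mem fun x hx => ?_) hy hle
    obtain ⟨I, hI, hxI⟩ := Set.mem_iUnion₂.mp (ht hx)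
    exact le_def.mp (hK hI) hxI

/-- The meet of a set of ideals. -/
def meetIdl (S : Set (Idl L)) : Idl L where
  carrier := cpl L ∩ ⋂ I ∈ S, I.carrier
  subset' := fun _ h => h.1
  bot_mem' := ⟨bot_mem_cpl, Set.mem_iInter₂.mpr fun I _ => I.bot_mem'⟩
  lower' := by
    rintro x y ⟨hx, hx2⟩ hy hyx
    refine ⟨hy, Set.mem_iInter₂.mpr fun I hI => I.lower' (Set.mem_iInter₂.mp hx2 I hI) hy hyx⟩
  sup_mem' := by
    rintro x y ⟨hx, hx2⟩ ⟨hy, hy2⟩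
    exact ⟨sup_mem_cpl hx hy, Set.mem_iInter₂.mpr fun I hI =>
      I.sup_mem' (Set.mem_iInter₂.mp hx2 I hI) (Set.mem_iInter₂.mp hy2 I hI)⟩

lemma isGLB_meetIdl (S : Set (Idl L)) : IsGLB S (meetIdl S) := by
  constructor
  · intro I hI
    rw [le_def]
    intro y hy
    exact Set.mem_iInter₂.mp hy.2 I hI
  · intro K hK
    rw [le_def]
    intro y hy
    exact ⟨K.subset' hy, Set.mem_iInter₂.mpr fun I hI => le_def.mp (hK hI) hy⟩

/-- The intersection of two ideals, as an ideal. -/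
def interIdl (I J : Idl L) : Idl L where
  carrier := I.carrier ∩ J.carrier
  subset' := fun _ h => I.subset' h.1
  bot_mem' := ⟨I.bot_mem', J.bot_mem'⟩
  lower' := fun _ _ h hc hle => ⟨I.lower' h.1 hc hle, J.lower' h.2 hc hle⟩
  sup_mem' := fun _ _ h1 h2 => ⟨I.sup_mem' h1.1 h2.1, J.sup_mem' h1.2 h2.2⟩

lemma glb_carrier {I J M : Idl L} (h : IsGLB {I, J} M) :
    M.carrier = I.carrier ∩ J.carrier := by
  apply Set.Subset.antisymm
  · intro x hx
    have hI : M ≤ I := h.1 (Set.mem_insert _ _)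
    have hJ : M ≤ J := h.1 (Set.mem_insert_of_mem _ rfl)
    exact ⟨le_def.mp hI hx, le_def.mp hJ hx⟩
  · have hmem : interIdl I J ∈ lowerBounds {I, J} := by
      rintro K (rfl | rfl)
      · exact le_def.mpr fun x hx => hx.1
      · exact le_def.mpr fun x hx => hx.2
    exact le_def.mp (h.2 hmem)

/-- The complete lattice of ideals (auxiliary, used to build the frame instance). -/
abbrev idlLat : CompleteLattice (Idl L) := by
  letI : InfSet (Idl L) := ⟨meetIdl⟩
  exact completeLatticeOfInf _ isGLB_meetIdl

instance : Order.Frame (Idl L) := by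
  letI : CompleteLattice (Idl L) := idlLat
  refine Order.Frame.ofMinimalAxioms ⟨?_⟩
  classical
  intro I S
  rw [show (⨆ b ∈ S, I ⊓ b) = sSup ((fun b => I ⊓ b) '' S) from (sSup_image).symm,
    (isLUB_joinIdl S).sSup_eq, (isLUB_joinIdl _).sSup_eq]
  have hinf : ∀ J : Idl L, (I ⊓ J).carrier = I.carrier ∩ J.carrier :=
    fun J => glb_carrier isGLB_pair
  rw [le_def]
  intro y hy
  rw [hinf] at hy
  obtain ⟨hyI, hyc, t, ht, hle⟩ := hy
  refine ⟨hyc, t.image (fun d => y ⊓ d), ?_, ?_⟩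
  · intro z hz
    simp only [Finset.coe_image, Set.mem_image, Finset.mem_coe] at hz
    obtain ⟨d, hd, rfl⟩ := hz
    obtain ⟨I₀, hI₀, hdI₀⟩ := Set.mem_iUnion₂.mp (ht hd)
    apply Set.mem_biUnion (Set.mem_image_of_mem _ hI₀)
    rw [hinf]
    have hydc : y ⊓ d ∈ cpl L := inf_mem_cpl hyc (I₀.subset' hdI₀)
    exact ⟨I.lower' hyI hydc inf_le_left, I₀.lower' hdI₀ hydc inf_le_right⟩
  · rw [Finset.sup_image]
    calc y = y ⊓ y := (inf_idem y).symm
      _ ≤ y ⊓ t.sup id := inf_le_inf_left y hle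
      _ = t.sup fun d => y ⊓ id d := Finset.sup_inf_distrib_left t id y
      _ = t.sup ((fun d => y ⊓ d) ∘ id) := rfl
      _ = t.sup (id ∘ fun d => y ⊓ d) := rfl

lemma sSup_eq (S : Set (Idl L)) : sSup S = joinIdl S := (isLUB_joinIdl S).sSup_eq

lemma mem_sSup {S : Set (Idl L)} {y : L} :
    y ∈ (sSup S).carrier ↔
      y ∈ cpl L ∧ ∃ t : Finset L, (↑t : Set L) ⊆ ⋃ I ∈ S, I.carrier ∧ y ≤ t.sup id := by
  rw [sSup_eq]; rfl

lemma inf_carrier (I J : Idl L) : (I ⊓ J).carrier = I.carrier ∩ J.carrier :=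
  glb_carrier isGLB_pair

/-- The principal ideal on a complemented element. -/
def prIdl (b : L) : Idl L where
  carrier := {y | y ∈ cpl L ∧ y ≤ b}
  subset' := fun _ h => h.1
  bot_mem' := ⟨bot_mem_cpl, bot_le⟩
  lower' := fun _ _ hx hy hle => ⟨hy, hle.trans hx.2⟩
  sup_mem' := fun _ _ h1 h2 => ⟨sup_mem_cpl h1.1 h2.1, sup_le h1.2 h2.2⟩

lemma bot_carrier : (⊥ : Idl L).carrier = {⊥} := by
  apply Set.Subset.antisymm
  · intro y hy
    have h0 : (⊥ : Idl L) ≤ prIdl ⊥ := bot_le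
    have := le_def.mp h0 hy
    simpa using le_bot_iff.mp this.2
  · rintro y rfl
    exact (⊥ : Idl L).bot_mem'

lemma top_carrier : (⊤ : Idl L).carrier = cpl L := by
  apply Set.Subset.antisymm (⊤ : Idl L).subset'
  intro y hy
  have : prIdl (⊤ : L) ≤ ⊤ := le_top
  exact le_def.mp this ⟨hy, le_top⟩

lemma prIdl_cpl {b : L} (hb : b ∈ cpl L) :
    ∃ J', prIdl b ⊓ J' = ⊥ ∧ prIdl b ⊔ J' = ⊤ := by
  obtain ⟨b', h1, h2⟩ := hb
  refine ⟨prIdl b', ?_, ?_⟩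
  · apply le_antisymm _ bot_le
    rw [le_def]
    intro y hy
    rw [inf_carrier] at hy
    have : y ≤ b ⊓ b' := le_inf hy.1.2 hy.2.2
    rw [h1, le_bot_iff] at this
    rw [bot_carrier]
    exact this
  · apply le_antisymm le_top
    rw [le_def]
    intro y hy
    rw [top_carrier] at hy
    rw [← sSup_pair, mem_sSup]
    classical
    refine ⟨hy, {b, b'}, ?_, ?_⟩
    · intro z hz
      simp only [Finset.coe_insert, Finset.coe_singleton, Set.mem_insert_iff,
        Set.mem_singleton_iff] at hz
      rcases hz with h | h
      · rw [h]
        exact Set.mem_biUnion (Set.mem_insert _ _) ⟨⟨b', h1, h2⟩, le_rfl⟩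
      · rw [h]
        exact Set.mem_biUnion (show prIdl b' ∈ ({prIdl b, prIdl b'} : Set (Idl L)) by simp)
          ⟨⟨b, by rwa [inf_comm], by rwa [sup_comm]⟩, le_rfl⟩
    · have : ({b, b'} : Finset L).sup id = b ⊔ b' := by
        simp [Finset.sup_insert, Finset.sup_singleton]
      rw [this, h2]
      exact le_top

theorem stone_Idl : IsStoneFrame (Idl L) := by
  classical
  constructor
  · -- top is compact
    rw [CompleteLattice.isCompactElement_iff_exists_le_sSup_of_le_sSup]
    intro S hS
    have htop : (⊤ : L) ∈ (sSup S).carrier := by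
      have h1 : (⊤ : L) ∈ (⊤ : Idl L).carrier := by rw [top_carrier]; exact top_mem_cpl
      exact le_def.mp (hS : (⊤ : Idl L) ≤ sSup S) h1
    obtain ⟨-, t, ht, hle⟩ := mem_sSup.mp htop
    have hex : ∀ x ∈ t, ∃ I, I ∈ S ∧ x ∈ I.carrier := by
      intro x hx
      obtain ⟨I, hI, hxI⟩ := Set.mem_iUnion₂.mp (ht hx)
      exact ⟨I, hI, hxI⟩
    choose g hg1 hg2 using hex
    refine ⟨t.attach.image fun x => g x.1 x.2, ?_, ?_⟩
    · intro I hI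
      rw [Finset.coe_image] at hI
      obtain ⟨x, -, rfl⟩ := hI
      exact hg1 x.1 x.2
    · set K : Idl L := (t.attach.image fun x => g x.1 x.2).sup id with hK
      rw [le_def]
      intro y hy
      rw [top_carrier] at hy
      have hsub : ∀ x ∈ t, x ∈ K.carrier := by
        intro x hx
        have : g x hx ≤ K := Finset.le_sup (f := id)
          (Finset.mem_image_of_mem _ (Finset.mem_attach t ⟨x, hx⟩))
        exact le_def.mp this (hg2 x hx)
      have : t.sup id ∈ K.carrier := K.finset_sup_mem hsub
      exact K.lower' this hy (le_top.trans hle)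
  · -- every ideal is the join of the complemented ideals below it
    intro I
    apply le_antisymm
    · rw [le_def]
      intro y hy
      have hyc : y ∈ cpl L := I.subset' hy
      have hpr : prIdl y ∈ {J : Idl L | J ≤ I ∧ ∃ J', J ⊓ J' = ⊥ ∧ J ⊔ J' = ⊤} :=
        ⟨le_def.mpr fun z hz => I.lower' hy hz.1 hz.2, prIdl_cpl hyc⟩
      exact le_def.mp (le_sSup hpr) ⟨hyc, le_rfl⟩
    · exact sSup_le fun J hJ => hJ.1

end Idl

open Idl

/-- The "sup" frame homomorphism from ideals of complemented elements back to the frame. -/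
def phi : FrameHom (Idl L) L where
  toFun I := sSup I.carrier
  map_inf' I J := by
    show sSup (I ⊓ J).carrier = sSup I.carrier ⊓ sSup J.carrier
    rw [inf_carrier]
    apply le_antisymm
    · exact sSup_le fun x hx => le_inf (le_sSup hx.1) (le_sSup hx.2)
    · rw [sSup_inf_sSup]
      refine iSup₂_le fun p hp => le_sSup ?_
      have hc : p.1 ⊓ p.2 ∈ cpl L := inf_mem_cpl (I.subset' hp.1) (J.subset' hp.2)
      exact ⟨I.lower' hp.1 hc inf_le_left, J.lower' hp.2 hc inf_le_right⟩
  map_top' := by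
    show sSup (⊤ : Idl L).carrier = ⊤
    rw [top_carrier]
    exact le_antisymm le_top (le_sSup top_mem_cpl)
  map_sSup' S := by
    show sSup (sSup S).carrier = sSup ((fun I : Idl L => sSup I.carrier) '' S)
    apply le_antisymm
    · refine sSup_le fun y hy => ?_
      obtain ⟨-, t, ht, hle⟩ := mem_sSup.mp hy
      refine hle.trans (Finset.sup_le fun x hx => ?_)
      obtain ⟨I, hI, hxI⟩ := Set.mem_iUnion₂.mp (ht hx)
      exact (le_sSup hxI).trans (le_sSup (Set.mem_image_of_mem _ hI))
    · refine sSup_le ?_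
      rintro b ⟨I, hI, rfl⟩
      exact sSup_le fun x hx => le_sSup (le_def.mp (le_sSup hI : I ≤ sSup S) hx)

variable {K : Type*} [Order.Frame K]

lemma cpl_compact (hK : IsStoneFrame K) {b : K} (hb : b ∈ cpl K) :
    IsCompactElement b := by
  classical
  rw [CompleteLattice.isCompactElement_iff_exists_le_sSup_of_le_sSup]
  intro s hle
  obtain ⟨b', h1, h2⟩ := hb
  have htop : (⊤ : K) ≤ sSup (insert b' s) := by
    rw [← h2]
    exact sup_le (hle.trans (sSup_le_sSup (Set.subset_insert _ _)))
      (le_sSup (Set.mem_insert _ _))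
  obtain ⟨t₀, ht₀, hle₀⟩ := (CompleteLattice.isCompactElement_iff_exists_le_sSup_of_le_sSup _ _).mp hK.1 _ htop
  refine ⟨t₀.erase b', ?_, ?_⟩
  · intro x hx
    rcases ht₀ (Finset.mem_coe.mpr (Finset.mem_of_mem_erase (Finset.mem_coe.mp hx))) with h | h
    · exact absurd h (Finset.ne_of_mem_erase (Finset.mem_coe.mp hx))
    · exact h
  · have : b = b ⊓ t₀.sup id := (inf_eq_left.mpr (le_top.trans hle₀)).symm
    rw [this, Finset.sup_inf_distrib_left]
    refine Finset.sup_le fun x hx => ?_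
    by_cases hxb : x = b'
    · subst hxb
      rw [id, h1]
      exact bot_le
    · exact le_trans inf_le_right (Finset.le_sup (f := id) (Finset.mem_erase.mpr ⟨hxb, hx⟩))

lemma stone_le_sup (hK : IsStoneFrame K) {b : K} (hb : b ∈ cpl K) {s : Set K}
    (hle : b ≤ sSup s) :
    ∃ t : Finset K, (∀ x ∈ t, x ∈ cpl K ∧ ∃ a ∈ s, x ≤ a) ∧ b ≤ t.sup id := by
  classical
  set U : Set K := ⋃ a ∈ s, {d | d ≤ a ∧ ∃ d', d ⊓ d' = ⊥ ∧ d ⊔ d' = ⊤} with hU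
  have hsU : sSup s ≤ sSup U := by
    refine sSup_le fun a ha => ?_
    calc a = sSup {d | d ≤ a ∧ ∃ d', d ⊓ d' = ⊥ ∧ d ⊔ d' = ⊤} := hK.2 a
      _ ≤ sSup U := sSup_le_sSup (Set.subset_biUnion_of_mem (u := fun a =>
            {d | d ≤ a ∧ ∃ d', d ⊓ d' = ⊥ ∧ d ⊔ d' = ⊤}) ha)
  obtain ⟨t, ht, hle'⟩ := (CompleteLattice.isCompactElement_iff_exists_le_sSup_of_le_sSup _ _).mp (cpl_compact hK hb) U (hle.trans hsU)
  refine ⟨t, fun x hx => ?_, hle'⟩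
  obtain ⟨a, ha, hxa, hxc⟩ := Set.mem_iUnion₂.mp (ht hx)
  exact ⟨hxc, a, ha, hxa⟩

set_option maxHeartbeats 1000000 in
/-- The comparison frame homomorphism from a Stone frame to the ideal frame. -/
def psi (f : FrameHom K L) (hK : IsStoneFrame K) : FrameHom K (Idl L) where
  toFun a :=
    { carrier := {c | c ∈ cpl L ∧ ∃ b, b ∈ cpl K ∧ b ≤ a ∧ c ≤ f b}
      subset' := fun _ h => h.1
      bot_mem' := ⟨bot_mem_cpl, ⊥, bot_mem_cpl, bot_le, bot_le⟩
      lower' := by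
        rintro x y ⟨hx, b, hb, hba, hxb⟩ hy hyx
        exact ⟨hy, b, hb, hba, hyx.trans hxb⟩
      sup_mem' := by
        rintro x y ⟨hx, b1, hb1, hba1, hxb1⟩ ⟨hy, b2, hb2, hba2, hxb2⟩
        refine ⟨sup_mem_cpl hx hy, b1 ⊔ b2, sup_mem_cpl hb1 hb2, sup_le hba1 hba2, ?_⟩
        rw [map_sup]
        exact sup_le_sup hxb1 hxb2 }
  map_inf' a₁ a₂ := by
    apply le_antisymm
    · rw [le_def]
      rintro c ⟨hc, b, hb, hba, hcb⟩
      rw [inf_carrier]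
      exact ⟨⟨hc, b, hb, hba.trans inf_le_left, hcb⟩, ⟨hc, b, hb, hba.trans inf_le_right, hcb⟩⟩
    · rw [le_def]
      intro c hc
      rw [inf_carrier] at hc
      obtain ⟨⟨hc1, b1, hb1, hba1, hcb1⟩, ⟨-, b2, hb2, hba2, hcb2⟩⟩ := hc
      refine ⟨hc1, b1 ⊓ b2, inf_mem_cpl hb1 hb2, inf_le_inf hba1 hba2, ?_⟩
      rw [map_inf]
      exact le_inf hcb1 hcb2
  map_top' := by
    apply le_antisymm le_top
    rw [le_def]
    intro c hc
    rw [top_carrier] at hc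
    exact ⟨hc, ⊤, top_mem_cpl, le_rfl, by rw [map_top]; exact le_top⟩
  map_sSup' s := by
    classical
    apply le_antisymm
    · rw [le_def]
      rintro c ⟨hc, b, hb, hbs, hcb⟩
      obtain ⟨t, ht, hle⟩ := stone_le_sup hK hb hbs
      rw [mem_sSup]
      refine ⟨hc, t.image fun d => c ⊓ f d, ?_, ?_⟩
      · intro z hz
        simp only [Finset.coe_image, Set.mem_image, Finset.mem_coe] at hz
        obtain ⟨d, hd, rfl⟩ := hz
        obtain ⟨hdc, a, ha, hda⟩ := ht d hd
        refine Set.mem_biUnion (Set.mem_image_of_mem _ ha)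
          ⟨inf_mem_cpl hc (cpl_map f hdc), d, hdc, hda, inf_le_right⟩
      · rw [Finset.sup_image]
        calc c = c ⊓ c := (inf_idem c).symm
          _ ≤ c ⊓ f b := inf_le_inf_left c hcb
          _ ≤ c ⊓ f (t.sup id) := inf_le_inf_left c (OrderHomClass.mono f hle)
          _ = c ⊓ t.sup (f ∘ id) := by rw [map_finset_sup]
          _ = t.sup fun d => c ⊓ f d := Finset.sup_inf_distrib_left _ _ _
          _ = t.sup (id ∘ fun d => c ⊓ f d) := rfl
    · refine sSup_le ?_
      rintro J ⟨a, ha, rfl⟩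
      rw [le_def]
      rintro c ⟨hc, b, hb, hba, hcb⟩
      exact ⟨hc, b, hb, hba.trans (le_sSup ha), hcb⟩

lemma psi_apply_carrier (f : FrameHom K L) (hK : IsStoneFrame K) (a : K) :
    (psi f hK a).carrier = {c | c ∈ cpl L ∧ ∃ b, b ∈ cpl K ∧ b ≤ a ∧ c ≤ f b} := rfl

lemma phi_psi (f : FrameHom K L) (hK : IsStoneFrame K) (a : K) :
    phi (psi f hK a) = f a := by
  apply le_antisymm
  · refine sSup_le ?_
    rintro c ⟨-, b, -, hba, hcb⟩
    exact hcb.trans (OrderHomClass.mono f hba)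
  · have h1 : f a = sSup (f '' {d | d ≤ a ∧ ∃ d', d ⊓ d' = ⊥ ∧ d ⊔ d' = ⊤}) := by
      rw [← map_sSup, ← hK.2 a]
    rw [h1]
    refine sSup_le ?_
    rintro x ⟨d, ⟨hda, hdc⟩, rfl⟩
    exact le_sSup ⟨cpl_map f hdc, d, hdc, hda, le_rfl⟩

lemma psi_nat {K' : Type*} [Order.Frame K'] (hK : IsStoneFrame K) (hK' : IsStoneFrame K')
    (g : FrameHom K' K) (f : FrameHom K L) (f' : FrameHom K' L)
    (hfg : ∀ x, f' x = f (g x)) (a : K') :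
    psi f' hK' a = psi f hK (g a) := by
  classical
  apply le_antisymm
  · rw [le_def]
    rintro c ⟨hc, b, hb, hba, hcb⟩
    exact ⟨hc, g b, cpl_map g hb, OrderHomClass.mono g hba, by rw [hfg] at hcb; exact hcb⟩
  · rw [le_def]
    rintro c ⟨hc, b, hb, hba, hcb⟩
    have h1 : g a = sSup (g '' {d | d ≤ a ∧ ∃ d', d ⊓ d' = ⊥ ∧ d ⊔ d' = ⊤}) := by
      rw [← map_sSup, ← hK'.2 a]
    obtain ⟨t, ht, hle⟩ := (CompleteLattice.isCompactElement_iff_exists_le_sSup_of_le_sSup _ _).mp (cpl_compact hK hb) _ (hba.trans h1.le)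
    obtain ⟨T, hT, rfl⟩ := Finset.subset_set_image_iff.mp ht
    have hb'' : T.sup id ∈ cpl K' := finset_sup_mem_cpl fun x hx => (hT hx).2
    have hb''a : T.sup id ≤ a := Finset.sup_le fun x hx => (hT hx).1
    refine ⟨hc, T.sup id, hb'', hb''a, ?_⟩
    have : b ≤ g (T.sup id) := by
      rw [map_finset_sup]
      exact hle.trans (le_of_eq (by rw [Finset.sup_image]; rfl))
    rw [hfg]
    exact hcb.trans (OrderHomClass.mono f this)

/-- View a morphism of `Frm` as a `FrameHom`. -/
def toFrame {X Y : Frm} (f : X ⟶ Y) : FrameHom ↥X ↥Y := f.hom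

/-- View a `FrameHom` as a morphism of `Frm`. -/
def ofFrame {X Y : Frm} (f : FrameHom ↥X ↥Y) : X ⟶ Y := Frm.ofHom f

end StoneLimitsAux

open StoneLimitsAux StoneLimitsAux.Idl

set_option maxHeartbeats 1000000 in
/-- Stone locales are closed under limits in the category of locales: the apex of any limit
cone over a diagram of Stone locales is again a Stone locale. -/
theorem stone_closed_under_limits {J : Type*} [SmallCategory J]
    (F : J ⥤ Locale)
    (hstone : ∀ j : J, IsStoneFrame ↥(F.obj j).unop)
    (c : Cone F) (hc : IsLimit c) :
    IsStoneFrame ↥c.pt.unop := by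
  classical
  let ι : ∀ j : J, FrameHom ↥(F.obj j).unop ↥c.pt.unop := fun j => toFrame (c.π.app j).unop
  let M : Frm := Frm.of (Idl ↥c.pt.unop)
  let ψ : ∀ j : J, FrameHom ↥(F.obj j).unop (Idl ↥c.pt.unop) :=
    fun j => psi (ι j) (hstone j)
  have hw : ∀ {j j' : J} (f : j ⟶ j') (b : ↥(F.obj j').unop),
      ι j' b = ι j (toFrame (F.map f).unop b) := by
    intro j j' f b
    have h2 : (F.map f).unop ≫ (c.π.app j).unop = (c.π.app j').unop := by
      exact congrArg Quiver.Hom.unop (c.w f)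
    have h3 : toFrame ((F.map f).unop ≫ (c.π.app j).unop) b
        = toFrame (c.π.app j').unop b := by rw [h2]
    exact h3.symm
  let d : Cone F :=
    { pt := Opposite.op M
      π :=
        { app := fun j => (ofFrame (X := (F.obj j).unop) (Y := M) (ψ j)).op
          naturality := by
            intro j j' f
            refine (Category.id_comp _).trans ?_
            apply Quiver.Hom.unop_inj
            show ofFrame (X := (F.obj j').unop) (Y := M) (ψ j') =
              (F.map f).unop ≫ ofFrame (X := (F.obj j).unop) (Y := M) (ψ j)
            have hfr : ψ j' = toFrame ((F.map f).unop ≫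
                ofFrame (X := (F.obj j).unop) (Y := M) (ψ j)) := by
              apply FrameHom.ext
              intro a
              show ψ j' a = ψ j (toFrame (F.map f).unop a)
              exact psi_nat (hstone j) (hstone j') (toFrame (F.map f).unop) (ι j) (ι j')
                (fun x => hw f x) a
            exact Frm.hom_ext hfr } }
  have hfac : ∀ (j : J) (a : ↥(F.obj j).unop),
      toFrame (hc.lift d).unop (ι j a) = ψ j a := by
    intro j a
    have h2 : (c.π.app j).unop ≫ (hc.lift d).unop = (d.π.app j).unop := by
      exact congrArg Quiver.Hom.unop (hc.fac d j)
    have h3 : toFrame ((c.π.app j).unop ≫ (hc.lift d).unop) a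
        = toFrame ((d.π.app j).unop) a := by rw [h2]
    exact h3
  have hretr : ∀ a : ↥c.pt.unop, phi (toFrame (hc.lift d).unop a) = a := by
    let pA : (c.pt.unop : Frm) ⟶ c.pt.unop :=
      (hc.lift d).unop ≫ ofFrame (X := M) (Y := c.pt.unop) phi
    have hm : pA.op = 𝟙 c.pt := by
      apply hc.hom_ext
      intro j
      show pA.op ≫ c.π.app j = c.π.app j
      apply Quiver.Hom.unop_inj
      show (c.π.app j).unop ≫ pA = (c.π.app j).unop
      have h4 : toFrame ((c.π.app j).unop ≫ pA) = toFrame ((c.π.app j).unop) := by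
        apply FrameHom.ext
        intro a
        show phi (toFrame (hc.lift d).unop (ι j a)) = ι j a
        rw [hfac j a]
        exact phi_psi (ι j) (hstone j) a
      exact Frm.hom_ext h4
    have h5 : toFrame pA = toFrame (𝟙 (c.pt.unop : Frm)) := congrArg (fun g => toFrame (Quiver.Hom.unop g)) hm
    intro a
    exact DFunLike.congr_fun h5 a
  let h : FrameHom ↥c.pt.unop (Idl ↥c.pt.unop) := toFrame (hc.lift d).unop
  constructor
  · -- top is compact
    rw [CompleteLattice.isCompactElement_iff_exists_le_sSup_of_le_sSup]
    intro s hs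
    have h1 : (⊤ : Idl ↥c.pt.unop) ≤ sSup ((fun x => h x) '' s) := by
      calc (⊤ : Idl ↥c.pt.unop) = h ⊤ := (map_top h).symm
        _ ≤ h (sSup s) := OrderHomClass.mono h hs
        _ = sSup ((fun x => h x) '' s) := map_sSup h s
    obtain ⟨t, hts, hle⟩ := (CompleteLattice.isCompactElement_iff_exists_le_sSup_of_le_sSup _ _).mp stone_Idl.1 _ h1
    obtain ⟨t', ht's, himg⟩ := Finset.subset_set_image_iff.mp hts
    refine ⟨t', ht's, ?_⟩
    have h2 : (⊤ : Idl ↥c.pt.unop) ≤ t'.sup fun x => h x := by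
      refine hle.trans (le_of_eq ?_)
      rw [← himg, Finset.sup_image]
      rfl
    calc (⊤ : ↥c.pt.unop) = phi (⊤ : Idl ↥c.pt.unop) :=
          (map_top (phi (L := ↥c.pt.unop))).symm
      _ ≤ phi (t'.sup fun x => h x) := OrderHomClass.mono phi h2
      _ = t'.sup fun x => phi (h x) := map_finset_sup phi t' _
      _ = t'.sup id := Finset.sup_congr rfl fun x _ => hretr x
  · -- every element is the join of complemented elements below it
    intro a
    apply le_antisymm
    · have h2 := stone_Idl.2 (h a)
      calc a = phi (h a) := (hretr a).symm
        _ = phi (sSup {I : Idl ↥c.pt.unop | I ≤ h a ∧ ∃ I', I ⊓ I' = ⊥ ∧ I ⊔ I' = ⊤}) := by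
            rw [← h2]
        _ = sSup ((fun I : Idl ↥c.pt.unop => phi I) ''
              {I : Idl ↥c.pt.unop | I ≤ h a ∧ ∃ I', I ⊓ I' = ⊥ ∧ I ⊔ I' = ⊤}) :=
            map_sSup phi _
        _ ≤ sSup {b | b ≤ a ∧ ∃ b', b ⊓ b' = ⊥ ∧ b ⊔ b' = ⊤} := by
            refine sSup_le ?_
            rintro x ⟨I, ⟨hIa, I', hI1, hI2⟩, rfl⟩
            refine le_sSup ⟨?_, phi I', ?_, ?_⟩
            · calc phi I ≤ phi (h a) := OrderHomClass.mono phi hIa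
                _ = a := hretr a
            · rw [← map_inf, hI1, map_bot]
            · rw [← map_sup, hI2, map_top]
    · exact sSup_le fun b hb => hb.1
end
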